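/- arXiv:1010.3673 — 2 statements merged into one kernel-verified Lean document; each statement's English description precedes it below -/
import Mathlib

section
/- Let F' be a Q-subtree of a tree-graded space F (i.e., F' is path-connected and contains every piece of F that meets F' in at least two points). Then F' is totally geodesic in F: for any two points x, y ∈ F', every geodesic in F connecting x and y is contained in F'. Consequently, for any x ∈ F and y ∈ F', the intersection of any geodesic [y,x] with F' is either a closed subsegment [y,z] or a half-open subinterval [y,z[ of [y,x]. -/
/-- A map `γ` is a geodesic (unit-speed) on the interval `[a,b]`. -/
def IsGeodesicOn {F : Type*} [MetricSpace F] (γ : ℝ → F) (a b : ℝ) : Prop :=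
  ∀ s ∈ Set.Icc a b, ∀ t ∈ Set.Icc a b, dist (γ s) (γ t) = |s - t|

/-- A metric space is geodesic if every two points are joined by a geodesic. -/
def GeodesicSpace (F : Type*) [MetricSpace F] : Prop :=
  ∀ x y : F, ∃ γ : ℝ → F, γ 0 = x ∧ γ (dist x y) = y ∧ IsGeodesicOn γ 0 (dist x y)

/-- A subset is geodesic: any two of its points are joined by a geodesic inside it. -/
def GeodesicSubset {F : Type*} [MetricSpace F] (p : Set F) : Prop :=
  ∀ x ∈ p, ∀ y ∈ p, ∃ γ : ℝ → F, γ 0 = x ∧ γ (dist x y) = y ∧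
    IsGeodesicOn γ 0 (dist x y) ∧ γ '' Set.Icc 0 (dist x y) ⊆ p

/-- A nontrivial simple geodesic triangle: a simple loop `γ` on `[0,L]` composed of three
geodesics `[0,a]`, `[a,b]`, `[b,L]`. -/
structure SimpleGeodesicTriangle {F : Type*} [MetricSpace F]
    (γ : ℝ → F) (a b L : ℝ) : Prop where
  L_pos : 0 < L
  ha : 0 ≤ a
  hab : a ≤ b
  hbL : b ≤ L
  side1 : IsGeodesicOn γ 0 a
  side2 : IsGeodesicOn γ a b
  side3 : IsGeodesicOn γ b L
  closed : γ 0 = γ L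
  simple : Set.InjOn γ (Set.Ico 0 L)

/-- `F` is tree-graded with respect to the collection `P` of pieces. -/
structure IsTreeGraded {F : Type*} [MetricSpace F] (P : Set (Set F)) : Prop where
  pieces_nonempty : ∀ p ∈ P, p.Nonempty
  pieces_closed : ∀ p ∈ P, IsClosed p
  pieces_geodesic : ∀ p ∈ P, GeodesicSubset p
  T1 : ∀ p ∈ P, ∀ q ∈ P, p ≠ q → (p ∩ q).Subsingleton
  T2 : ∀ (γ : ℝ → F) (a b L : ℝ), SimpleGeodesicTriangle γ a b L →
    ∃ p ∈ P, γ '' Set.Icc 0 L ⊆ p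

/-- `F'` is a `Q`-subtree of the tree-graded space `(F, P)`: it is path-connected and
contains every piece meeting it in at least two points. -/
def IsQSubtree {F : Type*} [MetricSpace F] (P : Set (Set F)) (F' : Set F) : Prop :=
  IsPathConnected F' ∧ ∀ p ∈ P, (∃ a ∈ p ∩ F', ∃ b ∈ p ∩ F', a ≠ b) → p ⊆ F'


open Set

section AuxLemmas
variable {F : Type*} [MetricSpace F]

lemma IsGeodesicOn.mono {γ : ℝ → F} {a b a' b' : ℝ} (h : IsGeodesicOn γ a b)
    (hsub : Icc a' b' ⊆ Icc a b) : IsGeodesicOn γ a' b' :=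
  fun s hs t ht => h s (hsub hs) t (hsub ht)

lemma IsGeodesicOn.injOn {γ : ℝ → F} {a b : ℝ} (h : IsGeodesicOn γ a b) :
    InjOn γ (Icc a b) := by
  intro s hs t ht he
  have := h s hs t ht
  rw [he, dist_self] at this
  have := abs_eq_zero.mp this.symm
  linarith

lemma IsGeodesicOn.continuousOn {γ : ℝ → F} {a b : ℝ} (h : IsGeodesicOn γ a b) :
    ContinuousOn γ (Icc a b) := by
  have : LipschitzOnWith 1 γ (Icc a b) := by
    apply LipschitzOnWith.of_dist_le_mul
    intro s hs t ht
    rw [h s hs t ht, Real.dist_eq]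
    simp
  exact this.continuousOn

lemma IsGeodesicOn.isCompact_image {γ : ℝ → F} {a b : ℝ} (h : IsGeodesicOn γ a b) :
    IsCompact (γ '' Icc a b) :=
  isCompact_Icc.image_of_continuousOn h.continuousOn

lemma IsGeodesicOn.isClosed_image {γ : ℝ → F} {a b : ℝ} (h : IsGeodesicOn γ a b) :
    IsClosed (γ '' Icc a b) :=
  h.isCompact_image.isClosed

/-- shift: `τ ↦ γ (c + τ)` is geodesic on `[a-c, b-c]`. -/
lemma IsGeodesicOn.shift {γ : ℝ → F} {a b : ℝ} (h : IsGeodesicOn γ a b) (c : ℝ) :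
    IsGeodesicOn (fun τ => γ (c + τ)) (a - c) (b - c) := by
  intro s hs t ht
  have hs' : c + s ∈ Icc a b := ⟨by linarith [hs.1], by linarith [hs.2]⟩
  have ht' : c + t ∈ Icc a b := ⟨by linarith [ht.1], by linarith [ht.2]⟩
  have := h _ hs' _ ht'
  simpa [add_sub_add_left_eq_sub] using this

/-- reflection: `τ ↦ γ (c - τ)` is geodesic on `[c-b, c-a]`. -/
lemma IsGeodesicOn.reflect {γ : ℝ → F} {a b : ℝ} (h : IsGeodesicOn γ a b) (c : ℝ) :
    IsGeodesicOn (fun τ => γ (c - τ)) (c - b) (c - a) := by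
  intro s hs t ht
  have hs' : c - s ∈ Icc a b := ⟨by linarith [hs.2], by linarith [hs.1]⟩
  have ht' : c - t ∈ Icc a b := ⟨by linarith [ht.2], by linarith [ht.1]⟩
  have := h _ hs' _ ht'
  rw [this]
  rw [abs_sub_comm]
  congr 1
  ring

/-- concatenation of two geodesics, when distances add up. -/
lemma IsGeodesicOn.concat {γ₁ γ₂ : ℝ → F} {l₁ l₂ : ℝ}
    (h₁ : IsGeodesicOn γ₁ 0 l₁) (h₂ : IsGeodesicOn γ₂ 0 l₂)
    (hl₁ : 0 ≤ l₁) (hl₂ : 0 ≤ l₂)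
    (hmid : γ₁ l₁ = γ₂ 0)
    (hadd : dist (γ₁ 0) (γ₂ l₂) = l₁ + l₂) :
    IsGeodesicOn (fun τ => if τ ≤ l₁ then γ₁ τ else γ₂ (τ - l₁)) 0 (l₁ + l₂) := by
  set γ := fun τ => if τ ≤ l₁ then γ₁ τ else γ₂ (τ - l₁) with hγ
  have hval₂ : ∀ τ ∈ Icc l₁ (l₁ + l₂), γ τ = γ₂ (τ - l₁) := by
    intro τ hτ
    by_cases hc : τ ≤ l₁
    · have : τ = l₁ := le_antisymm hc hτ.1
      simp [hγ, this, hmid]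
    · simp [hγ, hc]
  have key : ∀ s ∈ Icc 0 l₁, ∀ t ∈ Icc l₁ (l₁ + l₂), dist (γ s) (γ t) = t - s := by
    intro s hs t ht
    have hγs : γ s = γ₁ s := by simp [hγ, hs.2]
    have hγt := hval₂ t ht
    have htm : t - l₁ ∈ Icc 0 l₂ := ⟨by linarith [ht.1], by linarith [ht.2]⟩
    have h1 : dist (γ₁ s) (γ₂ (t - l₁)) ≤ (l₁ - s) + (t - l₁) := by
      calc dist (γ₁ s) (γ₂ (t - l₁)) ≤ dist (γ₁ s) (γ₁ l₁) + dist (γ₁ l₁) (γ₂ (t - l₁)) :=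
            dist_triangle _ _ _
        _ = (l₁ - s) + (t - l₁) := by
            rw [h₁ s hs l₁ ⟨hl₁, le_refl _⟩, hmid, h₂ 0 ⟨le_refl _, hl₂⟩ (t - l₁) htm]
            rw [abs_of_nonpos (show s - l₁ ≤ 0 by linarith [hs.2]),
              abs_of_nonpos (show (0:ℝ) - (t - l₁) ≤ 0 by linarith [htm.1])]
            ring
    have h2 : t - s ≤ dist (γ₁ s) (γ₂ (t - l₁)) := by
      have t1 : dist (γ₁ 0) (γ₂ l₂) ≤ dist (γ₁ 0) (γ₁ s) + dist (γ₁ s) (γ₂ (t-l₁)) +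
          dist (γ₂ (t-l₁)) (γ₂ l₂) := dist_triangle4 _ _ _ _
      rw [hadd, h₁ 0 ⟨le_refl _, hl₁⟩ s hs, h₂ (t-l₁) htm l₂ ⟨hl₂, le_refl _⟩] at t1
      rw [abs_of_nonpos (by linarith [hs.1]), abs_of_nonpos (by linarith [htm.2])] at t1
      linarith
    rw [hγs, hγt]
    linarith [h1, h2]
  intro s hs t t_mem
  rcases le_total s t with hst | hst
  · rcases le_or_gt s l₁ with hsl | hsl
    · rcases le_or_gt t l₁ with htl | htl
      · have hγs : γ s = γ₁ s := by simp [hγ, hsl]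
        have hγt : γ t = γ₁ t := by simp [hγ, htl]
        rw [hγs, hγt]
        exact h₁ s ⟨hs.1, hsl⟩ t ⟨t_mem.1, htl⟩
      · have := key s ⟨hs.1, hsl⟩ t ⟨le_of_lt htl, t_mem.2⟩
        rw [this, abs_of_nonpos (by linarith)]
        ring
    · have hγs := hval₂ s ⟨le_of_lt hsl, hs.2⟩
      have hγt := hval₂ t ⟨by linarith, t_mem.2⟩
      rw [hγs, hγt]
      have := h₂ (s - l₁) ⟨by linarith, by linarith [hs.2]⟩ (t - l₁)
        ⟨by linarith, by linarith [t_mem.2]⟩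
      simpa using this
  · rcases le_or_gt t l₁ with htl | htl
    · rcases le_or_gt s l₁ with hsl | hsl
      · have hγs : γ s = γ₁ s := by simp [hγ, hsl]
        have hγt : γ t = γ₁ t := by simp [hγ, htl]
        rw [hγs, hγt]
        exact h₁ s ⟨hs.1, hsl⟩ t ⟨t_mem.1, htl⟩
      · have := key t ⟨t_mem.1, htl⟩ s ⟨le_of_lt hsl, hs.2⟩
        rw [dist_comm] at this
        rw [this, abs_of_nonneg (show (0:ℝ) ≤ s - t by linarith)]
    · have hγs := hval₂ s ⟨by linarith, hs.2⟩
      have hγt := hval₂ t ⟨le_of_lt htl, t_mem.2⟩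
      rw [hγs, hγt]
      have := h₂ (s - l₁) ⟨by linarith, by linarith [hs.2]⟩ (t - l₁)
        ⟨by linarith, by linarith [t_mem.2]⟩
      simpa using this

/-- two-point sets with distinct points are not preconnected. -/
lemma not_preconnected_pair {a b : F} (hab : a ≠ b) {C : Set F}
    (hC : IsPreconnected C) (hCsub : C ⊆ {a, b}) (haC : a ∈ C) (hbC : b ∈ C) : False := by
  have hU : IsOpen {w : F | dist w a < dist w b} :=
    isOpen_lt (continuous_id.dist continuous_const) (continuous_id.dist continuous_const)
  have hV : IsOpen {w : F | dist w b < dist w a} :=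
    isOpen_lt (continuous_id.dist continuous_const) (continuous_id.dist continuous_const)
  have haU : a ∈ {w : F | dist w a < dist w b} := by
    simp only [mem_setOf_eq, dist_self]
    exact dist_pos.mpr hab
  have hbV : b ∈ {w : F | dist w b < dist w a} := by
    simp only [mem_setOf_eq, dist_self]
    exact dist_pos.mpr (Ne.symm hab)
  have hcover : C ⊆ {w : F | dist w a < dist w b} ∪ {w : F | dist w b < dist w a} := by
    intro c hc
    rcases hCsub hc with rfl | rfl
    · exact Or.inl haU
    · exact Or.inr hbV
  obtain ⟨w, _, hwU, hwV⟩ := hC {w : F | dist w a < dist w b} {w : F | dist w b < dist w a}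
    hU hV hcover ⟨a, haC, haU⟩ ⟨b, hbC, hbV⟩
  simp only [mem_setOf_eq] at hwU hwV
  linarith

end AuxLemmas

section Bigon

variable {F : Type*} [MetricSpace F] {P : Set (Set F)}

/-- Gap bigon lemma: two geodesics on `[s,t]` with common endpoints whose interiors
are disjoint span a piece. -/
lemma gap_bigon (hTG : IsTreeGraded P) {g w : ℝ → F} {s t : ℝ} (hst : s < t)
    (hg : IsGeodesicOn g s t) (hw : IsGeodesicOn w s t)
    (h0 : g s = w s) (h1 : g t = w t)
    (hdisj : ∀ τ ∈ Ioo s t, g τ ∉ w '' Icc s t) :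
    ∃ p ∈ P, g '' Icc s t ⊆ p ∧ w '' Icc s t ⊆ p := by
  set γ : ℝ → F := fun τ => if τ ≤ t - s then g (s + τ) else w (2*t - s - τ) with hγ
  have hts : 0 < t - s := by linarith
  have hval1 : ∀ τ ∈ Icc (0:ℝ) (t-s), γ τ = g (s + τ) := by
    intro τ hτ; simp [hγ, hτ.2]
  have hval3 : ∀ τ ∈ Icc (t-s) (2*(t-s)), γ τ = w (2*t - s - τ) := by
    intro τ hτ
    by_cases hc : τ ≤ t - s
    · have hττ : τ = t - s := le_antisymm hc hτ.1
      have : s + τ = t := by rw [hττ]; ring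
      have h2 : 2*t - s - τ = t := by rw [hττ]; ring
      simp only [hγ, if_pos hc, this, h2, h1]
    · simp [hγ, hc]
  have hside1 : IsGeodesicOn γ 0 (t-s) := by
    intro τ1 h1' τ2 h2'
    rw [hval1 τ1 h1', hval1 τ2 h2']
    have := hg (s + τ1) ⟨by linarith [h1'.1], by linarith [h1'.2]⟩
      (s + τ2) ⟨by linarith [h2'.1], by linarith [h2'.2]⟩
    simpa using this
  have hside3 : IsGeodesicOn γ (t-s) (2*(t-s)) := by
    intro τ1 h1' τ2 h2'
    rw [hval3 τ1 h1', hval3 τ2 h2']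
    have := hw (2*t - s - τ1) ⟨by linarith [h1'.2], by linarith [h1'.1]⟩
      (2*t - s - τ2) ⟨by linarith [h2'.2], by linarith [h2'.1]⟩
    rw [this, abs_sub_comm]
    congr 1; ring
  have hclosed : γ 0 = γ (2*(t-s)) := by
    rw [hval1 0 ⟨le_refl _, by linarith⟩, hval3 (2*(t-s)) ⟨by linarith, le_refl _⟩]
    simp only [add_zero]
    have : 2*t - s - 2*(t-s) = s := by ring
    rw [this, h0]
  have hval_mid : ∀ {τ : ℝ}, t - s < τ → τ < 2*(t-s) → (2*t - s - τ) ∈ Ioo s t :=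
    fun {τ} hlo hhi => ⟨by linarith, by linarith⟩
  have hsimple : Set.InjOn γ (Ico 0 (2*(t-s))) := by
    intro τ1 hτ1 τ2 hτ2 heq
    by_cases c1 : τ1 ≤ t - s <;> by_cases c2 : τ2 ≤ t - s
    · rw [hval1 τ1 ⟨hτ1.1, c1⟩, hval1 τ2 ⟨hτ2.1, c2⟩] at heq
      have := hg.injOn ⟨by linarith [hτ1.1], by linarith⟩ ⟨by linarith [hτ2.1], by linarith⟩ heq
      linarith
    · exfalso
      push_neg at c2
      rw [hval1 τ1 ⟨hτ1.1, c1⟩, hval3 τ2 ⟨le_of_lt c2, le_of_lt hτ2.2⟩] at heq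
      have hσ2 : (2*t - s - τ2) ∈ Ioo s t := hval_mid c2 hτ2.2
      rcases eq_or_lt_of_le hτ1.1 with h0' | h0'
      · rw [← h0', add_zero, h0] at heq
        have := hw.injOn ⟨le_refl _, le_of_lt hst⟩ ⟨le_of_lt hσ2.1, le_of_lt hσ2.2⟩ heq
        linarith [hσ2.1]
      · rcases eq_or_lt_of_le c1 with h1' | h1'
        · rw [h1'] at heq
          have : s + (t - s) = t := by ring
          rw [this, h1] at heq
          have := hw.injOn ⟨le_of_lt hst, le_refl _⟩ ⟨le_of_lt hσ2.1, le_of_lt hσ2.2⟩ heq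
          linarith [hσ2.2]
        · exact hdisj (s + τ1) ⟨by linarith, by linarith⟩ ⟨2*t - s - τ2, Ioo_subset_Icc_self hσ2, heq.symm⟩
    · exfalso
      push_neg at c1
      rw [hval1 τ2 ⟨hτ2.1, c2⟩, hval3 τ1 ⟨le_of_lt c1, le_of_lt hτ1.2⟩] at heq
      have hσ1 : (2*t - s - τ1) ∈ Ioo s t := hval_mid c1 hτ1.2
      rcases eq_or_lt_of_le hτ2.1 with h0' | h0'
      · rw [← h0', add_zero, h0] at heq
        have := hw.injOn ⟨le_of_lt hσ1.1, le_of_lt hσ1.2⟩ ⟨le_refl _, le_of_lt hst⟩ heq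
        linarith [hσ1.1]
      · rcases eq_or_lt_of_le c2 with h1' | h1'
        · rw [h1'] at heq
          have : s + (t - s) = t := by ring
          rw [this, h1] at heq
          have := hw.injOn ⟨le_of_lt hσ1.1, le_of_lt hσ1.2⟩ ⟨le_of_lt hst, le_refl _⟩ heq
          linarith [hσ1.2]
        · exact hdisj (s + τ2) ⟨by linarith, by linarith⟩ ⟨2*t - s - τ1, Ioo_subset_Icc_self hσ1, heq⟩
    · push_neg at c1 c2
      rw [hval3 τ1 ⟨le_of_lt c1, le_of_lt hτ1.2⟩, hval3 τ2 ⟨le_of_lt c2, le_of_lt hτ2.2⟩] at heq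
      have hσ1 : (2*t - s - τ1) ∈ Ioo s t := hval_mid c1 hτ1.2
      have hσ2 : (2*t - s - τ2) ∈ Ioo s t := hval_mid c2 hτ2.2
      have := hw.injOn (Ioo_subset_Icc_self hσ1) (Ioo_subset_Icc_self hσ2) heq
      linarith
  have htri : SimpleGeodesicTriangle γ (t-s) (t-s) (2*(t-s)) :=
    { L_pos := by linarith
      ha := by linarith
      hab := le_refl _
      hbL := by linarith
      side1 := hside1
      side2 := by
        intro τ1 h1' τ2 h2'
        have e1 : τ1 = t - s := le_antisymm h1'.2 h1'.1
        have e2 : τ2 = t - s := le_antisymm h2'.2 h2'.1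
        rw [e1, e2]; simp
      side3 := hside3
      closed := hclosed
      simple := hsimple }
  obtain ⟨p, hp, hloop⟩ := hTG.T2 γ (t-s) (t-s) (2*(t-s)) htri
  refine ⟨p, hp, ?_, ?_⟩
  · rintro _ ⟨τ, hτ, rfl⟩
    have : g τ = γ (τ - s) := by
      rw [hval1 (τ - s) ⟨by linarith [hτ.1], by linarith [hτ.2]⟩]
      congr 1; ring
    rw [this]
    exact hloop ⟨τ - s, ⟨by linarith [hτ.1], by linarith [hτ.2]⟩, rfl⟩
  · rintro _ ⟨σ, hσ, rfl⟩
    have : w σ = γ (2*t - s - σ) := by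
      rw [hval3 (2*t - s - σ) ⟨by linarith [hσ.2], by linarith [hσ.1]⟩]
      congr 1; ring
    rw [this]
    exact hloop ⟨2*t - s - σ, ⟨by linarith [hσ.2], by linarith [hσ.1]⟩, rfl⟩

end Bigon

section Tri

variable {F : Type*} [MetricSpace F] {P : Set (Set F)}

/-- Triangle gap lemma, case where the gap endpoints lie on side2 (at the start)
and side3 (at the end) respectively. -/
lemma tri_case3 (hTG : IsTreeGraded P) {g1 s2 s3 : ℝ → F} {L1 L2 L3 s t : ℝ}
    (h1 : IsGeodesicOn g1 0 L1) (h2 : IsGeodesicOn s2 0 L2) (h3 : IsGeodesicOn s3 0 L3)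
    (he2 : s2 L2 = s3 0)
    (hst : s < t) (hs0 : 0 ≤ s) (htL : t ≤ L1)
    (hsL2 : s ≤ L2) (hσ0 : 0 ≤ L3 - L1 + t)
    (hgs : g1 s = s2 s) (hgt : g1 t = s3 (L3 - L1 + t))
    (hgap : ∀ τ ∈ Ioo s t, g1 τ ∉ s2 '' Icc 0 L2 ∪ s3 '' Icc 0 L3)
    (hns : g1 s ∉ s3 '' Icc 0 L3) (hnt : g1 t ∉ s2 '' Icc 0 L2) :
    ∃ p ∈ P, g1 '' Icc s t ⊆ p ∧ ∃ C : Set F, IsPreconnected C ∧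
      C ⊆ s2 '' Icc 0 L2 ∪ s3 '' Icc 0 L3 ∧ C ⊆ p ∧ g1 s ∈ C ∧ g1 t ∈ C := by
  set σt : ℝ := L3 - L1 + t with hσt_def
  have hσtL3 : σt ≤ L3 := by linarith
  have hL30 : 0 ≤ L3 := le_trans hσ0 hσtL3
  have hL20 : 0 ≤ L2 := le_trans hs0 hsL2
  -- the crossing set
  set A : Set (ℝ × ℝ) := (Icc s L2 ×ˢ Icc 0 σt) ∩
      (fun a : ℝ × ℝ => (s2 a.1, s3 a.2)) ⁻¹' Set.diagonal F with hA_def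
  have hKcomp : IsCompact (Icc s L2 ×ˢ Icc 0 σt) := isCompact_Icc.prod isCompact_Icc
  have hcont : ContinuousOn (fun a : ℝ × ℝ => (s2 a.1, s3 a.2)) (Icc s L2 ×ˢ Icc 0 σt) := by
    apply ContinuousOn.prodMk
    · exact h2.continuousOn.comp continuousOn_fst
        (fun a ha => ⟨le_trans hs0 ha.1.1, ha.1.2⟩)
    · exact h3.continuousOn.comp continuousOn_snd
        (fun a ha => ⟨ha.2.1, le_trans ha.2.2 hσtL3⟩)
  have hAclosed : IsClosed A :=
    hcont.preimage_isClosed_of_isClosed (isClosed_Icc.prod isClosed_Icc) isClosed_diagonal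
  have hAcomp : IsCompact A := hKcomp.of_isClosed_subset hAclosed inter_subset_left
  have hAne : A.Nonempty := ⟨(L2, 0), ⟨⟨hsL2, le_refl _⟩, ⟨le_refl _, hσ0⟩⟩, he2⟩
  have hfst_comp : IsCompact (Prod.fst '' A) := hAcomp.image continuous_fst
  have hfst_ne : (Prod.fst '' A).Nonempty := hAne.image _
  obtain ⟨a0, ha0A, ha0fst⟩ := hfst_comp.sInf_mem hfst_ne
  set αs : ℝ := sInf (Prod.fst '' A) with hαs_def
  set βs : ℝ := a0.2 with hβs_def
  have hVa : s2 αs = s3 βs := by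
    have h' := ha0A.2
    simp only [Set.mem_preimage, Set.mem_diagonal_iff] at h'
    rw [hβs_def, ← ha0fst]
    exact h'
  have hα_mem : αs ∈ Icc s L2 := ha0fst ▸ ha0A.1.1
  have hβ_mem : βs ∈ Icc 0 σt := ha0A.1.2
  have hmin : ∀ b ∈ A, αs ≤ b.1 := fun b hb =>
    csInf_le hfst_comp.bddBelow (mem_image_of_mem _ hb)
  have hαs_gt : s < αs := by
    rcases eq_or_lt_of_le hα_mem.1 with h | h
    · exfalso
      apply hns
      refine ⟨βs, ⟨hβ_mem.1, le_trans hβ_mem.2 hσtL3⟩, ?_⟩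
      rw [← hVa, ← h, ← hgs]
    · exact h
  have hβσ_lt : βs < σt := by
    rcases eq_or_lt_of_le hβ_mem.2 with h | h
    · exfalso
      apply hnt
      refine ⟨αs, ⟨le_trans hs0 hα_mem.1, hα_mem.2⟩, ?_⟩
      rw [hVa, h, ← hgt]
    · exact h
  -- the loop
  set ℓ1 : ℝ := t - s with hℓ1
  set ℓ2 : ℝ := σt - βs with hℓ2
  set ℓ3 : ℝ := αs - s with hℓ3
  set L : ℝ := ℓ1 + ℓ2 + ℓ3 with hL
  have hℓ1pos : 0 < ℓ1 := by linarith
  have hℓ2pos : 0 < ℓ2 := by linarith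
  have hℓ3pos : 0 < ℓ3 := by linarith
  set γ : ℝ → F := fun τ => if τ ≤ ℓ1 then g1 (s + τ)
    else if τ ≤ ℓ1 + ℓ2 then s3 (σt + ℓ1 - τ) else s2 (αs + ℓ1 + ℓ2 - τ) with hγ
  have hvalA : ∀ τ ∈ Icc (0:ℝ) ℓ1, γ τ = g1 (s + τ) := by
    intro τ hτ; simp [hγ, hτ.2]
  have hvalB : ∀ τ ∈ Icc ℓ1 (ℓ1 + ℓ2), γ τ = s3 (σt + ℓ1 - τ) := by
    intro τ hτ
    by_cases hc : τ ≤ ℓ1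
    · have hττ : τ = ℓ1 := le_antisymm hc hτ.1
      have e1 : s + τ = t := by rw [hττ, hℓ1]; ring
      have e2 : σt + ℓ1 - τ = σt := by rw [hττ]; ring
      simp only [hγ, if_pos hc, e1, e2]
      exact hgt
    · simp [hγ, hc, hτ.2]
  have hvalC : ∀ τ ∈ Icc (ℓ1 + ℓ2) L, γ τ = s2 (αs + ℓ1 + ℓ2 - τ) := by
    intro τ hτ
    by_cases hc : τ ≤ ℓ1 + ℓ2
    · have hττ : τ = ℓ1 + ℓ2 := le_antisymm hc hτ.1
      have hc1 : ¬ τ ≤ ℓ1 := by rw [hττ]; intro h; linarith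
      have e1 : σt + ℓ1 - τ = βs := by rw [hττ, hℓ2]; ring
      have e2 : αs + ℓ1 + ℓ2 - τ = αs := by rw [hττ]; ring
      simp only [hγ, if_neg hc1, if_pos hc, e1, e2]
      exact hVa.symm
    · have hc1 : ¬ τ ≤ ℓ1 := fun h => hc (le_trans h (by linarith))
      simp [hγ, hc, hc1]
  have hside1 : IsGeodesicOn γ 0 ℓ1 := by
    intro τ1 hτ1 τ2 hτ2
    rw [hvalA τ1 hτ1, hvalA τ2 hτ2]
    have := h1 (s + τ1) ⟨by linarith [hτ1.1], by linarith [hτ1.2]⟩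
      (s + τ2) ⟨by linarith [hτ2.1], by linarith [hτ2.2]⟩
    simpa using this
  have hside2 : IsGeodesicOn γ ℓ1 (ℓ1 + ℓ2) := by
    intro τ1 hτ1 τ2 hτ2
    rw [hvalB τ1 hτ1, hvalB τ2 hτ2]
    have m1 : σt + ℓ1 - τ1 ∈ Icc (0:ℝ) L3 :=
      ⟨by linarith [hτ1.2, hβ_mem.1], by linarith [hτ1.1]⟩
    have m2 : σt + ℓ1 - τ2 ∈ Icc (0:ℝ) L3 :=
      ⟨by linarith [hτ2.2, hβ_mem.1], by linarith [hτ2.1]⟩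
    rw [h3 _ m1 _ m2, abs_sub_comm]
    congr 1; ring
  have hside3 : IsGeodesicOn γ (ℓ1 + ℓ2) L := by
    intro τ1 hτ1 τ2 hτ2
    rw [hvalC τ1 hτ1, hvalC τ2 hτ2]
    have m1 : αs + ℓ1 + ℓ2 - τ1 ∈ Icc (0:ℝ) L2 :=
      ⟨by linarith [hτ1.2, hs0], by linarith [hτ1.1, hα_mem.2]⟩
    have m2 : αs + ℓ1 + ℓ2 - τ2 ∈ Icc (0:ℝ) L2 :=
      ⟨by linarith [hτ2.2, hs0], by linarith [hτ2.1, hα_mem.2]⟩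
    rw [h2 _ m1 _ m2, abs_sub_comm]
    congr 1; ring
  have hclosed : γ 0 = γ L := by
    rw [hvalA 0 ⟨le_refl _, le_of_lt hℓ1pos⟩,
      hvalC L ⟨by linarith, le_refl _⟩]
    have e : αs + ℓ1 + ℓ2 - L = s := by rw [hL, hℓ3]; ring
    rw [e, add_zero, hgs]
  -- key disjointness facts
  have keyAB : ∀ p ∈ Ico s t, ∀ σ ∈ Icc (0:ℝ) L3, g1 p ≠ s3 σ := by
    intro p hp σ hσ heq
    rcases eq_or_lt_of_le hp.1 with h | h
    · exact hns ⟨σ, hσ, by rw [← heq, h]⟩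
    · exact hgap p ⟨h, hp.2⟩ (Or.inr ⟨σ, hσ, heq.symm⟩)
  have keyAC : ∀ p ∈ Ico s t, ∀ α ∈ Ioc s L2, g1 p ≠ s2 α := by
    intro p hp α hα heq
    rcases eq_or_lt_of_le hp.1 with h | h
    · rw [← h, hgs] at heq
      have := h2.injOn ⟨hs0, hsL2⟩ ⟨le_trans hs0 (le_of_lt hα.1), hα.2⟩ heq
      linarith [hα.1]
    · exact hgap p ⟨h, hp.2⟩ (Or.inl ⟨α, ⟨le_trans hs0 (le_of_lt hα.1), hα.2⟩, heq.symm⟩)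
  have keyBC : ∀ σ ∈ Ioc βs σt, ∀ α ∈ Ioc s αs, s3 σ ≠ s2 α := by
    intro σ hσ α hα heq
    have hmem : (α, σ) ∈ A := by
      refine ⟨⟨⟨le_of_lt hα.1, le_trans hα.2 hα_mem.2⟩,
        ⟨le_trans hβ_mem.1 (le_of_lt hσ.1), hσ.2⟩⟩, heq.symm⟩
    have := hmin (α, σ) hmem
    have hαeq : α = αs := le_antisymm hα.2 this
    rw [hαeq, hVa] at heq
    have := h3.injOn ⟨le_trans hβ_mem.1 (le_of_lt hσ.1), le_trans hσ.2 hσtL3⟩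
      ⟨hβ_mem.1, le_trans hβ_mem.2 hσtL3⟩ heq
    linarith [hσ.1]
  -- classification of loop points
  have hclass : ∀ τ ∈ Ico (0:ℝ) L,
      (∃ p ∈ Ico s t, γ τ = g1 p ∧ τ = p - s) ∨
      (∃ σ ∈ Ioc βs σt, γ τ = s3 σ ∧ τ = σt + ℓ1 - σ) ∨
      (∃ α ∈ Ioc s αs, γ τ = s2 α ∧ τ = αs + ℓ1 + ℓ2 - α) := by
    intro τ hτ
    by_cases hc1 : τ < ℓ1
    · exact Or.inl ⟨s + τ, ⟨by linarith [hτ.1], by linarith⟩,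
        hvalA τ ⟨hτ.1, le_of_lt hc1⟩, by ring⟩
    · push_neg at hc1
      by_cases hc2 : τ < ℓ1 + ℓ2
      · exact Or.inr (Or.inl ⟨σt + ℓ1 - τ, ⟨by linarith, by linarith⟩,
          hvalB τ ⟨hc1, le_of_lt hc2⟩, by ring⟩)
      · push_neg at hc2
        exact Or.inr (Or.inr ⟨αs + ℓ1 + ℓ2 - τ,
          ⟨by linarith [hτ.2], by linarith⟩,
          hvalC τ ⟨hc2, le_of_lt hτ.2⟩, by ring⟩)
  have hsimple : Set.InjOn γ (Ico 0 L) := by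
    intro τ1 hτ1 τ2 hτ2 heq
    rcases hclass τ1 hτ1 with ⟨p1, hp1, hv1, he1⟩ | ⟨σ1, hσ1, hv1, he1⟩ | ⟨α1, hα1, hv1, he1⟩ <;>
      rcases hclass τ2 hτ2 with ⟨p2, hp2, hv2, he2'⟩ | ⟨σ2, hσ2, hv2, he2'⟩ | ⟨α2, hα2, hv2, he2'⟩
    · rw [hv1, hv2] at heq
      have := h1.injOn ⟨le_trans hs0 hp1.1, le_trans (le_of_lt hp1.2) htL⟩
        ⟨le_trans hs0 hp2.1, le_trans (le_of_lt hp2.2) htL⟩ heq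
      rw [he1, he2', this]
    · exact absurd (hv1 ▸ hv2 ▸ heq)
        (keyAB p1 hp1 σ2 ⟨le_trans hβ_mem.1 (le_of_lt hσ2.1), le_trans hσ2.2 hσtL3⟩)
    · exact absurd (hv1 ▸ hv2 ▸ heq) (keyAC p1 hp1 α2 ⟨hα2.1, le_trans hα2.2 hα_mem.2⟩)
    · exact absurd (hv1 ▸ hv2 ▸ heq).symm
        (keyAB p2 hp2 σ1 ⟨le_trans hβ_mem.1 (le_of_lt hσ1.1), le_trans hσ1.2 hσtL3⟩)
    · rw [hv1, hv2] at heq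
      have := h3.injOn ⟨le_trans hβ_mem.1 (le_of_lt hσ1.1), le_trans hσ1.2 hσtL3⟩
        ⟨le_trans hβ_mem.1 (le_of_lt hσ2.1), le_trans hσ2.2 hσtL3⟩ heq
      rw [he1, he2', this]
    · exact absurd (hv1 ▸ hv2 ▸ heq) (keyBC σ1 hσ1 α2 hα2)
    · exact absurd (hv1 ▸ hv2 ▸ heq).symm (keyAC p2 hp2 α1 ⟨hα1.1, le_trans hα1.2 hα_mem.2⟩)
    · exact absurd (hv1 ▸ hv2 ▸ heq).symm (keyBC σ2 hσ2 α1 hα1)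
    · rw [hv1, hv2] at heq
      have := h2.injOn ⟨le_trans hs0 (le_of_lt hα1.1), le_trans hα1.2 hα_mem.2⟩
        ⟨le_trans hs0 (le_of_lt hα2.1), le_trans hα2.2 hα_mem.2⟩ heq
      rw [he1, he2', this]
  have htri : SimpleGeodesicTriangle γ ℓ1 (ℓ1 + ℓ2) L :=
    { L_pos := by linarith
      ha := le_of_lt hℓ1pos
      hab := by linarith
      hbL := by linarith
      side1 := hside1
      side2 := hside2
      side3 := hside3
      closed := hclosed
      simple := hsimple }
  obtain ⟨p, hp, hloop⟩ := hTG.T2 γ ℓ1 (ℓ1 + ℓ2) L htri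
  refine ⟨p, hp, ?_, s3 '' Icc βs σt ∪ s2 '' Icc s αs, ?_, ?_, ?_, ?_, ?_⟩
  · rintro _ ⟨τ, hτ, rfl⟩
    have : g1 τ = γ (τ - s) := by
      rw [hvalA (τ - s) ⟨by linarith [hτ.1], by linarith [hτ.2]⟩]
      congr 1; ring
    rw [this]
    exact hloop ⟨τ - s, ⟨by linarith [hτ.1], by linarith [hτ.2]⟩, rfl⟩
  · apply IsPreconnected.union (s2 αs)
    · exact ⟨βs, ⟨le_refl _, le_of_lt hβσ_lt⟩, hVa.symm⟩
    · exact ⟨αs, ⟨le_of_lt hαs_gt, le_refl _⟩, rfl⟩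
    · exact isPreconnected_Icc.image s3 (h3.continuousOn.mono
        (Icc_subset_Icc hβ_mem.1 hσtL3))
    · exact isPreconnected_Icc.image s2 (h2.continuousOn.mono
        (Icc_subset_Icc hs0 hα_mem.2))
  · rintro _ (⟨σ, hσ, rfl⟩ | ⟨α, hα, rfl⟩)
    · exact Or.inr ⟨σ, ⟨le_trans hβ_mem.1 hσ.1, le_trans hσ.2 hσtL3⟩, rfl⟩
    · exact Or.inl ⟨α, ⟨le_trans hs0 hα.1, le_trans hα.2 hα_mem.2⟩, rfl⟩
  · rintro _ (⟨σ, hσ, rfl⟩ | ⟨α, hα, rfl⟩)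
    · have : s3 σ = γ (σt + ℓ1 - σ) := by
        rw [hvalB (σt + ℓ1 - σ) ⟨by linarith [hσ.2], by linarith [hσ.1]⟩]
        congr 1; ring
      rw [this]
      exact hloop ⟨σt + ℓ1 - σ, ⟨by linarith [hσ.2],
        by linarith [hσ.1]⟩, rfl⟩
    · have : s2 α = γ (αs + ℓ1 + ℓ2 - α) := by
        rw [hvalC (αs + ℓ1 + ℓ2 - α) ⟨by linarith [hα.2], by linarith [hα.1]⟩]
        congr 1; ring
      rw [this]
      exact hloop ⟨αs + ℓ1 + ℓ2 - α, ⟨by linarith [hα.2, le_of_lt hℓ1pos, le_of_lt hℓ2pos], by linarith [hα.1]⟩, rfl⟩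
  · exact Or.inr ⟨s, ⟨le_refl _, le_of_lt hαs_gt⟩, hgs.symm⟩
  · exact Or.inl ⟨σt, ⟨le_of_lt hβσ_lt, le_refl _⟩, hgt.symm⟩

end Tri

section Tri4

variable {F : Type*} [MetricSpace F] {P : Set (Set F)}

/-- Triangle gap lemma, crossed case: gap start on side3, gap end on side2. -/
lemma tri_case4 (hTG : IsTreeGraded P) {g1 s2 s3 : ℝ → F} {L1 L2 L3 s t : ℝ}
    (h1 : IsGeodesicOn g1 0 L1) (h2 : IsGeodesicOn s2 0 L2) (h3 : IsGeodesicOn s3 0 L3)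
    (he2 : s2 L2 = s3 0)
    (hst : s < t) (hs0 : 0 ≤ s) (htL : t ≤ L1)
    (htL2 : t ≤ L2) (hσs0 : 0 ≤ L3 - L1 + s)
    (hgs : g1 s = s3 (L3 - L1 + s)) (hgt : g1 t = s2 t)
    (hgap : ∀ τ ∈ Ioo s t, g1 τ ∉ s2 '' Icc 0 L2 ∪ s3 '' Icc 0 L3)
    (hns : g1 s ∉ s2 '' Icc 0 L2) (hnt : g1 t ∉ s3 '' Icc 0 L3) :
    ∃ p ∈ P, g1 '' Icc s t ⊆ p ∧ ∃ C : Set F, IsPreconnected C ∧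
      C ⊆ s2 '' Icc 0 L2 ∪ s3 '' Icc 0 L3 ∧ C ⊆ p ∧ g1 s ∈ C ∧ g1 t ∈ C := by
  set σs : ℝ := L3 - L1 + s with hσs_def
  have hσsL3 : σs ≤ L3 := by linarith
  have hL30 : 0 ≤ L3 := le_trans hσs0 hσsL3
  have ht0 : 0 ≤ t := le_trans hs0 (le_of_lt hst)
  set A : Set (ℝ × ℝ) := (Icc t L2 ×ˢ Icc 0 σs) ∩
      (fun a : ℝ × ℝ => (s2 a.1, s3 a.2)) ⁻¹' Set.diagonal F with hA_def
  have hKcomp : IsCompact (Icc t L2 ×ˢ Icc 0 σs) := isCompact_Icc.prod isCompact_Icc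
  have hcont : ContinuousOn (fun a : ℝ × ℝ => (s2 a.1, s3 a.2)) (Icc t L2 ×ˢ Icc 0 σs) := by
    apply ContinuousOn.prodMk
    · exact h2.continuousOn.comp continuousOn_fst
        (fun a ha => ⟨le_trans ht0 ha.1.1, ha.1.2⟩)
    · exact h3.continuousOn.comp continuousOn_snd
        (fun a ha => ⟨ha.2.1, le_trans ha.2.2 hσsL3⟩)
  have hAclosed : IsClosed A :=
    hcont.preimage_isClosed_of_isClosed (isClosed_Icc.prod isClosed_Icc) isClosed_diagonal
  have hAcomp : IsCompact A := hKcomp.of_isClosed_subset hAclosed inter_subset_left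
  have hAne : A.Nonempty := ⟨(L2, 0), ⟨⟨htL2, le_refl _⟩, ⟨le_refl _, hσs0⟩⟩, he2⟩
  have hfst_comp : IsCompact (Prod.fst '' A) := hAcomp.image continuous_fst
  have hfst_ne : (Prod.fst '' A).Nonempty := hAne.image _
  obtain ⟨a0, ha0A, ha0fst⟩ := hfst_comp.sInf_mem hfst_ne
  set αs : ℝ := sInf (Prod.fst '' A) with hαs_def
  set βs : ℝ := a0.2 with hβs_def
  have hVa : s2 αs = s3 βs := by
    have h' := ha0A.2
    simp only [Set.mem_preimage, Set.mem_diagonal_iff] at h'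
    rw [hβs_def, ← ha0fst]
    exact h'
  have hα_mem : αs ∈ Icc t L2 := ha0fst ▸ ha0A.1.1
  have hβ_mem : βs ∈ Icc 0 σs := ha0A.1.2
  have hmin : ∀ b ∈ A, αs ≤ b.1 := fun b hb =>
    csInf_le hfst_comp.bddBelow (mem_image_of_mem _ hb)
  have hαs_gt : t < αs := by
    rcases eq_or_lt_of_le hα_mem.1 with h | h
    · exfalso
      apply hnt
      refine ⟨βs, ⟨hβ_mem.1, le_trans hβ_mem.2 hσsL3⟩, ?_⟩
      rw [← hVa, ← h, ← hgt]
    · exact h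
  have hβσ_lt : βs < σs := by
    rcases eq_or_lt_of_le hβ_mem.2 with h | h
    · exfalso
      apply hns
      refine ⟨αs, ⟨le_trans ht0 hα_mem.1, hα_mem.2⟩, ?_⟩
      rw [hVa, h, ← hgs]
    · exact h
  set ℓ1 : ℝ := t - s with hℓ1
  set ℓ2 : ℝ := αs - t with hℓ2
  set ℓ3 : ℝ := σs - βs with hℓ3
  set L : ℝ := ℓ1 + ℓ2 + ℓ3 with hL
  have hℓ1pos : 0 < ℓ1 := by linarith
  have hℓ2pos : 0 < ℓ2 := by linarith
  have hℓ3pos : 0 < ℓ3 := by linarith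
  set γ : ℝ → F := fun τ => if τ ≤ ℓ1 then g1 (s + τ)
    else if τ ≤ ℓ1 + ℓ2 then s2 (τ - ℓ1 + t) else s3 (τ - ℓ1 - ℓ2 + βs) with hγ
  have hvalA : ∀ τ ∈ Icc (0:ℝ) ℓ1, γ τ = g1 (s + τ) := by
    intro τ hτ; simp [hγ, hτ.2]
  have hvalB : ∀ τ ∈ Icc ℓ1 (ℓ1 + ℓ2), γ τ = s2 (τ - ℓ1 + t) := by
    intro τ hτ
    by_cases hc : τ ≤ ℓ1
    · have hττ : τ = ℓ1 := le_antisymm hc hτ.1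
      have e1 : s + τ = t := by rw [hττ, hℓ1]; ring
      have e2 : τ - ℓ1 + t = t := by rw [hττ]; ring
      simp only [hγ, if_pos hc, e1, e2]
      exact hgt
    · simp [hγ, hc, hτ.2]
  have hvalC : ∀ τ ∈ Icc (ℓ1 + ℓ2) L, γ τ = s3 (τ - ℓ1 - ℓ2 + βs) := by
    intro τ hτ
    by_cases hc : τ ≤ ℓ1 + ℓ2
    · have hττ : τ = ℓ1 + ℓ2 := le_antisymm hc hτ.1
      have hc1 : ¬ τ ≤ ℓ1 := by rw [hττ]; intro h; linarith
      have e1 : τ - ℓ1 + t = αs := by rw [hττ, hℓ2]; ring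
      have e2 : τ - ℓ1 - ℓ2 + βs = βs := by rw [hττ]; ring
      simp only [hγ, if_neg hc1, if_pos hc, e1, e2]
      exact hVa
    · have hc1 : ¬ τ ≤ ℓ1 := fun h => hc (le_trans h (by linarith))
      simp [hγ, hc, hc1]
  have hside1 : IsGeodesicOn γ 0 ℓ1 := by
    intro τ1 hτ1 τ2 hτ2
    rw [hvalA τ1 hτ1, hvalA τ2 hτ2]
    have := h1 (s + τ1) ⟨by linarith [hτ1.1], by linarith [hτ1.2]⟩
      (s + τ2) ⟨by linarith [hτ2.1], by linarith [hτ2.2]⟩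
    simpa using this
  have hside2 : IsGeodesicOn γ ℓ1 (ℓ1 + ℓ2) := by
    intro τ1 hτ1 τ2 hτ2
    rw [hvalB τ1 hτ1, hvalB τ2 hτ2]
    have m1 : τ1 - ℓ1 + t ∈ Icc (0:ℝ) L2 :=
      ⟨by linarith [hτ1.1], by linarith [hτ1.2, hα_mem.2]⟩
    have m2 : τ2 - ℓ1 + t ∈ Icc (0:ℝ) L2 :=
      ⟨by linarith [hτ2.1], by linarith [hτ2.2, hα_mem.2]⟩
    rw [h2 _ m1 _ m2]
    congr 1; ring
  have hside3 : IsGeodesicOn γ (ℓ1 + ℓ2) L := by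
    intro τ1 hτ1 τ2 hτ2
    rw [hvalC τ1 hτ1, hvalC τ2 hτ2]
    have m1 : τ1 - ℓ1 - ℓ2 + βs ∈ Icc (0:ℝ) L3 :=
      ⟨by linarith [hτ1.1, hβ_mem.1], by linarith [hτ1.2, hσsL3]⟩
    have m2 : τ2 - ℓ1 - ℓ2 + βs ∈ Icc (0:ℝ) L3 :=
      ⟨by linarith [hτ2.1, hβ_mem.1], by linarith [hτ2.2, hσsL3]⟩
    rw [h3 _ m1 _ m2]
    congr 1; ring
  have hclosed : γ 0 = γ L := by
    rw [hvalA 0 ⟨le_refl _, le_of_lt hℓ1pos⟩,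
      hvalC L ⟨by linarith, le_refl _⟩]
    have e : L - ℓ1 - ℓ2 + βs = σs := by rw [hL, hℓ3]; ring
    rw [e, add_zero, hgs]
  have keyAB : ∀ p ∈ Ico s t, ∀ α ∈ Icc (0:ℝ) L2, g1 p ≠ s2 α := by
    intro p hp α hα heq
    rcases eq_or_lt_of_le hp.1 with h | h
    · exact hns ⟨α, hα, by rw [← heq, h]⟩
    · exact hgap p ⟨h, hp.2⟩ (Or.inl ⟨α, hα, heq.symm⟩)
  have keyAC : ∀ p ∈ Ico s t, ∀ β ∈ Ico (0:ℝ) σs, g1 p ≠ s3 β := by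
    intro p hp β hβ heq
    rcases eq_or_lt_of_le hp.1 with h | h
    · rw [← h, hgs] at heq
      have := h3.injOn ⟨hσs0, hσsL3⟩ ⟨hβ.1, le_trans (le_of_lt hβ.2) hσsL3⟩ heq
      linarith [hβ.2]
    · exact hgap p ⟨h, hp.2⟩ (Or.inr ⟨β, ⟨hβ.1, le_trans (le_of_lt hβ.2) hσsL3⟩, heq.symm⟩)
  have keyBC : ∀ α ∈ Ico t αs, ∀ β ∈ Icc βs σs, s2 α ≠ s3 β := by
    intro α hα β hβ heq
    have hmem : (α, β) ∈ A :=
      ⟨⟨⟨hα.1, le_trans (le_of_lt hα.2) hα_mem.2⟩,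
        ⟨le_trans hβ_mem.1 hβ.1, hβ.2⟩⟩, heq⟩
    have := hmin (α, β) hmem
    linarith [hα.2]
  have hclass : ∀ τ ∈ Ico (0:ℝ) L,
      (∃ p ∈ Ico s t, γ τ = g1 p ∧ τ = p - s) ∨
      (∃ α ∈ Ico t αs, γ τ = s2 α ∧ τ = α - t + ℓ1) ∨
      (∃ β ∈ Ico βs σs, γ τ = s3 β ∧ τ = β - βs + ℓ1 + ℓ2) := by
    intro τ hτ
    by_cases hc1 : τ < ℓ1
    · exact Or.inl ⟨s + τ, ⟨by linarith [hτ.1], by linarith⟩,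
        hvalA τ ⟨hτ.1, le_of_lt hc1⟩, by ring⟩
    · push_neg at hc1
      by_cases hc2 : τ < ℓ1 + ℓ2
      · exact Or.inr (Or.inl ⟨τ - ℓ1 + t, ⟨by linarith, by linarith⟩,
          hvalB τ ⟨hc1, le_of_lt hc2⟩, by ring⟩)
      · push_neg at hc2
        exact Or.inr (Or.inr ⟨τ - ℓ1 - ℓ2 + βs, ⟨by linarith, by linarith [hτ.2]⟩,
          hvalC τ ⟨hc2, le_of_lt hτ.2⟩, by ring⟩)
  have hsimple : Set.InjOn γ (Ico 0 L) := by
    intro τ1 hτ1 τ2 hτ2 heq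
    rcases hclass τ1 hτ1 with ⟨p1, hp1, hv1, he1⟩ | ⟨α1, hα1, hv1, he1⟩ | ⟨β1, hβ1, hv1, he1⟩ <;>
      rcases hclass τ2 hτ2 with ⟨p2, hp2, hv2, he2'⟩ | ⟨α2, hα2, hv2, he2'⟩ | ⟨β2, hβ2, hv2, he2'⟩
    · rw [hv1, hv2] at heq
      have := h1.injOn ⟨le_trans hs0 hp1.1, le_trans (le_of_lt hp1.2) htL⟩
        ⟨le_trans hs0 hp2.1, le_trans (le_of_lt hp2.2) htL⟩ heq
      rw [he1, he2', this]
    · exact absurd (hv1 ▸ hv2 ▸ heq)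
        (keyAB p1 hp1 α2 ⟨le_trans ht0 hα2.1, le_trans (le_of_lt hα2.2) hα_mem.2⟩)
    · exact absurd (hv1 ▸ hv2 ▸ heq)
        (keyAC p1 hp1 β2 ⟨le_trans hβ_mem.1 hβ2.1, hβ2.2⟩)
    · exact absurd (hv1 ▸ hv2 ▸ heq).symm
        (keyAB p2 hp2 α1 ⟨le_trans ht0 hα1.1, le_trans (le_of_lt hα1.2) hα_mem.2⟩)
    · rw [hv1, hv2] at heq
      have := h2.injOn ⟨le_trans ht0 hα1.1, le_trans (le_of_lt hα1.2) hα_mem.2⟩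
        ⟨le_trans ht0 hα2.1, le_trans (le_of_lt hα2.2) hα_mem.2⟩ heq
      rw [he1, he2', this]
    · exact absurd (hv1 ▸ hv2 ▸ heq)
        (keyBC α1 hα1 β2 ⟨hβ2.1, le_of_lt hβ2.2⟩)
    · exact absurd (hv1 ▸ hv2 ▸ heq).symm
        (keyAC p2 hp2 β1 ⟨le_trans hβ_mem.1 hβ1.1, hβ1.2⟩)
    · exact absurd (hv1 ▸ hv2 ▸ heq).symm
        (keyBC α2 hα2 β1 ⟨hβ1.1, le_of_lt hβ1.2⟩)
    · rw [hv1, hv2] at heq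
      have := h3.injOn ⟨le_trans hβ_mem.1 hβ1.1, le_trans (le_of_lt hβ1.2) hσsL3⟩
        ⟨le_trans hβ_mem.1 hβ2.1, le_trans (le_of_lt hβ2.2) hσsL3⟩ heq
      rw [he1, he2', this]
  have htri : SimpleGeodesicTriangle γ ℓ1 (ℓ1 + ℓ2) L :=
    { L_pos := by linarith
      ha := le_of_lt hℓ1pos
      hab := by linarith
      hbL := by linarith
      side1 := hside1
      side2 := hside2
      side3 := hside3
      closed := hclosed
      simple := hsimple }
  obtain ⟨p, hp, hloop⟩ := hTG.T2 γ ℓ1 (ℓ1 + ℓ2) L htri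
  refine ⟨p, hp, ?_, s2 '' Icc t αs ∪ s3 '' Icc βs σs, ?_, ?_, ?_, ?_, ?_⟩
  · rintro _ ⟨τ, hτ, rfl⟩
    have : g1 τ = γ (τ - s) := by
      rw [hvalA (τ - s) ⟨by linarith [hτ.1], by linarith [hτ.2]⟩]
      congr 1; ring
    rw [this]
    exact hloop ⟨τ - s, ⟨by linarith [hτ.1], by linarith [hτ.2]⟩, rfl⟩
  · apply IsPreconnected.union (s2 αs)
    · exact ⟨αs, ⟨le_of_lt hαs_gt, le_refl _⟩, rfl⟩
    · exact ⟨βs, ⟨le_refl _, le_of_lt hβσ_lt⟩, hVa.symm⟩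
    · exact isPreconnected_Icc.image s2 (h2.continuousOn.mono
        (Icc_subset_Icc ht0 hα_mem.2))
    · exact isPreconnected_Icc.image s3 (h3.continuousOn.mono
        (Icc_subset_Icc hβ_mem.1 hσsL3))
  · rintro _ (⟨α, hα, rfl⟩ | ⟨β, hβ, rfl⟩)
    · exact Or.inl ⟨α, ⟨le_trans ht0 hα.1, le_trans hα.2 hα_mem.2⟩, rfl⟩
    · exact Or.inr ⟨β, ⟨le_trans hβ_mem.1 hβ.1, le_trans hβ.2 hσsL3⟩, rfl⟩
  · rintro _ (⟨α, hα, rfl⟩ | ⟨β, hβ, rfl⟩)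
    · have : s2 α = γ (α - t + ℓ1) := by
        rw [hvalB (α - t + ℓ1) ⟨by linarith [hα.1], by linarith [hα.2]⟩]
        congr 1; ring
      rw [this]
      exact hloop ⟨α - t + ℓ1, ⟨by linarith [hα.1], by linarith [hα.2]⟩, rfl⟩
    · have : s3 β = γ (β - βs + ℓ1 + ℓ2) := by
        rw [hvalC (β - βs + ℓ1 + ℓ2) ⟨by linarith [hβ.1], by linarith [hβ.2]⟩]
        congr 1; ring
      rw [this]
      exact hloop ⟨β - βs + ℓ1 + ℓ2, ⟨by linarith [hβ.1], by linarith [hβ.2]⟩, rfl⟩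
  · exact Or.inr ⟨σs, ⟨le_of_lt hβσ_lt, le_refl _⟩, hgs.symm⟩
  · exact Or.inl ⟨t, ⟨le_refl _, le_of_lt hαs_gt⟩, hgt.symm⟩

end Tri4

section TGL

variable {F : Type*} [MetricSpace F] {P : Set (Set F)}

/-- Full triangle gap lemma: if a point of one side of a geodesic triangle is not on the
other two sides, then a subsegment around it lies in a piece `p`, whose gap endpoints are
joined by a preconnected subset of the other two sides inside `p`. -/
lemma triangle_gap (hTG : IsTreeGraded P) {g1 s2 s3 : ℝ → F} {L1 L2 L3 : ℝ}
    (h1 : IsGeodesicOn g1 0 L1) (h2 : IsGeodesicOn s2 0 L2) (h3 : IsGeodesicOn s3 0 L3)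
    (he1 : g1 0 = s2 0) (he2 : s2 L2 = s3 0) (he3 : s3 L3 = g1 L1)
    (hL2 : 0 ≤ L2) (hL3 : 0 ≤ L3)
    {t0 : ℝ} (ht0 : t0 ∈ Icc 0 L1)
    (hz : g1 t0 ∉ s2 '' Icc 0 L2 ∪ s3 '' Icc 0 L3) :
    ∃ p ∈ P, ∃ s t : ℝ, 0 ≤ s ∧ s < t0 ∧ t0 < t ∧ t ≤ L1 ∧ g1 '' Icc s t ⊆ p ∧
      ∃ C : Set F, IsPreconnected C ∧ C ⊆ s2 '' Icc 0 L2 ∪ s3 '' Icc 0 L3 ∧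
        C ⊆ p ∧ g1 s ∈ C ∧ g1 t ∈ C := by
  have hL1 : 0 ≤ L1 := le_trans ht0.1 ht0.2
  set W : Set F := s2 '' Icc 0 L2 ∪ s3 '' Icc 0 L3 with hW_def
  have hWclosed : IsClosed W :=
    ((h2.isClosed_image).union (h3.isClosed_image))
  set E : Set ℝ := Icc 0 L1 ∩ g1 ⁻¹' W with hE_def
  have hEclosed : IsClosed E :=
    h1.continuousOn.preimage_isClosed_of_isClosed isClosed_Icc hWclosed
  have hmem0 : (0:ℝ) ∈ E := ⟨⟨le_refl _, hL1⟩, Or.inl ⟨0, ⟨le_refl _, hL2⟩, he1.symm⟩⟩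
  have hmemL : L1 ∈ E := ⟨⟨hL1, le_refl _⟩, Or.inr ⟨L3, ⟨hL3, le_refl _⟩, he3⟩⟩
  have ht0E : t0 ∉ E := fun h => hz h.2
  have h0t0 : 0 < t0 := lt_of_le_of_ne ht0.1 (fun h => ht0E (h ▸ hmem0))
  have ht0L : t0 < L1 := lt_of_le_of_ne ht0.2 (fun h => ht0E (h ▸ hmemL))
  -- gap endpoints
  set s : ℝ := sSup (E ∩ Icc 0 t0) with hs_def
  set t : ℝ := sInf (E ∩ Icc t0 L1) with ht_def
  have hsE : s ∈ E ∩ Icc 0 t0 := by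
    apply (hEclosed.inter isClosed_Icc).csSup_mem
      ⟨0, hmem0, ⟨le_refl _, le_of_lt h0t0⟩⟩
    exact BddAbove.mono inter_subset_right bddAbove_Icc
  have htE : t ∈ E ∩ Icc t0 L1 := by
    apply (hEclosed.inter isClosed_Icc).csInf_mem
      ⟨L1, hmemL, ⟨le_of_lt ht0L, le_refl _⟩⟩
    exact BddBelow.mono inter_subset_right bddBelow_Icc
  have hs_lt : s < t0 := lt_of_le_of_ne hsE.2.2 (fun h => ht0E (by rw [← h]; exact hsE.1))
  have ht_gt : t0 < t := lt_of_le_of_ne htE.2.1 (fun h => ht0E (by rw [h]; exact htE.1))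
  have hs0 : 0 ≤ s := hsE.2.1
  have htL : t ≤ L1 := htE.2.2
  have hst : s < t := lt_trans hs_lt ht_gt
  have hgap : ∀ τ ∈ Ioo s t, g1 τ ∉ W := by
    intro τ hτ hmem
    have hτIcc : τ ∈ Icc (0:ℝ) L1 := ⟨le_trans hs0 (le_of_lt hτ.1), le_trans (le_of_lt hτ.2) htL⟩
    rcases le_or_gt τ t0 with h | h
    · have : τ ≤ s := le_csSup (BddAbove.mono inter_subset_right bddAbove_Icc)
        ⟨⟨hτIcc, hmem⟩, ⟨hτIcc.1, h⟩⟩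
      linarith [hτ.1]
    · have : t ≤ τ := csInf_le (BddBelow.mono inter_subset_right bddBelow_Icc)
        ⟨⟨hτIcc, hmem⟩, ⟨le_of_lt h, hτIcc.2⟩⟩
      linarith [hτ.2]
  -- pinning of parameters
  have pin2 : ∀ τ0 ∈ Icc (0:ℝ) L1, g1 τ0 ∈ s2 '' Icc 0 L2 → g1 τ0 = s2 τ0 ∧ τ0 ≤ L2 := by
    rintro τ0 hτ0 ⟨σ, hσ, hσeq⟩
    have d1 : dist (g1 0) (g1 τ0) = τ0 := by
      rw [h1 0 ⟨le_refl _, hL1⟩ τ0 hτ0, abs_of_nonpos (by linarith [hτ0.1])]; ring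
    have d2 : dist (s2 0) (s2 σ) = σ := by
      rw [h2 0 ⟨le_refl _, hL2⟩ σ hσ, abs_of_nonpos (by linarith [hσ.1])]; ring
    have hts : τ0 = σ := by rw [← d1, ← d2, he1, hσeq]
    subst hts
    exact ⟨hσeq.symm, hσ.2⟩
  have pin3 : ∀ τ0 ∈ Icc (0:ℝ) L1, g1 τ0 ∈ s3 '' Icc 0 L3 →
      g1 τ0 = s3 (L3 - L1 + τ0) ∧ 0 ≤ L3 - L1 + τ0 := by
    rintro τ0 hτ0 ⟨σ, hσ, hσeq⟩
    have d1 : dist (g1 τ0) (g1 L1) = L1 - τ0 := by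
      rw [h1 τ0 hτ0 L1 ⟨hL1, le_refl _⟩, abs_of_nonpos (by linarith [hτ0.2])]; ring
    have d2 : dist (s3 σ) (s3 L3) = L3 - σ := by
      rw [h3 σ hσ L3 ⟨hL3, le_refl _⟩, abs_of_nonpos (by linarith [hσ.2])]; ring
    have hσval : σ = L3 - L1 + τ0 := by
      have : L3 - σ = L1 - τ0 := by rw [← d1, ← d2, he3, hσeq]
      linarith
    refine ⟨by rw [← hσval, hσeq], by rw [← hσval]; exact hσ.1⟩
  have hsIcc : s ∈ Icc (0:ℝ) L1 := ⟨hs0, le_trans (le_of_lt hst) htL⟩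
  have htIcc : t ∈ Icc (0:ℝ) L1 := ⟨le_trans hs0 (le_of_lt hst), htL⟩
  -- the two easy (bigon) cases as reusable facts
  have case22 : g1 s ∈ s2 '' Icc 0 L2 → g1 t ∈ s2 '' Icc 0 L2 →
      ∃ p ∈ P, g1 '' Icc s t ⊆ p ∧ ∃ C : Set F, IsPreconnected C ∧
        C ⊆ W ∧ C ⊆ p ∧ g1 s ∈ C ∧ g1 t ∈ C := by
    intro ms mt
    obtain ⟨hgs, hsL2'⟩ := pin2 s hsIcc ms
    obtain ⟨hgt, htL2'⟩ := pin2 t htIcc mt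
    obtain ⟨p, hp, hg1p, hwp⟩ := gap_bigon hTG hst
      (h1.mono (Icc_subset_Icc hs0 htL))
      (h2.mono (Icc_subset_Icc hs0 htL2'))
      hgs hgt
      (fun τ hτ hmem => hgap τ hτ (Or.inl (image_mono (f := s2) (Icc_subset_Icc hs0 htL2') hmem)))
    refine ⟨p, hp, hg1p, s2 '' Icc s t, ?_, ?_, hwp, ?_, ?_⟩
    · exact isPreconnected_Icc.image s2 (h2.continuousOn.mono (Icc_subset_Icc hs0 htL2'))
    · exact fun w hw => Or.inl (image_mono (f := s2) (Icc_subset_Icc hs0 htL2') hw)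
    · exact ⟨s, ⟨le_refl _, le_of_lt hst⟩, hgs.symm⟩
    · exact ⟨t, ⟨le_of_lt hst, le_refl _⟩, hgt.symm⟩
  have case33 : g1 s ∈ s3 '' Icc 0 L3 → g1 t ∈ s3 '' Icc 0 L3 →
      ∃ p ∈ P, g1 '' Icc s t ⊆ p ∧ ∃ C : Set F, IsPreconnected C ∧
        C ⊆ W ∧ C ⊆ p ∧ g1 s ∈ C ∧ g1 t ∈ C := by
    intro ms mt
    obtain ⟨hgs, hσs0⟩ := pin3 s hsIcc ms
    obtain ⟨hgt, _⟩ := pin3 t htIcc mt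
    set w : ℝ → F := fun τ => s3 (L3 - L1 + τ) with hw_def
    have hwIcc : ∀ τ ∈ Icc s t, (L3 - L1 + τ) ∈ Icc (0:ℝ) L3 :=
      fun τ hτ => ⟨by linarith [hτ.1], by linarith [hτ.2, htL]⟩
    have hwgeo : IsGeodesicOn w s t := by
      intro τ1 hτ1 τ2 hτ2
      rw [h3 _ (hwIcc τ1 hτ1) _ (hwIcc τ2 hτ2)]
      congr 1; ring
    have hwsub : w '' Icc s t ⊆ s3 '' Icc 0 L3 := by
      rintro _ ⟨τ, hτ, rfl⟩
      exact ⟨L3 - L1 + τ, hwIcc τ hτ, rfl⟩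
    obtain ⟨p, hp, hg1p, hwp⟩ := gap_bigon hTG hst
      (h1.mono (Icc_subset_Icc hs0 htL)) hwgeo hgs hgt
      (fun τ hτ hmem => hgap τ hτ (Or.inr (hwsub hmem)))
    refine ⟨p, hp, hg1p, w '' Icc s t, ?_, ?_, hwp, ?_, ?_⟩
    · exact isPreconnected_Icc.image w (fun τ hτ => ((h3.continuousOn.mono
        (Icc_subset_Icc (by linarith [hτ.1]) (by linarith [hτ.2, htL]))).comp
        ((continuous_const.add continuous_id).continuousOn)
        (fun x hx => hwIcc x hx)) τ hτ)
    · exact fun x hx => Or.inr (hwsub hx)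
    · exact ⟨s, ⟨le_refl _, le_of_lt hst⟩, hgs.symm⟩
    · exact ⟨t, ⟨le_of_lt hst, le_refl _⟩, hgt.symm⟩
  -- decision tree
  have main : ∃ p ∈ P, g1 '' Icc s t ⊆ p ∧ ∃ C : Set F, IsPreconnected C ∧
      C ⊆ W ∧ C ⊆ p ∧ g1 s ∈ C ∧ g1 t ∈ C := by
    rcases hsE.1.2 with ms2 | ms3
    · rcases htE.1.2 with mt2 | mt3
      · exact case22 ms2 mt2
      · by_cases ms3 : g1 s ∈ s3 '' Icc 0 L3
        · exact case33 ms3 mt3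
        · by_cases mt2 : g1 t ∈ s2 '' Icc 0 L2
          · exact case22 ms2 mt2
          · obtain ⟨hgs, hsL2'⟩ := pin2 s hsIcc ms2
            obtain ⟨hgt, hσ0⟩ := pin3 t htIcc mt3
            exact tri_case3 hTG h1 h2 h3 he2 hst hs0 htL hsL2' hσ0 hgs hgt hgap ms3 mt2
    · rcases htE.1.2 with mt2 | mt3
      · by_cases ms2 : g1 s ∈ s2 '' Icc 0 L2
        · exact case22 ms2 mt2
        · by_cases mt3 : g1 t ∈ s3 '' Icc 0 L3
          · exact case33 ms3 mt3
          · obtain ⟨hgs, hσs0⟩ := pin3 s hsIcc ms3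
            obtain ⟨hgt, htL2'⟩ := pin2 t htIcc mt2
            exact tri_case4 hTG h1 h2 h3 he2 hst hs0 htL htL2' hσs0 hgs hgt hgap ms2 mt3
      · exact case33 ms3 mt3
  obtain ⟨p, hp, hsub, C, hCpre, hCW, hCp, hCs, hCt⟩ := main
  exact ⟨p, hp, s, t, hs0, hs_lt, ht_gt, htL, hsub, C, hCpre, hCW, hCp, hCs, hCt⟩

end TGL

section Gate

variable {F : Type*} [MetricSpace F] {P : Set (Set F)}

/-- Pieces are convex: geodesics between two points of a piece stay inside it. -/
lemma piece_convex (hTG : IsTreeGraded P) {p : Set F} (hp : p ∈ P) {γ : ℝ → F} {ℓ : ℝ}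
    (hγ : IsGeodesicOn γ 0 ℓ) (hℓ : 0 ≤ ℓ) (ha : γ 0 ∈ p) (hb : γ ℓ ∈ p) :
    ∀ τ ∈ Icc (0:ℝ) ℓ, γ τ ∈ p := by
  intro τ0 hτ0
  by_contra hτ0p
  have hdist : dist (γ 0) (γ ℓ) = ℓ := by
    rw [hγ 0 ⟨le_refl _, hℓ⟩ ℓ ⟨hℓ, le_refl _⟩, abs_of_nonpos (by linarith)]; ring
  obtain ⟨α, hα0, hαd, hαgeo, hαsub⟩ := hTG.pieces_geodesic p hp (γ 0) ha (γ ℓ) hb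
  rw [hdist] at hαd hαgeo hαsub
  set c : ℝ → F := fun _ => γ ℓ with hc_def
  have hcgeo : IsGeodesicOn c 0 0 := by
    intro τ1 hτ1 τ2 hτ2
    have e1 : τ1 = 0 := le_antisymm hτ1.2 hτ1.1
    have e2 : τ2 = 0 := le_antisymm hτ2.2 hτ2.1
    simp [hc_def, e1, e2]
  have hz : γ τ0 ∉ α '' Icc 0 ℓ ∪ c '' Icc 0 0 := by
    rintro (hmem | ⟨σ, hσm, hval⟩)
    · exact hτ0p (hαsub hmem)
    · exact hτ0p (by rw [← hval]; exact hb)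
  obtain ⟨p', hp', s, t, hs0, hst0, ht0t, htℓ, hsub, C, hCpre, hCW, hCp', hCs, hCt⟩ :=
    triangle_gap hTG hγ hαgeo hcgeo hα0.symm (by rw [hαd, hc_def]) (by rw [hc_def])
      hℓ (le_refl 0) hτ0 hz
  have hCsubp : C ⊆ p := by
    intro w hw
    rcases hCW hw with hmem | ⟨σ, _, rfl⟩
    · exact hαsub hmem
    · exact hb
  have hne : γ s ≠ γ t := by
    intro h
    have := hγ.injOn ⟨hs0, le_trans (le_of_lt (lt_trans hst0 ht0t)) htℓ⟩
      ⟨le_trans hs0 (le_of_lt (lt_trans hst0 ht0t)), htℓ⟩ h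
    linarith [lt_trans hst0 ht0t]
  by_cases hpp : p' = p
  · exact hτ0p (hpp ▸ hsub ⟨τ0, ⟨le_of_lt hst0, le_of_lt ht0t⟩, rfl⟩)
  · have hsub2 : γ s ∈ p ∩ p' ∧ γ t ∈ p ∩ p' :=
      ⟨⟨hCsubp hCs, hsub ⟨s, ⟨le_refl _, le_of_lt (lt_trans hst0 ht0t)⟩, rfl⟩⟩,
       ⟨hCsubp hCt, hsub ⟨t, ⟨le_of_lt (lt_trans hst0 ht0t), le_refl _⟩, rfl⟩⟩⟩
    exact hne (hTG.T1 p hp p' hp' (fun h => hpp h.symm) hsub2.1 hsub2.2)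

/-- First entry points of geodesics from a common point into a piece coincide. -/
lemma entry_unique (hTG : IsTreeGraded P) {p : Set F} (hp : p ∈ P)
    {γ γ' : ℝ → F} {L L' : ℝ} (hγ : IsGeodesicOn γ 0 L) (hγ' : IsGeodesicOn γ' 0 L')
    (h00 : γ 0 = γ' 0)
    {a b : ℝ} (haI : a ∈ Icc 0 L) (hbI : b ∈ Icc 0 L')
    (hap : γ a ∈ p) (hbp : γ' b ∈ p)
    (hamin : ∀ τ ∈ Ico (0:ℝ) a, γ τ ∉ p) (hbmin : ∀ τ ∈ Ico (0:ℝ) b, γ' τ ∉ p) :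
    γ a = γ' b := by
  by_contra hne
  have ha0 : 0 < a := by
    rcases eq_or_lt_of_le haI.1 with h | h
    · exfalso
      rcases eq_or_lt_of_le hbI.1 with h' | h'
      · exact hne (by rw [← h, ← h', h00])
      · exact hbmin 0 ⟨le_refl _, h'⟩ (by rw [← h00, h]; exact hap)
    · exact h
  have hb0 : 0 < b := by
    rcases eq_or_lt_of_le hbI.1 with h' | h'
    · exact absurd (show γ 0 ∈ p by rw [h00, h']; exact hbp) (hamin 0 ⟨le_refl _, ha0⟩)
    · exact h'
  set ℓ : ℝ := dist (γ a) (γ' b) with hℓ_def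
  have hℓpos : 0 < ℓ := dist_pos.mpr hne
  obtain ⟨α, hα0, hαd, hαgeo, hαsub⟩ :=
    hTG.pieces_geodesic p hp (γ a) hap (γ' b) hbp
  rw [← hℓ_def] at hαd hαgeo hαsub
  set s2 : ℝ → F := fun τ => γ (a - τ) with hs2_def
  have hs2geo : IsGeodesicOn s2 0 a := by
    have h' := hγ.reflect a
    rw [sub_zero] at h'
    exact h'.mono (Icc_subset_Icc (by linarith [haI.2]) (le_refl _))
  have hmid : α (ℓ/2) ∈ p := hαsub ⟨ℓ/2, ⟨by linarith, by linarith⟩, rfl⟩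
  have hmidne : α (ℓ/2) ≠ γ a := by
    intro h
    have : dist (α 0) (α (ℓ/2)) = ℓ/2 := by
      rw [hαgeo 0 ⟨le_refl _, by linarith⟩ (ℓ/2) ⟨by linarith, by linarith⟩,
        abs_of_nonpos (by linarith)]; ring
    rw [h, hα0, dist_self] at this
    linarith
  have hmidne' : α (ℓ/2) ≠ γ' b := by
    intro h
    have : dist (α (ℓ/2)) (α ℓ) = ℓ/2 := by
      rw [hαgeo (ℓ/2) ⟨by linarith, by linarith⟩ ℓ ⟨by linarith, le_refl _⟩,
        abs_of_nonpos (by linarith)]; ring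
    rw [h, hαd, dist_self] at this
    linarith
  have hz : α (ℓ/2) ∉ s2 '' Icc 0 a ∪ γ' '' Icc 0 b := by
    rintro (⟨σ, hσ, hval⟩ | ⟨σ, hσ, hval⟩)
    · have hmem : γ (a - σ) ∈ p := by rw [hs2_def] at hval; rw [← hval] at hmid; exact hmid
      rcases eq_or_lt_of_le hσ.1 with h | h
      · exact hmidne (by rw [← hval, hs2_def, ← h]; simp)
      · exact hamin (a - σ) ⟨by linarith [hσ.2], by linarith⟩ hmem
    · have hmem : γ' σ ∈ p := by rw [← hval] at hmid; exact hmid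
      rcases eq_or_lt_of_le hσ.2 with h | h
      · exact hmidne' (by rw [← hval, h])
      · exact hbmin σ ⟨hσ.1, h⟩ hmem
  obtain ⟨p', hp', s, t, hs0, hst0, ht0t, htℓ, hsub, C, hCpre, hCW, hCp', hCs, hCt⟩ :=
    triangle_gap hTG hαgeo hs2geo (hγ'.mono (Icc_subset_Icc (le_refl _) hbI.2))
      (by rw [hα0, hs2_def]; simp)
      (by rw [hs2_def]; simp [h00])
      (by rw [hαd])
      haI.1 hbI.1 ⟨by linarith, by linarith⟩ hz
  have hne_st : α s ≠ α t := by
    intro h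
    have := hαgeo.injOn ⟨hs0, le_trans (le_of_lt (lt_trans hst0 ht0t)) htℓ⟩
      ⟨le_trans hs0 (le_of_lt (lt_trans hst0 ht0t)), htℓ⟩ h
    linarith [lt_trans hst0 ht0t]
  have hp'eq : p' = p := by
    by_contra hpp
    have h1 : α s ∈ p ∩ p' := ⟨hαsub ⟨s, ⟨hs0, le_trans (le_of_lt (lt_trans hst0 ht0t)) htℓ⟩, rfl⟩,
      hsub ⟨s, ⟨le_refl _, le_of_lt (lt_trans hst0 ht0t)⟩, rfl⟩⟩
    have h2 : α t ∈ p ∩ p' := ⟨hαsub ⟨t, ⟨le_trans hs0 (le_of_lt (lt_trans hst0 ht0t)), htℓ⟩, rfl⟩,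
      hsub ⟨t, ⟨le_of_lt (lt_trans hst0 ht0t), le_refl _⟩, rfl⟩⟩
    exact hne_st (hTG.T1 p hp p' hp' (fun h => hpp h.symm) h1 h2)
  -- every element of C is `γ a` or `γ' b`
  have hCpair : C ⊆ {γ a, γ' b} := by
    intro w hw
    have hwp : w ∈ p := hp'eq ▸ hCp' hw
    rcases hCW hw with ⟨σ, hσ, hval⟩ | ⟨σ, hσ, hval⟩
    · rcases eq_or_lt_of_le hσ.1 with h | h
      · have hwa : w = γ a := by rw [← hval, hs2_def, ← h]; simp
        rw [hwa]; exact mem_insert _ _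
      · exact absurd (by rw [← hval] at hwp; exact hwp)
          (hamin (a - σ) ⟨by linarith [hσ.2], by linarith⟩)
    · rcases eq_or_lt_of_le hσ.2 with h | h
      · have hwb : w = γ' b := by rw [← hval, h]
        rw [hwb]; exact mem_insert_of_mem _ rfl
      · exact absurd (by rw [← hval] at hwp; exact hwp) (hbmin σ ⟨hσ.1, h⟩)
  have hboth : γ a ∈ C ∧ γ' b ∈ C := by
    rcases hCpair hCs with h1 | h1 <;> rcases hCpair hCt with h2 | h2
    · exact absurd (h1.symm ▸ h2.symm ▸ rfl : α s = α t) hne_st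
    · exact ⟨h1 ▸ hCs, h2 ▸ hCt⟩
    · exact ⟨h2 ▸ hCt, h1 ▸ hCs⟩
    · exact absurd (h1.symm ▸ h2.symm ▸ rfl : α s = α t) hne_st
  exact not_preconnected_pair hne hCpre hCpair hboth.1 hboth.2

end Gate

section Gate2

variable {F : Type*} [MetricSpace F] {P : Set (Set F)}

lemma exists_first_entry {p : Set F} (hcl : IsClosed p) {γ : ℝ → F} {L : ℝ}
    (hγ : IsGeodesicOn γ 0 L) (hL : 0 ≤ L) (hhit : γ L ∈ p) :
    ∃ e ∈ Icc (0:ℝ) L, γ e ∈ p ∧ ∀ τ ∈ Ico (0:ℝ) e, γ τ ∉ p := by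
  set S : Set ℝ := Icc 0 L ∩ γ ⁻¹' p with hS_def
  have hScl : IsClosed S := hγ.continuousOn.preimage_isClosed_of_isClosed isClosed_Icc hcl
  have hSne : S.Nonempty := ⟨L, ⟨hL, le_refl _⟩, hhit⟩
  have hSbdd : BddBelow S := BddBelow.mono inter_subset_left bddBelow_Icc
  have heS : sInf S ∈ S := hScl.csInf_mem hSne hSbdd
  refine ⟨sInf S, heS.1, heS.2, ?_⟩
  intro τ hτ hmem
  have : sInf S ≤ τ := csInf_le hSbdd ⟨⟨hτ.1, le_trans (le_of_lt hτ.2) heS.1.2⟩, hmem⟩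
  linarith [hτ.2]

lemma exists_gate (hF : GeodesicSpace F) (hTG : IsTreeGraded P) {p : Set F} (hp : p ∈ P)
    (u : F) :
    ∃ a : F, a ∈ p ∧ ∀ (γ : ℝ → F) (L : ℝ), 0 ≤ L → IsGeodesicOn γ 0 L → γ 0 = u →
      γ L ∈ p → ∃ e ∈ Icc (0:ℝ) L, γ e = a ∧ ∀ τ ∈ Ico (0:ℝ) e, γ τ ∉ p := by
  obtain ⟨w0, hw0⟩ := hTG.pieces_nonempty p hp
  obtain ⟨γ0, hγ00, hγ0d, hγ0geo⟩ := hF u w0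
  obtain ⟨e0, he0I, he0p, he0min⟩ := exists_first_entry (hTG.pieces_closed p hp) hγ0geo
    dist_nonneg (by rw [hγ0d]; exact hw0)
  refine ⟨γ0 e0, he0p, ?_⟩
  intro γ L hL hγgeo hγu hhit
  obtain ⟨e, heI, hep, hemin⟩ := exists_first_entry (hTG.pieces_closed p hp) hγgeo hL hhit
  exact ⟨e, heI, entry_unique hTG hp hγgeo hγ0geo (by rw [hγu, hγ00]) heI he0I hep he0p
    hemin he0min, hemin⟩

noncomputable def gatePt (hF : GeodesicSpace F) (hTG : IsTreeGraded P) {p : Set F}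
    (hp : p ∈ P) (u : F) : F :=
  (exists_gate hF hTG hp u).choose

lemma gate_mem (hF : GeodesicSpace F) (hTG : IsTreeGraded P) {p : Set F} (hp : p ∈ P)
    (u : F) : gatePt hF hTG hp u ∈ p :=
  (exists_gate hF hTG hp u).choose_spec.1

lemma gate_spec (hF : GeodesicSpace F) (hTG : IsTreeGraded P) {p : Set F} (hp : p ∈ P)
    (u : F) : ∀ (γ : ℝ → F) (L : ℝ), 0 ≤ L → IsGeodesicOn γ 0 L → γ 0 = u → γ L ∈ p →
      ∃ e ∈ Icc (0:ℝ) L, γ e = gatePt hF hTG hp u ∧ ∀ τ ∈ Ico (0:ℝ) e, γ τ ∉ p :=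
  (exists_gate hF hTG hp u).choose_spec.2

lemma gate_self (hF : GeodesicSpace F) (hTG : IsTreeGraded P) {p : Set F} (hp : p ∈ P)
    {u : F} (hu : u ∈ p) : gatePt hF hTG hp u = u := by
  have hconst : IsGeodesicOn (fun _ : ℝ => u) 0 0 := by
    intro τ1 hτ1 τ2 hτ2
    have e1 : τ1 = 0 := le_antisymm hτ1.2 hτ1.1
    have e2 : τ2 = 0 := le_antisymm hτ2.2 hτ2.1
    simp [e1, e2]
  obtain ⟨e, heI, hea, _⟩ := gate_spec hF hTG hp u (fun _ => u) 0 (le_refl _) hconst rfl hu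
  exact hea.symm

lemma gate_add (hF : GeodesicSpace F) (hTG : IsTreeGraded P) {p : Set F} (hp : p ∈ P)
    (u : F) {w : F} (hw : w ∈ p) :
    dist u w = dist u (gatePt hF hTG hp u) + dist (gatePt hF hTG hp u) w := by
  obtain ⟨γ, hγ0, hγd, hγgeo⟩ := hF u w
  obtain ⟨e, heI, hea, _⟩ := gate_spec hF hTG hp u γ (dist u w) dist_nonneg hγgeo hγ0
    (by rw [hγd]; exact hw)
  have d1 : dist u (gatePt hF hTG hp u) = e := by
    have h0 : dist (γ 0) (γ e) = e := by
      rw [hγgeo 0 ⟨le_refl _, dist_nonneg⟩ e heI, abs_of_nonpos (by linarith [heI.1])]; ring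
    rw [hγ0, hea] at h0
    exact h0
  have d2 : dist (gatePt hF hTG hp u) w = dist u w - e := by
    have h0 : dist (γ e) (γ (dist u w)) = dist u w - e := by
      rw [hγgeo e heI (dist u w) ⟨dist_nonneg, le_refl _⟩,
        abs_of_nonpos (by linarith [heI.2])]; ring
    rw [hea, hγd] at h0
    exact h0
  rw [d1, d2]; ring

lemma gate_nearest (hF : GeodesicSpace F) (hTG : IsTreeGraded P) {p : Set F} (hp : p ∈ P)
    (u : F) {w : F} (hw : w ∈ p) : dist u (gatePt hF hTG hp u) ≤ dist u w := by
  have := gate_add hF hTG hp u hw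
  linarith [dist_nonneg (x := gatePt hF hTG hp u) (y := w)]

lemma gate_lipschitz (hF : GeodesicSpace F) (hTG : IsTreeGraded P) {p : Set F} (hp : p ∈ P)
    (u u' : F) :
    dist (gatePt hF hTG hp u) (gatePt hF hTG hp u') ≤ 2 * dist u u' := by
  set a := gatePt hF hTG hp u with ha_def
  set b := gatePt hF hTG hp u' with hb_def
  have h1 : dist u' a = dist u' b + dist b a :=
    gate_add hF hTG hp u' (gate_mem hF hTG hp u)
  have h2 : dist u a ≤ dist u b := gate_nearest hF hTG hp u (gate_mem hF hTG hp u')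
  have tri1 : dist u' a ≤ dist u' u + dist u a := dist_triangle _ _ _
  have tri2 : dist u b ≤ dist u u' + dist u' b := dist_triangle _ _ _
  have hcomm : dist u' u = dist u u' := dist_comm _ _
  have hab : dist a b = dist b a := dist_comm _ _
  linarith

lemma entry_local_const (hTG : IsTreeGraded P) {p : Set F} (hp : p ∈ P)
    (hF : GeodesicSpace F) {u u' a b : F}
    (hu : u ∉ p) (hamem : a ∈ p) (hbmem : b ∈ p)
    (hspec_u : ∀ (γ : ℝ → F) (L : ℝ), 0 ≤ L → IsGeodesicOn γ 0 L → γ 0 = u → γ L ∈ p →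
      ∃ e ∈ Icc (0:ℝ) L, γ e = a ∧ ∀ τ ∈ Ico (0:ℝ) e, γ τ ∉ p)
    (hspec_u' : ∀ (γ : ℝ → F) (L : ℝ), 0 ≤ L → IsGeodesicOn γ 0 L → γ 0 = u' → γ L ∈ p →
      ∃ e ∈ Icc (0:ℝ) L, γ e = b ∧ ∀ τ ∈ Ico (0:ℝ) e, γ τ ∉ p)
    (hclose : dist u u' < dist u a / 3) : b = a := by
  by_contra hne
  have hρpos : 0 < dist u a := dist_pos.mpr (fun h => hu (h ▸ hamem))
  obtain ⟨γ1, hγ10, hγ1d, hγ1geo⟩ := hF u b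
  obtain ⟨e, heI, hea, hemin⟩ := hspec_u γ1 (dist u b) dist_nonneg hγ1geo hγ10
    (by rw [hγ1d]; exact hbmem)
  have he_val : e = dist u a := by
    have h0 : dist (γ1 0) (γ1 e) = e := by
      rw [hγ1geo 0 ⟨le_refl _, dist_nonneg⟩ e heI, abs_of_nonpos (by linarith [heI.1])]; ring
    rw [hγ10, hea] at h0
    exact h0.symm
  have hconv : ∀ σ ∈ Icc e (dist u b), γ1 σ ∈ p := by
    have hshift := (hγ1geo.shift e).mono
      (Icc_subset_Icc (by linarith [heI.1] : (0:ℝ) - e ≤ 0) (le_refl (dist u b - e)))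
    have h0' : (fun τ => γ1 (e + τ)) 0 ∈ p := by simp only [add_zero]; rw [hea]; exact hamem
    have hL' : (fun τ => γ1 (e + τ)) (dist u b - e) ∈ p := by
      have he' : e + (dist u b - e) = dist u b := by ring
      simp only [he']; rw [hγ1d]; exact hbmem
    have hcv := piece_convex hTG hp hshift (by linarith [heI.2]) h0' hL'
    intro σ hσ
    have hmem := hcv (σ - e) ⟨by linarith [hσ.1], by linarith [hσ.2]⟩
    simpa using hmem
  obtain ⟨h2f, hh0, hhd, hhgeo⟩ := hF u u'
  obtain ⟨β0, hβ0, hβd, hβgeo⟩ := hF u' b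
  obtain ⟨e', he'I, he'b, he'min⟩ := hspec_u' β0 (dist u' b) dist_nonneg hβgeo hβ0
    (by rw [hβd]; exact hbmem)
  have he'_val : e' = dist u' b := by
    have h0 : dist (β0 0) (β0 e') = e' := by
      rw [hβgeo 0 ⟨le_refl _, dist_nonneg⟩ e' he'I, abs_of_nonpos (by linarith [he'I.1])]; ring
    rw [hβ0, he'b] at h0
    exact h0.symm
  have hβmin : ∀ τ ∈ Ico (0:ℝ) (dist u' b), β0 τ ∉ p := by
    intro τ hτ
    exact he'min τ (by rw [he'_val]; exact hτ)
  have hz : γ1 e ∉ h2f '' Icc 0 (dist u u') ∪ β0 '' Icc 0 (dist u' b) := by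
    rintro (⟨σ, hσ, hval⟩ | ⟨σ, hσ, hval⟩)
    · have hd0 : dist (h2f 0) (h2f σ) = σ := by
        rw [hhgeo 0 ⟨le_refl _, dist_nonneg⟩ σ hσ, abs_of_nonpos (by linarith [hσ.1])]; ring
      rw [hh0, hval, hea] at hd0
      have : dist u a ≤ dist u u' := by rw [hd0]; exact hσ.2
      linarith
    · rcases eq_or_lt_of_le hσ.2 with h | h
      · apply hne
        rw [← hβd, ← h, hval, hea]
      · exact hβmin σ ⟨hσ.1, h⟩ (by rw [hval, hea]; exact hamem)
  obtain ⟨p₃, hp₃, s, t, hs0, hse, het, htL1, hsub, _C, _, _, _, _, _⟩ :=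
    triangle_gap hTG hγ1geo hhgeo hβgeo (by rw [hγ10, hh0]) (by rw [hhd, hβ0])
      (by rw [hβd, hγ1d]) dist_nonneg dist_nonneg heI hz
  have hp₃p : p₃ = p := by
    by_contra hpp
    have h1 : γ1 e ∈ p ∩ p₃ := ⟨by rw [hea]; exact hamem,
      hsub ⟨e, ⟨le_of_lt hse, le_of_lt het⟩, rfl⟩⟩
    have h2 : γ1 t ∈ p ∩ p₃ := ⟨hconv t ⟨le_of_lt het, htL1⟩,
      hsub ⟨t, ⟨le_of_lt (lt_trans hse het), le_refl _⟩, rfl⟩⟩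
    have heq := hTG.T1 p hp p₃ hp₃ (fun h => hpp h.symm) h1 h2
    have := hγ1geo.injOn ⟨heI.1, heI.2⟩ ⟨le_trans hs0 (le_of_lt (lt_trans hse het)), htL1⟩ heq
    linarith [het]
  exact hemin s ⟨hs0, hse⟩ (hp₃p ▸ hsub ⟨s, ⟨le_refl _, le_of_lt (lt_trans hse het)⟩, rfl⟩)

lemma gate_local_const (hF : GeodesicSpace F) (hTG : IsTreeGraded P) {p : Set F}
    (hp : p ∈ P) {u u' : F} (hu : u ∉ p)
    (hclose : dist u u' < dist u (gatePt hF hTG hp u) / 3) :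
    gatePt hF hTG hp u' = gatePt hF hTG hp u :=
  entry_local_const hTG hp hF hu (gate_mem hF hTG hp u) (gate_mem hF hTG hp u')
    (gate_spec hF hTG hp u) (gate_spec hF hTG hp u') hclose

end Gate2

section PathLemmas

variable {F : Type*} [MetricSpace F] {P : Set (Set F)}

lemma gate_const_on_avoid (hF : GeodesicSpace F) (hTG : IsTreeGraded P) {p : Set F}
    (hp : p ∈ P) {q : ℝ → F} (hq : Continuous q) {a b : ℝ} (hab : a ≤ b)
    (havoid : ∀ τ ∈ Icc a b, q τ ∉ p) :
    gatePt hF hTG hp (q b) = gatePt hF hTG hp (q a) := by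
  have key : ∀ τ : ℝ, ∃ ε > 0, q τ ∉ p → ∀ τ' : ℝ, dist τ' τ < ε →
      gatePt hF hTG hp (q τ') = gatePt hF hTG hp (q τ) := by
    intro τ
    by_cases hτp : q τ ∉ p
    · have hpos : 0 < dist (q τ) (gatePt hF hTG hp (q τ)) / 3 := by
        have := dist_pos.mpr (fun h : q τ = gatePt hF hTG hp (q τ) =>
          hτp (h ▸ gate_mem hF hTG hp (q τ)))
        linarith
      obtain ⟨ε, hε, hcont⟩ := Metric.continuous_iff.mp hq τ _ hpos
      exact ⟨ε, hε, fun _ τ' hτ' => gate_local_const hF hTG hp hτp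
        (by rw [dist_comm]; exact hcont τ' hτ')⟩
    · exact ⟨1, one_pos, fun h => absurd h hτp⟩
  choose ε hεpos hεprop using key
  set g0 := gatePt hF hTG hp (q a) with hg0
  set U : Set ℝ := ⋃ (τ : ℝ) (_ : τ ∈ Icc a b ∧ gatePt hF hTG hp (q τ) = g0),
    Metric.ball τ (ε τ) with hU_def
  set V : Set ℝ := ⋃ (τ : ℝ) (_ : τ ∈ Icc a b ∧ gatePt hF hTG hp (q τ) ≠ g0),
    Metric.ball τ (ε τ) with hV_def
  have hUopen : IsOpen U := isOpen_iUnion (fun τ => isOpen_iUnion (fun _ => Metric.isOpen_ball))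
  have hVopen : IsOpen V := isOpen_iUnion (fun τ => isOpen_iUnion (fun _ => Metric.isOpen_ball))
  have hdisj : Disjoint U V := by
    rw [Set.disjoint_left]
    intro x hxU hxV
    simp only [hU_def, hV_def, mem_iUnion, Metric.mem_ball] at hxU hxV
    obtain ⟨τ1, ⟨hτ1I, hτ1g⟩, hd1⟩ := hxU
    obtain ⟨τ2, ⟨hτ2I, hτ2g⟩, hd2⟩ := hxV
    have e1 := hεprop τ1 (havoid τ1 hτ1I) x hd1
    have e2 := hεprop τ2 (havoid τ2 hτ2I) x hd2
    exact hτ2g (by rw [← e2, e1, hτ1g])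
  have hcover : Icc a b ⊆ U ∪ V := by
    intro τ hτ
    by_cases hg : gatePt hF hTG hp (q τ) = g0
    · exact Or.inl (mem_iUnion.mpr ⟨τ, mem_iUnion.mpr ⟨⟨hτ, hg⟩,
        Metric.mem_ball.mpr (by rw [dist_self]; exact hεpos τ)⟩⟩)
    · exact Or.inr (mem_iUnion.mpr ⟨τ, mem_iUnion.mpr ⟨⟨hτ, hg⟩,
        Metric.mem_ball.mpr (by rw [dist_self]; exact hεpos τ)⟩⟩)
  have haU : a ∈ U := mem_iUnion.mpr ⟨a, mem_iUnion.mpr ⟨⟨⟨le_refl _, hab⟩, rfl⟩,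
    Metric.mem_ball.mpr (by rw [dist_self]; exact hεpos a)⟩⟩
  have hsubU := isPreconnected_Icc.subset_left_of_subset_union hUopen hVopen hdisj hcover
    ⟨a, ⟨le_refl _, hab⟩, haU⟩
  have hbU : b ∈ U := hsubU ⟨hab, le_refl _⟩
  simp only [hU_def, mem_iUnion, Metric.mem_ball] at hbU
  obtain ⟨τ, ⟨hτI, hτg⟩, hd⟩ := hbU
  rw [← hτg]
  exact hεprop τ (havoid τ hτI) b hd

lemma path_hits_gate (hF : GeodesicSpace F) (hTG : IsTreeGraded P) {p : Set F}
    (hp : p ∈ P) {q : ℝ → F} (hq : Continuous q) {T : ℝ} (hT0 : 0 ≤ T)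
    (hstart : q 0 ∉ p) (hhit : ∃ τ ∈ Icc (0:ℝ) T, q τ ∈ p) :
    ∃ τm ∈ Icc (0:ℝ) T, q τm = gatePt hF hTG hp (q 0) := by
  set M : Set ℝ := Icc 0 T ∩ q ⁻¹' p with hM_def
  have hMcl : IsClosed M := (isClosed_Icc).inter (IsClosed.preimage hq (hTG.pieces_closed p hp))
  have hMne : M.Nonempty := by obtain ⟨τ, hτI, hτp⟩ := hhit; exact ⟨τ, hτI, hτp⟩
  have hMbdd : BddBelow M := BddBelow.mono inter_subset_left bddBelow_Icc
  have hτm : sInf M ∈ M := hMcl.csInf_mem hMne hMbdd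
  set τm := sInf M with hτm_def
  have hτm_pos : 0 < τm := by
    rcases eq_or_lt_of_le hτm.1.1 with h | h
    · exact absurd (by rw [h]; exact hτm.2) hstart
    · exact h
  have havoid : ∀ τ ∈ Ico (0:ℝ) τm, q τ ∉ p := by
    intro τ hτ hmem
    have : τm ≤ τ := csInf_le hMbdd ⟨⟨hτ.1, le_trans (le_of_lt hτ.2) hτm.1.2⟩, hmem⟩
    linarith [hτ.2]
  have hgconst : ∀ τ ∈ Ico (0:ℝ) τm, gatePt hF hTG hp (q τ) = gatePt hF hTG hp (q 0) := by
    intro τ hτ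
    exact gate_const_on_avoid hF hTG hp hq hτ.1
      (fun σ hσ => havoid σ ⟨hσ.1, lt_of_le_of_lt hσ.2 hτ.2⟩)
  have hkey : ∀ δ > (0:ℝ), dist (q τm) (gatePt hF hTG hp (q 0)) < δ := by
    intro δ hδ
    obtain ⟨η, hη, hcont⟩ := Metric.continuous_iff.mp hq τm (δ/3) (by linarith)
    set τ := max 0 (τm - η/2) with hτ_def
    have hτI : τ ∈ Ico (0:ℝ) τm := by
      constructor
      · exact le_max_left _ _
      · apply max_lt hτm_pos
        linarith
    have hdτ : dist τ τm < η := by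
      rw [Real.dist_eq, abs_of_nonpos (by
        simp only [hτ_def]
        rcases max_cases 0 (τm - η/2) with ⟨h1, _⟩ | ⟨h1, _⟩ <;> rw [h1] <;> linarith)]
      simp only [hτ_def]
      rcases max_cases 0 (τm - η/2) with ⟨h1, _⟩ | ⟨h1, _⟩ <;> rw [h1] <;> linarith
    have hd1 : dist (q τ) (q τm) < δ/3 := hcont τ hdτ
    have hd2 : dist (q τ) (gatePt hF hTG hp (q τ)) ≤ dist (q τ) (q τm) :=
      gate_nearest hF hTG hp (q τ) hτm.2
    calc dist (q τm) (gatePt hF hTG hp (q 0))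
        ≤ dist (q τm) (q τ) + dist (q τ) (gatePt hF hTG hp (q 0)) := dist_triangle _ _ _
      _ = dist (q τm) (q τ) + dist (q τ) (gatePt hF hTG hp (q τ)) := by
          rw [hgconst τ hτI]
      _ ≤ dist (q τm) (q τ) + dist (q τ) (q τm) := by linarith
      _ < δ := by rw [dist_comm (q τm) (q τ)]; linarith
  have : dist (q τm) (gatePt hF hTG hp (q 0)) = 0 := by
    by_contra h
    have hpos : 0 < dist (q τm) (gatePt hF hTG hp (q 0)) :=
      lt_of_le_of_ne dist_nonneg (Ne.symm h)
    exact absurd (hkey _ hpos) (lt_irrefl _)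
  exact ⟨τm, hτm.1, by rwa [← dist_eq_zero]⟩

end PathLemmas

section Main

variable {F : Type*} [MetricSpace F] {P : Set (Set F)}

lemma main_pointwise (hF : GeodesicSpace F) (hTG : IsTreeGraded P) {F' : Set F}
    (hF' : IsQSubtree P F') {x y : F} (hx : x ∈ F') (hy : y ∈ F')
    {γ : ℝ → F} {D : ℝ} (hγ0 : γ 0 = x) (hγD : γ D = y) (hD : 0 ≤ D)
    (hgeo : IsGeodesicOn γ 0 D) {t0 : ℝ} (ht0 : t0 ∈ Icc 0 D) : γ t0 ∈ F' := by
  by_contra hzF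
  have hzx : γ t0 ≠ x := fun h => hzF (h ▸ hx)
  have hzy : γ t0 ≠ y := fun h => hzF (h ▸ hy)
  have hdxz : dist x (γ t0) = t0 := by
    have := hgeo 0 ⟨le_refl _, hD⟩ t0 ht0
    rw [hγ0] at this
    rw [this, abs_of_nonpos (by linarith [ht0.1])]; ring
  have hdzy : dist (γ t0) y = D - t0 := by
    have := hgeo t0 ht0 D ⟨hD, le_refl _⟩
    rw [hγD] at this
    rw [this, abs_of_nonpos (by linarith [ht0.2])]; ring
  have ht0pos : 0 < t0 := by
    rcases eq_or_lt_of_le ht0.1 with h | h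
    · exact absurd (by rw [← h, hγ0]) hzx
    · exact h
  have ht0D : t0 < D := by
    rcases eq_or_lt_of_le ht0.2 with h | h
    · exact absurd (by rw [h, hγD]) hzy
    · exact h
  -- a path in F' from x to y
  obtain ⟨qp, hqp⟩ := hF'.1.joinedIn x hx y hy
  set Q : ℝ → F := ⇑qp.extend with hQ_def
  have hQcont : Continuous Q := qp.continuous_extend
  have hQmem : ∀ τ, Q τ ∈ F' := by
    intro τ
    have : Q τ ∈ range Q := mem_range_self τ
    rw [hQ_def, Path.extend_range] at this
    obtain ⟨t, ht⟩ := this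
    show qp.extend τ ∈ F'
    rw [← ht]
    exact hqp t
  have hQ0 : Q 0 = x := qp.extend_zero
  have hQ1 : Q 1 = y := qp.extend_one
  have hzQ : ∀ τ, γ t0 ≠ Q τ := fun τ h => hzF (h ▸ hQmem τ)
  by_cases hA : ∃ p, ∃ hp : p ∈ P, γ t0 ∈ p ∧
      gatePt hF hTG hp x ≠ gatePt hF hTG hp y
  · -- Case A : a piece through z with different gates of x and y
    obtain ⟨p, hp, hzp, hgne⟩ := hA
    have hhit : ∃ τ ∈ Icc (0:ℝ) 1, Q τ ∈ p := by
      by_contra hnone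
      push_neg at hnone
      have := gate_const_on_avoid hF hTG hp hQcont zero_le_one hnone
      rw [hQ0, hQ1] at this
      exact hgne this.symm
    have hgx : gatePt hF hTG hp x ∈ p ∩ F' := by
      by_cases hxp : x ∈ p
      · rw [gate_self hF hTG hp hxp]; exact ⟨hxp, hx⟩
      · obtain ⟨τm, hτmI, hτmg⟩ := path_hits_gate hF hTG hp hQcont zero_le_one
          (by rw [hQ0]; exact hxp) hhit
        rw [hQ0] at hτmg
        exact ⟨gate_mem hF hTG hp x, hτmg ▸ hQmem τm⟩
    have hgy : gatePt hF hTG hp y ∈ p ∩ F' := by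
      by_cases hyp : y ∈ p
      · rw [gate_self hF hTG hp hyp]; exact ⟨hyp, hy⟩
      · set Q' : ℝ → F := fun τ => Q (1 - τ) with hQ'_def
        have hQ'cont : Continuous Q' := hQcont.comp (continuous_const.sub continuous_id)
        have hQ'0 : Q' 0 = y := by simp [hQ'_def, hQ1]
        have hhit' : ∃ τ ∈ Icc (0:ℝ) 1, Q' τ ∈ p := by
          obtain ⟨τ, hτI, hτp⟩ := hhit
          exact ⟨1 - τ, ⟨by linarith [hτI.2], by linarith [hτI.1]⟩,
            by simp only [hQ'_def]; rw [show 1 - (1 - τ) = τ by ring]; exact hτp⟩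
        obtain ⟨τm, hτmI, hτmg⟩ := path_hits_gate hF hTG hp hQ'cont zero_le_one
          (by rw [hQ'0]; exact hyp) hhit'
        rw [hQ'0] at hτmg
        exact ⟨gate_mem hF hTG hp y, hτmg ▸ hQmem (1 - τm)⟩
    have hpsub : p ⊆ F' := hF'.2 p hp
      ⟨gatePt hF hTG hp x, ⟨hgx.1, hgx.2⟩, gatePt hF hTG hp y, ⟨hgy.1, hgy.2⟩, hgne⟩
    exact hzF (hpsub hzp)
  · -- Case B : all pieces through z have equal gates; z is a cut point
    push_neg at hA
    set A : Set ℝ := {τ | dist x (γ t0) + dist (γ t0) (Q τ) = dist x (Q τ)} with hA_def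
    have hAclosed : IsClosed A := by
      apply isClosed_eq
      · exact continuous_const.add (Continuous.dist continuous_const hQcont)
      · exact Continuous.dist continuous_const hQcont
    have hAopen : IsOpen A := by
      rw [Metric.isOpen_iff]
      intro τ hτA
      have hr : 0 < dist (γ t0) (Q τ) := dist_pos.mpr (hzQ τ)
      obtain ⟨η, hη, hcont⟩ := Metric.continuous_iff.mp hQcont τ
        (dist (γ t0) (Q τ) / 2) (by linarith)
      refine ⟨η, hη, ?_⟩
      intro τ' hτ'
      rw [Metric.mem_ball] at hτ'
      have hd' : dist (Q τ') (Q τ) < dist (γ t0) (Q τ) / 2 := hcont τ' hτ'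
      -- set up the geodesic triangle x, Q τ, Q τ'
      obtain ⟨k, hk0, hkd, hkgeo⟩ := hF (γ t0) (Q τ)
      set L1 : ℝ := t0 + dist (γ t0) (Q τ) with hL1_def
      have hL1add : dist x (Q τ) = L1 := by
        have h' : dist x (γ t0) + dist (γ t0) (Q τ) = dist x (Q τ) := hτA
        rw [hdxz] at h'
        rw [hL1_def]
        linarith
      set g1 : ℝ → F := fun σ => if σ ≤ t0 then γ σ else k (σ - t0) with hg1_def
      have hg1geo : IsGeodesicOn g1 0 L1 := by
        have := IsGeodesicOn.concat (hgeo.mono (Icc_subset_Icc (le_refl _) ht0.2))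
          hkgeo (le_of_lt ht0pos) dist_nonneg hk0.symm
          (by rw [hγ0, hkd, hL1add])
        exact this
      have hg10 : g1 0 = x := by rw [hg1_def]; simp [le_of_lt ht0pos, hγ0]
      have hg1L : g1 L1 = Q τ := by
        rw [hg1_def]
        simp only
        rw [if_neg (by simp only [hL1_def]; linarith)]
        rw [show L1 - t0 = dist (γ t0) (Q τ) by rw [hL1_def]; ring, hkd]
      have hg1t0 : g1 t0 = γ t0 := by rw [hg1_def]; simp
      obtain ⟨g2, hg20, hg2d, hg2geo⟩ := hF x (Q τ')
      obtain ⟨h3, hh30, hh3d, hh3geo⟩ := hF (Q τ') (Q τ)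
      by_cases hzg2 : γ t0 ∈ g2 '' Icc 0 (dist x (Q τ'))
      · -- z is on the geodesic from x to Q τ', hence τ' ∈ A
        obtain ⟨σ, hσ, hval⟩ := hzg2
        have d1 : dist x (γ t0) = σ := by
          have h0 := hg2geo 0 ⟨le_refl _, dist_nonneg⟩ σ hσ
          rw [hg20, hval, abs_of_nonpos (by linarith [hσ.1])] at h0
          rw [h0]; ring
        have d2 : dist (γ t0) (Q τ') = dist x (Q τ') - σ := by
          have h0 := hg2geo σ hσ (dist x (Q τ')) ⟨dist_nonneg, le_refl _⟩
          rw [hval, hg2d, abs_of_nonpos (by linarith [hσ.2])] at h0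
          rw [h0]; ring
        show dist x (γ t0) + dist (γ t0) (Q τ') = dist x (Q τ')
        rw [d1, d2]; ring
      · exfalso
        have hz3 : γ t0 ∉ h3 '' Icc 0 (dist (Q τ') (Q τ)) := by
          rintro ⟨σ, hσ, hval⟩
          have hd3 : dist (h3 σ) (Q τ) ≤ dist (Q τ') (Q τ) := by
            have h0 := hh3geo σ hσ (dist (Q τ') (Q τ)) ⟨dist_nonneg, le_refl _⟩
            rw [hh3d, abs_of_nonpos (by linarith [hσ.2])] at h0
            rw [h0]; linarith [hσ.1]
          rw [hval] at hd3
          have hcm : dist (Q τ') (Q τ) = dist (Q τ) (Q τ') := dist_comm _ _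
          linarith [hd3, hd', hcm, hr]
        have hznot : g1 t0 ∉ g2 '' Icc 0 (dist x (Q τ')) ∪ h3 '' Icc 0 (dist (Q τ') (Q τ)) := by
          rw [hg1t0]
          rintro (h | h)
          · exact hzg2 h
          · exact hz3 h
        obtain ⟨p₄, hp₄, s, t, hs0, hst0, ht0t, htL1, hsub, _, _, _, _, _, _⟩ :=
          triangle_gap hTG hg1geo hg2geo hh3geo (by rw [hg10, hg20]) (by rw [hg2d, hh30])
            (by rw [hh3d, hg1L]) dist_nonneg dist_nonneg
            ⟨le_of_lt ht0pos, by rw [hL1_def]; linarith [dist_nonneg (x := γ t0) (y := Q τ)]⟩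
            hznot
        have hzp₄ : γ t0 ∈ p₄ := by
          rw [← hg1t0]
          exact hsub ⟨t0, ⟨le_of_lt hst0, le_of_lt ht0t⟩, rfl⟩
        -- gate of x in p₄ is close to x
        obtain ⟨e, heI, hea, hemin⟩ := gate_spec hF hTG hp₄ x g1 t
          (le_trans hs0 (le_of_lt (lt_trans hst0 ht0t)))
          (hg1geo.mono (Icc_subset_Icc (le_refl _) htL1)) hg10
          (hsub ⟨t, ⟨le_of_lt (lt_trans hst0 ht0t), le_refl _⟩, rfl⟩)
        have hes : e ≤ s := by
          by_contra hcon
          push_neg at hcon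
          exact hemin s ⟨hs0, hcon⟩ (hsub ⟨s, ⟨le_refl _, le_of_lt (lt_trans hst0 ht0t)⟩, rfl⟩)
        have hdxgate : dist x (gatePt hF hTG hp₄ x) = e := by
          have h0 := hg1geo 0 ⟨le_refl _, by rw [hL1_def]; positivity⟩ e
            ⟨heI.1, le_trans heI.2 htL1⟩
          rw [hg10, hea, abs_of_nonpos (by linarith [heI.1])] at h0
          rw [h0]; ring
        -- gate of y in p₄ is far from x
        set γy : ℝ → F := fun σ => γ (D - σ) with hγy_def
        have hγygeo : IsGeodesicOn γy 0 (D - t0) := by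
          have h' := hgeo.reflect D
          rw [sub_self] at h'
          exact h'.mono (Icc_subset_Icc (le_refl _) (by linarith))
        have hγy0 : γy 0 = y := by rw [hγy_def]; simp [hγD]
        have hγyt0 : γy (D - t0) = γ t0 := by
          rw [hγy_def]; simp only
          rw [show D - (D - t0) = t0 by ring]
        obtain ⟨e', he'I, he'b, _⟩ := gate_spec hF hTG hp₄ y γy (D - t0)
          (by linarith) hγygeo hγy0 (by rw [hγyt0]; exact hzp₄)
        have hgeq := hA p₄ hp₄ hzp₄
        rw [← hgeq] at he'b
        have hdxgate2 : dist x (gatePt hF hTG hp₄ x) = D - e' := by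
          have h0 := hgeo 0 ⟨le_refl _, hD⟩ (D - e') ⟨by linarith [he'I.2], by linarith [he'I.1]⟩
          rw [hγ0] at h0
          have : γ (D - e') = gatePt hF hTG hp₄ x := by
            rw [← he'b, hγy_def]
          rw [this, abs_of_nonpos (by linarith [he'I.1, he'I.2])] at h0
          rw [h0]; ring
        have : D - e' ≤ s := by rw [← hdxgate2, hdxgate]; exact hes
        have : t0 ≤ D - e' := by linarith [he'I.2]
        linarith
    have h1A : (1:ℝ) ∈ A := by
      show dist x (γ t0) + dist (γ t0) (Q 1) = dist x (Q 1)
      rw [hQ1, hdxz, hdzy]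
      have : dist x y = D := by
        have := hgeo 0 ⟨le_refl _, hD⟩ D ⟨hD, le_refl _⟩
        rw [hγ0, hγD, abs_of_nonpos (by linarith)] at this
        rw [this]; ring
      rw [this]; ring
    have h0A : (0:ℝ) ∉ A := by
      intro h
      have h' : dist x (γ t0) + dist (γ t0) (Q 0) = dist x (Q 0) := h
      rw [hQ0, dist_self] at h'
      have : dist (γ t0) x = 0 := by linarith [dist_comm x (γ t0) ▸ h', dist_nonneg (x := x) (y := γ t0)]
      exact hzx (dist_eq_zero.mp this)
    rcases isClopen_iff.mp ⟨hAclosed, hAopen⟩ with h | h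
    · exact (h ▸ h1A : (1:ℝ) ∈ (∅ : Set ℝ))
    · exact h0A (h ▸ mem_univ 0)

end Main

/-- a `Q`-subtree `F'` is totally geodesic; consequently for `y ∈ F'` and
`x ∈ F`, the intersection of any geodesic `[y,x]` with `F'` is a closed subsegment `[y,z]`
or a half-open subinterval `[y,z[`. -/
theorem stmt_13 {F : Type*} [MetricSpace F] [CompleteSpace F] (hF : GeodesicSpace F)
    (P : Set (Set F)) (hTG : IsTreeGraded P) (F' : Set F) (hF' : IsQSubtree P F') :
    (∀ x ∈ F', ∀ y ∈ F', ∀ γ : ℝ → F, γ 0 = x → γ (dist x y) = y →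
      IsGeodesicOn γ 0 (dist x y) → γ '' Set.Icc 0 (dist x y) ⊆ F') ∧
    (∀ y ∈ F', ∀ x : F, ∀ γ : ℝ → F, γ 0 = y → γ (dist y x) = x →
      IsGeodesicOn γ 0 (dist y x) →
      ∃ z : ℝ, 0 ≤ z ∧ z ≤ dist y x ∧
        ({t : ℝ | t ∈ Set.Icc 0 (dist y x) ∧ γ t ∈ F'} = Set.Icc 0 z ∨
         {t : ℝ | t ∈ Set.Icc 0 (dist y x) ∧ γ t ∈ F'} = Set.Ico 0 z)) := by
  have part1 : ∀ x ∈ F', ∀ y ∈ F', ∀ γ : ℝ → F, γ 0 = x → γ (dist x y) = y →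
      IsGeodesicOn γ 0 (dist x y) → γ '' Set.Icc 0 (dist x y) ⊆ F' := by
    intro x hx y hy γ hγ0 hγD hgeo
    rintro _ ⟨t0, ht0, rfl⟩
    exact main_pointwise hF hTG hF' hx hy hγ0 hγD dist_nonneg hgeo ht0
  refine ⟨part1, ?_⟩
  intro y hy x γ hγ0 hγD hgeo
  have hD : 0 ≤ dist y x := dist_nonneg
  have hdown : ∀ t, t ∈ Set.Icc 0 (dist y x) ∧ γ t ∈ F' → ∀ u ∈ Icc (0:ℝ) t, γ u ∈ F' := by
    intro t ht u hu
    have huIcc : u ∈ Icc (0:ℝ) t := hu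
    exact main_pointwise hF hTG hF' hy ht.2 (γ := γ) (D := t) hγ0 rfl ht.1.1
      (hgeo.mono (Icc_subset_Icc (le_refl _) ht.1.2)) huIcc
  have h0S : (0:ℝ) ∈ {t : ℝ | t ∈ Set.Icc 0 (dist y x) ∧ γ t ∈ F'} :=
    ⟨⟨le_refl _, hD⟩, by rw [hγ0]; exact hy⟩
  have hbdd : BddAbove {t : ℝ | t ∈ Set.Icc 0 (dist y x) ∧ γ t ∈ F'} :=
    ⟨dist y x, fun t ht => ht.1.2⟩
  set S := {t : ℝ | t ∈ Set.Icc 0 (dist y x) ∧ γ t ∈ F'} with hS_def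
  set z := sSup S with hz_def
  have hz0 : 0 ≤ z := le_csSup hbdd h0S
  have hzD : z ≤ dist y x := csSup_le ⟨0, h0S⟩ (fun t ht => ht.1.2)
  have hsub : S ⊆ Icc 0 z := fun t ht => ⟨ht.1.1, le_csSup hbdd ht⟩
  have hIco : Ico 0 z ⊆ S := by
    intro u hu
    obtain ⟨t, htS, hut⟩ := exists_lt_of_lt_csSup ⟨0, h0S⟩ hu.2
    exact ⟨⟨hu.1, le_trans (le_of_lt hut) htS.1.2⟩, hdown t htS u ⟨hu.1, le_of_lt hut⟩⟩
  refine ⟨z, hz0, hzD, ?_⟩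
  by_cases hzS : z ∈ S
  · left
    apply Set.eq_of_subset_of_subset hsub
    intro u hu
    rcases eq_or_lt_of_le hu.2 with h | h
    · rw [h]; exact hzS
    · exact hIco ⟨hu.1, h⟩
  · right
    apply Set.eq_of_subset_of_subset
    · intro t ht
      exact ⟨ht.1.1, lt_of_le_of_ne (le_csSup hbdd ht) (fun h => hzS (by rw [← h]; exact ht))⟩
    · exact hIco
end

section
/- Let F' be a good Q-subtree of a tree-graded space F and let t belong to the closure of F' in F. Then F' ∪ {t} is also a good Q-subtree of F. -/
/-- `γ` is a geodesic from `s` to `x` lying in `C ∪ {s}`. -/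
def IsGeodesicFromTo {F : Type*} [MetricSpace F] (γ : ℝ → F) (s x : F) (C : Set F) : Prop :=
  γ 0 = s ∧ γ (dist s x) = x ∧ IsGeodesicOn γ 0 (dist s x) ∧
    γ '' Set.Icc 0 (dist s x) ⊆ C ∪ {s}

/-- The set of connected components of `F \ {s}`. -/
def componentsOff {F : Type*} [MetricSpace F] (s : F) : Set (Set F) :=
  {C | ∃ y : F, y ≠ s ∧ C = connectedComponentIn ({s}ᶜ : Set F) y}

/-- A component `C` of `F \ {s}` is non-limit if some piece intersects every geodesic
from `s` into `C ∪ {s}` in a nontrivial initial subsegment. -/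
def IsNonLimitComponent {F : Type*} [MetricSpace F] (P : Set (Set F)) (s : F)
    (C : Set F) : Prop :=
  ∃ p ∈ P, ∀ x ∈ C, ∀ γ : ℝ → F, IsGeodesicFromTo γ s x C →
    ∃ u : ℝ, 0 < u ∧ u ≤ dist s x ∧
      p ∩ γ '' Set.Icc 0 (dist s x) = γ '' Set.Icc 0 u

/-- `t` is a point of type I for `F'`: `F'` meets every connected component of
`F \ {t}`. -/
def TypeI {F : Type*} [MetricSpace F] (F' : Set F) (t : F) : Prop :=
  ∀ C ∈ componentsOff t, (F' ∩ C).Nonempty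

/-- `t` is a point of type II for `F'`: `F'` meets nontrivially at most `2` limit
connected components of `F \ {t}` and at most `2` pieces containing `t`. -/
def TypeII {F : Type*} [MetricSpace F] (P : Set (Set F)) (F' : Set F) (t : F) : Prop :=
  {C | C ∈ componentsOff t ∧ ¬ IsNonLimitComponent P t C ∧ (F' ∩ C).Nonempty}.encard ≤ 2 ∧
  {p | p ∈ P ∧ t ∈ p ∧ ∃ z ∈ F' ∩ p, z ≠ t}.encard ≤ 2

/-- A good `Q`-subtree: every point of it is of type I or of type II. -/
def IsGoodQSubtree {F : Type*} [MetricSpace F] (P : Set (Set F)) (F' : Set F) : Prop :=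
  IsQSubtree P F' ∧ ∀ t ∈ F', TypeI F' t ∨ TypeII P F' t


namespace Stmt14Aux

open Set Metric

variable {F : Type*} [MetricSpace F]

/-! ### Basic geodesic helpers -/

theorem geo_inj {γ : ℝ → F} {l : ℝ} (hγ : IsGeodesicOn γ 0 l) {s t : ℝ}
    (hs : s ∈ Icc 0 l) (ht : t ∈ Icc 0 l) (h : γ s = γ t) : s = t := by
  have := hγ s hs t ht
  rw [h, dist_self] at this
  have := abs_eq_zero.mp this.symm
  linarith

theorem geo_dist0 {γ : ℝ → F} {l : ℝ} (hγ : IsGeodesicOn γ 0 l) {s : ℝ}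
    (hs : s ∈ Icc 0 l) : dist (γ 0) (γ s) = s := by
  have h0 : (0:ℝ) ∈ Icc 0 l := ⟨le_refl _, hs.1.trans hs.2⟩
  have := hγ 0 h0 s hs
  rw [this, abs_sub_comm]
  rw [sub_zero, abs_of_nonneg hs.1]

theorem geo_cont {γ : ℝ → F} {l : ℝ} (hγ : IsGeodesicOn γ 0 l) :
    ContinuousOn γ (Icc 0 l) := by
  refine (LipschitzOnWith.of_dist_le_mul (K := 1) fun s hs t ht => ?_).continuousOn
  rw [hγ s hs t ht]
  simp [Real.dist_eq]

theorem geo_mono {γ : ℝ → F} {l l' : ℝ} (hγ : IsGeodesicOn γ 0 l) (h1 : l' ≤ l) :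
    IsGeodesicOn γ 0 l' := fun s hs t ht =>
  hγ s ⟨hs.1, hs.2.trans h1⟩ t ⟨ht.1, ht.2.trans h1⟩

theorem geo_shift {γ : ℝ → F} {l a l' : ℝ} (hγ : IsGeodesicOn γ 0 l)
    (ha : 0 ≤ a) (hl' : a + l' ≤ l) : IsGeodesicOn (fun s => γ (a + s)) 0 l' := by
  intro s hs t ht
  have h1 : a + s ∈ Icc 0 l := ⟨by linarith [hs.1], by linarith [hs.2]⟩
  have h2 : a + t ∈ Icc 0 l := ⟨by linarith [ht.1], by linarith [ht.2]⟩
  rw [hγ _ h1 _ h2]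
  congr 1
  ring

theorem geo_rev {γ : ℝ → F} {l b l' : ℝ} (hγ : IsGeodesicOn γ 0 l)
    (hb : b ≤ l) (hl' : l' ≤ b) : IsGeodesicOn (fun s => γ (b - s)) 0 l' := by
  intro s hs t ht
  have h1 : b - s ∈ Icc 0 l := ⟨by linarith [hs.2], by linarith [hs.1]⟩
  have h2 : b - t ∈ Icc 0 l := ⟨by linarith [ht.2], by linarith [ht.1]⟩
  rw [hγ _ h1 _ h2, abs_sub_comm]
  congr 1
  ring

theorem geo_const (x : F) : IsGeodesicOn (fun _ => x) 0 0 := by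
  intro s hs t ht
  have hs' : s = 0 := le_antisymm hs.2 hs.1
  have ht' : t = 0 := le_antisymm ht.2 ht.1
  simp [hs', ht']

theorem geo_image_compact {γ : ℝ → F} {l : ℝ} (hγ : IsGeodesicOn γ 0 l) :
    IsCompact (γ '' Icc 0 l) := isCompact_Icc.image_of_continuousOn (geo_cont hγ)

theorem geo_image_closed {γ : ℝ → F} {l : ℝ} (hγ : IsGeodesicOn γ 0 l) :
    IsClosed (γ '' Icc 0 l) := (geo_image_compact hγ).isClosed

theorem rev_image {γ : ℝ → F} {L : ℝ} (hL : 0 ≤ L) :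
    (fun s => γ (L - s)) '' Icc 0 L = γ '' Icc 0 L := by
  ext w
  constructor
  · rintro ⟨s, hs, rfl⟩
    exact ⟨L - s, ⟨by linarith [hs.2], by linarith [hs.1]⟩, rfl⟩
  · rintro ⟨s, hs, rfl⟩
    exact ⟨L - s, ⟨by linarith [hs.2], by linarith [hs.1]⟩, by simp⟩

theorem joinedIn_of_geo {γ : ℝ → F} {l : ℝ} {S : Set F} (hl : 0 ≤ l)
    (hγ : IsGeodesicOn γ 0 l) (him : γ '' Icc 0 l ⊆ S) : JoinedIn S (γ 0) (γ l) := by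
  have hmem : ∀ s : unitInterval, (s : ℝ) * l ∈ Icc 0 l := fun s =>
    ⟨mul_nonneg s.2.1 hl, by nlinarith [s.2.1, s.2.2]⟩
  refine ⟨⟨⟨fun s => γ ((s : ℝ) * l), ?_⟩, ?_, ?_⟩, ?_⟩
  · exact (geo_cont hγ).comp_continuous (by continuity) hmem
  · simp
  · simp
  · intro s
    exact him ⟨(s : ℝ) * l, hmem s, rfl⟩

/-! ### The gluing lemma : building simple geodesic triangles -/

theorem glue3 {P : Set (Set F)} (hTG : IsTreeGraded P)
    {f g h : ℝ → F} {l1 l2 l3 : ℝ}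
    (h1 : 0 ≤ l1) (h2 : 0 ≤ l2) (h3 : 0 ≤ l3) (hL : 0 < l1 + l2 + l3)
    (hf : IsGeodesicOn f 0 l1) (hg : IsGeodesicOn g 0 l2) (hh : IsGeodesicOn h 0 l3)
    (e1 : f l1 = g 0) (e2 : g l2 = h 0) (e3 : h l3 = f 0)
    (Hfg : ∀ s ∈ Ico 0 l1, ∀ t ∈ Ico 0 l2, f s ≠ g t)
    (Hgh : ∀ s ∈ Ico 0 l2, ∀ t ∈ Ico 0 l3, g s ≠ h t)
    (Hfh : ∀ s ∈ Ico 0 l1, ∀ t ∈ Ico 0 l3, f s ≠ h t) :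
    ∃ p ∈ P, f '' Icc 0 l1 ⊆ p ∧ g '' Icc 0 l2 ⊆ p ∧ h '' Icc 0 l3 ⊆ p := by
  set γ : ℝ → F := fun s => if s < l1 then f s else if s < l1 + l2 then g (s - l1)
    else h (s - l1 - l2) with hγdef
  have hγf : ∀ s ∈ Icc 0 l1, γ s = f s := by
    intro s hs
    show (if s < l1 then f s else if s < l1 + l2 then g (s - l1) else h (s - l1 - l2)) = f s
    by_cases hc : s < l1
    · simp only [if_pos hc]
    · have hs1 : s = l1 := le_antisymm hs.2 (not_lt.mp hc)
      subst hs1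
      by_cases hc2 : s < s + l2
      · simp only [if_neg hc, if_pos hc2, sub_self]
        exact e1.symm
      · have hl2 : l2 = 0 := le_antisymm (by linarith [not_lt.mp hc2]) h2
        simp only [if_neg hc, if_neg hc2]
        rw [show s - s - l2 = -l2 by ring, hl2, neg_zero, ← e2, hl2]
        exact e1.symm
  have hγg : ∀ s ∈ Icc 0 l2, γ (l1 + s) = g s := by
    intro s hs
    show (if l1 + s < l1 then f (l1 + s) else if l1 + s < l1 + l2 then g (l1 + s - l1)
      else h (l1 + s - l1 - l2)) = g s
    have hc : ¬ (l1 + s < l1) := by linarith [hs.1]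
    by_cases hc2 : l1 + s < l1 + l2
    · simp only [if_neg hc, if_pos hc2, add_sub_cancel_left]
    · have hs1 : s = l2 := le_antisymm hs.2 (by linarith [not_lt.mp hc2])
      subst hs1
      simp only [if_neg hc, if_neg hc2]
      rw [show l1 + s - l1 - s = 0 by ring]
      exact e2.symm
  have hγh : ∀ s ∈ Icc 0 l3, γ (l1 + l2 + s) = h s := by
    intro s hs
    show (if l1 + l2 + s < l1 then f (l1 + l2 + s) else if l1 + l2 + s < l1 + l2 then
      g (l1 + l2 + s - l1) else h (l1 + l2 + s - l1 - l2)) = h s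
    have hc : ¬ (l1 + l2 + s < l1) := by linarith [hs.1]
    have hc2 : ¬ (l1 + l2 + s < l1 + l2) := by linarith [hs.1]
    simp only [if_neg hc, if_neg hc2]
    rw [show l1 + l2 + s - l1 - l2 = s by ring]
  have hrep : ∀ s ∈ Ico 0 (l1 + l2 + l3), (s ∈ Ico 0 l1 ∧ γ s = f s) ∨
      (∃ r ∈ Ico 0 l2, s = l1 + r ∧ γ s = g r) ∨
      (∃ r ∈ Ico 0 l3, s = l1 + l2 + r ∧ γ s = h r) := by
    intro s hs
    by_cases c1 : s < l1
    · exact Or.inl ⟨⟨hs.1, c1⟩, hγf s ⟨hs.1, le_of_lt c1⟩⟩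
    · by_cases c2 : s < l1 + l2
      · refine Or.inr (Or.inl ⟨s - l1, ⟨by linarith [not_lt.mp c1], by linarith⟩, by ring, ?_⟩)
        have := hγg (s - l1) ⟨by linarith [not_lt.mp c1], by linarith⟩
        rwa [show l1 + (s - l1) = s by ring] at this
      · refine Or.inr (Or.inr ⟨s - l1 - l2, ⟨by linarith [not_lt.mp c2],
          by linarith [hs.2]⟩, by ring, ?_⟩)
        have := hγh (s - l1 - l2) ⟨by linarith [not_lt.mp c2], by linarith [hs.2]⟩
        rwa [show l1 + l2 + (s - l1 - l2) = s by ring] at this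
  have htri : SimpleGeodesicTriangle γ l1 (l1 + l2) (l1 + l2 + l3) := by
    refine ⟨hL, h1, by linarith, by linarith, ?_, ?_, ?_, ?_, ?_⟩
    · intro s hs t ht
      rw [hγf s hs, hγf t ht]
      exact hf s hs t ht
    · intro s hs t ht
      have hs' : s - l1 ∈ Icc 0 l2 := ⟨by linarith [hs.1], by linarith [hs.2]⟩
      have ht' : t - l1 ∈ Icc 0 l2 := ⟨by linarith [ht.1], by linarith [ht.2]⟩
      have es : γ s = g (s - l1) := by
        have := hγg (s - l1) hs'; rwa [show l1 + (s - l1) = s by ring] at this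
      have et : γ t = g (t - l1) := by
        have := hγg (t - l1) ht'; rwa [show l1 + (t - l1) = t by ring] at this
      rw [es, et, hg _ hs' _ ht']
      congr 1
      ring
    · intro s hs t ht
      have hs2 : s ≤ l1 + l2 + l3 := hs.2
      have ht2 : t ≤ l1 + l2 + l3 := ht.2
      have hs' : s - l1 - l2 ∈ Icc 0 l3 := ⟨by linarith [hs.1], by linarith⟩
      have ht' : t - l1 - l2 ∈ Icc 0 l3 := ⟨by linarith [ht.1], by linarith⟩
      have es : γ s = h (s - l1 - l2) := by
        have := hγh (s - l1 - l2) hs'; rwa [show l1 + l2 + (s - l1 - l2) = s by ring] at this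
      have et : γ t = h (t - l1 - l2) := by
        have := hγh (t - l1 - l2) ht'; rwa [show l1 + l2 + (t - l1 - l2) = t by ring] at this
      rw [es, et, hh _ hs' _ ht']
      congr 1
      ring
    · have hγ0 : γ 0 = f 0 := hγf 0 ⟨le_refl _, h1⟩
      have hγL : γ (l1 + l2 + l3) = h l3 := hγh l3 ⟨h3, le_refl _⟩
      rw [hγ0, hγL, e3]
    · intro s hs t ht heq
      rcases hrep s hs with ⟨hsm, hse⟩ | ⟨r, hrm, rfl, hse⟩ | ⟨r, hrm, rfl, hse⟩ <;>
        rcases hrep t ht with ⟨htm, hte⟩ | ⟨r', hr'm, rfl, hte⟩ | ⟨r', hr'm, rfl, hte⟩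
      · exact geo_inj hf (Ico_subset_Icc_self hsm) (Ico_subset_Icc_self htm)
          (by rw [← hse, ← hte, heq])
      · exact absurd (by rw [← hse, ← hte, heq]) (Hfg s hsm r' hr'm)
      · exact absurd (by rw [← hse, ← hte, heq]) (Hfh s hsm r' hr'm)
      · exact absurd (by rw [← hse, ← hte, ← heq]) (Hfg t htm r hrm)
      · have : r = r' := geo_inj hg (Ico_subset_Icc_self hrm) (Ico_subset_Icc_self hr'm)
          (by rw [← hse, ← hte, heq])
        rw [this]
      · exact absurd (by rw [← hse, ← hte, heq]) (Hgh r hrm r' hr'm)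
      · exact absurd (by rw [← hse, ← hte, ← heq]) (Hfh t htm r hrm)
      · exact absurd (by rw [← hse, ← hte, ← heq]) (Hgh r' hr'm r hrm)
      · have : r = r' := geo_inj hh (Ico_subset_Icc_self hrm) (Ico_subset_Icc_self hr'm)
          (by rw [← hse, ← hte, heq])
        rw [this]
  obtain ⟨p, hp, hsub⟩ := hTG.T2 γ l1 (l1 + l2) (l1 + l2 + l3) htri
  refine ⟨p, hp, ?_, ?_, ?_⟩
  · rintro _ ⟨s, hs, rfl⟩
    exact hsub ⟨s, ⟨hs.1, hs.2.trans (by linarith)⟩, hγf s hs⟩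
  · rintro _ ⟨s, hs, rfl⟩
    exact hsub ⟨l1 + s, ⟨by linarith [hs.1], by linarith [hs.2]⟩, hγg s hs⟩
  · rintro _ ⟨s, hs, rfl⟩
    exact hsub ⟨l1 + l2 + s, ⟨by linarith [hs.1], by linarith [hs.2]⟩, hγh s hs⟩

/-! ### Surgery lemmas -/

theorem sameseg_core {P : Set (Set F)} (hTG : IsTreeGraded P)
    {σ τ : ℝ → F} {l lτ a b ra rb : ℝ}
    (hσ : IsGeodesicOn σ 0 l) (hτ : IsGeodesicOn τ 0 lτ)
    (hab : a < b) (ha : 0 ≤ a) (hb : b ≤ l)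
    (hra : ra ∈ Icc 0 lτ) (hrb : rb ∈ Icc 0 lτ)
    (hσa : σ a = τ ra) (hσb : σ b = τ rb)
    (hmiss : ∀ s ∈ Ioo a b, σ s ∉ τ '' Icc 0 lτ) (hr : ra < rb) :
    ∃ p ∈ P, σ '' Icc a b ⊆ p := by
  have hra1 := hra.1; have hra2 := hra.2; have hrb1 := hrb.1; have hrb2 := hrb.2
  obtain ⟨p, hp, hsubf, hsubg, -⟩ := glue3 hTG
    (f := fun s => σ (a + s)) (g := fun s => τ (rb - s)) (h := fun _ => σ a)
    (l1 := b - a) (l2 := rb - ra) (l3 := 0)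
    (by linarith) (by linarith) le_rfl (by linarith)
    (geo_shift hσ ha (by linarith))
    (geo_rev hτ hrb.2 (by linarith))
    (geo_const (σ a))
    (by show σ (a + (b - a)) = τ (rb - 0); rw [show a + (b - a) = b by ring, sub_zero]; exact hσb)
    (by show τ (rb - (rb - ra)) = σ a; rw [show rb - (rb - ra) = ra by ring]; exact hσa.symm)
    (by show σ a = σ (a + 0); rw [add_zero])
    (by
      intro s hs u hu heq
      have heq' : σ (a + s) = τ (rb - u) := heq
      have hmem : rb - u ∈ Icc 0 lτ := ⟨by linarith [hu.2], by linarith [hu.1]⟩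
      rcases eq_or_lt_of_le hs.1 with h0 | h0
      · rw [← h0, add_zero] at heq'
        have : ra = rb - u := geo_inj hτ hra hmem (hσa.symm.trans heq')
        have := hu.2
        linarith
      · exact hmiss (a + s) ⟨by linarith, by linarith [hs.2]⟩ ⟨rb - u, hmem, heq'.symm⟩)
    (by intro s hs u hu; have := hu.1; have := hu.2; linarith)
    (by intro s hs u hu; have := hu.1; have := hu.2; linarith)
  refine ⟨p, hp, ?_⟩
  rintro _ ⟨s, hs, rfl⟩
  refine hsubf ⟨s - a, ⟨by linarith [hs.1], by linarith [hs.2]⟩, ?_⟩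
  show σ (a + (s - a)) = σ s
  rw [show a + (s - a) = s by ring]

theorem sameseg {P : Set (Set F)} (hTG : IsTreeGraded P)
    {σ τ : ℝ → F} {l lτ a b ra rb : ℝ}
    (hσ : IsGeodesicOn σ 0 l) (hτ : IsGeodesicOn τ 0 lτ) (hlτ : 0 ≤ lτ)
    (hab : a < b) (ha : 0 ≤ a) (hb : b ≤ l)
    (hra : ra ∈ Icc 0 lτ) (hrb : rb ∈ Icc 0 lτ)
    (hσa : σ a = τ ra) (hσb : σ b = τ rb)
    (hmiss : ∀ s ∈ Ioo a b, σ s ∉ τ '' Icc 0 lτ) :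
    ∃ p ∈ P, σ '' Icc a b ⊆ p := by
  have hane : σ a ≠ σ b := fun he =>
    (ne_of_lt hab) (geo_inj hσ ⟨ha, hab.le.trans hb⟩ ⟨ha.trans hab.le, hb⟩ he)
  rcases lt_trichotomy ra rb with hr | hr | hr
  · exact sameseg_core hTG hσ hτ hab ha hb hra hrb hσa hσb hmiss hr
  · exact absurd (hσa.trans (hr ▸ hσb.symm)) hane
  · refine sameseg_core hTG hσ (geo_rev hτ le_rfl le_rfl) hab ha hb
      (ra := lτ - ra) (rb := lτ - rb)
      ⟨by linarith [hra.2], by linarith [hra.1]⟩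
      ⟨by linarith [hrb.2], by linarith [hrb.1]⟩
      (by show σ a = τ (lτ - (lτ - ra)); rw [show lτ - (lτ - ra) = ra by ring]; exact hσa)
      (by show σ b = τ (lτ - (lτ - rb)); rw [show lτ - (lτ - rb) = rb by ring]; exact hσb)
      ?_ (by linarith)
    intro s hs
    rw [rev_image hlτ]
    exact hmiss s hs

theorem diffseg {P : Set (Set F)} (hTG : IsTreeGraded P)
    {σ τ0 τ1 : ℝ → F} {l l0 l1 a b ra rb : ℝ}
    (hσ : IsGeodesicOn σ 0 l) (hτ0 : IsGeodesicOn τ0 0 l0) (hτ1 : IsGeodesicOn τ1 0 l1)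
    (hl0 : 0 ≤ l0) (hl1 : 0 ≤ l1)
    (hjoin : τ0 l0 = τ1 0)
    (hab : a < b) (ha : 0 ≤ a) (hb : b ≤ l)
    (hra : ra ∈ Icc 0 l0) (hrb : rb ∈ Icc 0 l1)
    (hσa : σ a = τ0 ra) (hσb : σ b = τ1 rb)
    (hσa1 : σ a ∉ τ1 '' Icc 0 l1) (hσb0 : σ b ∉ τ0 '' Icc 0 l0)
    (hmiss : ∀ s ∈ Ioo a b, σ s ∉ τ0 '' Icc 0 l0 ∪ τ1 '' Icc 0 l1) :
    ∃ p ∈ P, σ '' Icc a b ⊆ p := by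
  classical
  have hra1 := hra.1; have hra2 := hra.2; have hrb1 := hrb.1; have hrb2 := hrb.2
  -- the greedy junction point
  set K : Set ℝ := {r ∈ Icc 0 rb | τ1 r ∈ τ0 '' Icc ra l0} with hKdef
  have hKne : K.Nonempty := ⟨0, ⟨le_refl _, hrb.1⟩, ⟨l0, ⟨hra.2, le_refl _⟩, hjoin⟩⟩
  have hKclosed : IsClosed K := by
    have hcont : ContinuousOn τ1 (Icc 0 rb) :=
      (geo_cont hτ1).mono (Icc_subset_Icc le_rfl hrb.2)
    have himcl : IsClosed (τ0 '' Icc ra l0) :=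
      ((isCompact_Icc.image_of_continuousOn
        ((geo_cont hτ0).mono (Icc_subset_Icc hra.1 le_rfl)))).isClosed
    exact hcont.preimage_isClosed_of_isClosed isClosed_Icc himcl
  have hKbdd : BddAbove K := ⟨rb, fun r hr => hr.1.2⟩
  set s' := sSup K with hs'def
  have hs'K : s' ∈ K := hKclosed.csSup_mem hKne hKbdd
  obtain ⟨r', hr'mem, hr'eq⟩ := hs'K.2
  have hs'le : s' ∈ Icc 0 rb := hs'K.1
  have hub : ∀ r ∈ K, r ≤ s' := fun r hr => le_csSup hKbdd hr
  -- side lengths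
  have hl2pos : s' < rb := by
    rcases eq_or_lt_of_le hs'le.2 with he | hlt
    · exfalso
      apply hσb0
      rw [hσb, ← he, ← hr'eq]
      exact ⟨r', ⟨hra.1.trans hr'mem.1, hr'mem.2⟩, rfl⟩
    · exact hlt
  have hl3pos : ra < r' := by
    rcases eq_or_lt_of_le hr'mem.1 with he | hlt
    · exfalso
      apply hσa1
      rw [hσa, he, hr'eq]
      exact ⟨s', ⟨hs'le.1, hs'le.2.trans hrb.2⟩, rfl⟩
    · exact hlt
  obtain ⟨p, hp, hsubf, -, -⟩ := glue3 hTG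
    (f := fun s => σ (a + s)) (g := fun s => τ1 (rb - s)) (h := fun s => τ0 (r' - s))
    (l1 := b - a) (l2 := rb - s') (l3 := r' - ra)
    (by linarith) (by linarith) (by linarith) (by linarith)
    (geo_shift hσ ha (by linarith))
    (geo_rev hτ1 hrb.2 (by linarith [hs'le.1]))
    (geo_rev hτ0 hr'mem.2 (by linarith [hra.1]))
    (by show σ (a + (b - a)) = τ1 (rb - 0); rw [show a + (b - a) = b by ring, sub_zero]
        exact hσb)
    (by show τ1 (rb - (rb - s')) = τ0 (r' - 0)
        rw [show rb - (rb - s') = s' by ring, sub_zero]; exact hr'eq.symm)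
    (by show τ0 (r' - (r' - ra)) = σ (a + 0)
        rw [show r' - (r' - ra) = ra by ring, add_zero]; exact hσa.symm)
    (by -- Hfg
      intro s hs u hu heq
      have heq' : σ (a + s) = τ1 (rb - u) := heq
      have hmem : rb - u ∈ Icc 0 l1 := ⟨by linarith [hs'le.1, hu.2], by linarith [hu.1]⟩
      rcases eq_or_lt_of_le hs.1 with h0 | h0
      · rw [← h0, add_zero] at heq'
        exact hσa1 ⟨rb - u, hmem, heq'.symm⟩
      · exact hmiss (a + s) ⟨by linarith, by linarith [hs.2]⟩
          (Or.inr ⟨rb - u, hmem, heq'.symm⟩)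
    )
    (by -- Hgh
      intro s hs u hu heq
      have heq' : τ1 (rb - s) = τ0 (r' - u) := heq
      have hrmem : rb - s ∈ Icc 0 rb := ⟨by linarith [hs'le.1, hs.2], by linarith [hs.1]⟩
      have h0mem : r' - u ∈ Icc ra l0 := ⟨by linarith [hu.2], by linarith [hr'mem.2, hu.1]⟩
      have : rb - s ∈ K := ⟨hrmem, ⟨r' - u, h0mem, heq'.symm⟩⟩
      have := hub _ this
      have := hs.2
      linarith
    )
    (by -- Hfh
      intro s hs u hu heq
      have heq' : σ (a + s) = τ0 (r' - u) := heq
      have h0mem : r' - u ∈ Icc 0 l0 :=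
        ⟨by linarith [hu.2], by linarith [hr'mem.2, hu.1]⟩
      rcases eq_or_lt_of_le hs.1 with h0 | h0
      · rw [← h0, add_zero] at heq'
        have : ra = r' - u := geo_inj hτ0 hra h0mem (hσa.symm.trans heq')
        have := hu.2
        linarith
      · exact hmiss (a + s) ⟨by linarith, by linarith [hs.2]⟩
          (Or.inl ⟨r' - u, h0mem, heq'.symm⟩)
    )
  refine ⟨p, hp, ?_⟩
  rintro _ ⟨s, hs, rfl⟩
  refine hsubf ⟨s - a, ⟨by linarith [hs.1], by linarith [hs.2]⟩, ?_⟩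
  show σ (a + (s - a)) = σ s
  rw [show a + (s - a) = s by ring]

theorem base2 {P : Set (Set F)} (hTG : IsTreeGraded P)
    {σ τ0 τ1 : ℝ → F} {l l0 l1 u : ℝ}
    (hσ : IsGeodesicOn σ 0 l) (hτ0 : IsGeodesicOn τ0 0 l0) (hτ1 : IsGeodesicOn τ1 0 l1)
    (hl0 : 0 ≤ l0) (hl1 : 0 ≤ l1)
    (h00 : τ0 0 = σ 0) (hjoin : τ0 l0 = τ1 0) (h11 : τ1 l1 = σ l)
    (h0u : 0 < u) (hul : u < l)
    (hm0 : σ u ∉ τ0 '' Icc 0 l0) (hm1 : σ u ∉ τ1 '' Icc 0 l1) :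
    ∃ Q ∈ P, ∃ a b, 0 ≤ a ∧ a < u ∧ u < b ∧ b ≤ l ∧ σ '' Icc a b ⊆ Q := by
  classical
  have hJc : IsClosed (τ0 '' Icc 0 l0 ∪ τ1 '' Icc 0 l1) :=
    (geo_image_closed hτ0).union (geo_image_closed hτ1)
  have hmJ : σ u ∉ τ0 '' Icc 0 l0 ∪ τ1 '' Icc 0 l1 := fun h => h.elim hm0 hm1
  set A := Icc 0 u ∩ σ ⁻¹' (τ0 '' Icc 0 l0 ∪ τ1 '' Icc 0 l1) with hAdef
  have hAne : A.Nonempty := ⟨0, ⟨le_refl _, h0u.le⟩, Or.inl ⟨0, ⟨le_refl _, hl0⟩, h00⟩⟩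
  have hAcl : IsClosed A :=
    ((geo_cont hσ).mono (Icc_subset_Icc le_rfl hul.le)).preimage_isClosed_of_isClosed
      isClosed_Icc hJc
  have hAbdd : BddAbove A := ⟨u, fun r hr => hr.1.2⟩
  set a := sSup A with hadef
  have haA : a ∈ A := hAcl.csSup_mem hAne hAbdd
  have hau : a < u := lt_of_le_of_ne haA.1.2 (fun he => hmJ (he ▸ haA.2))
  have ha0 : 0 ≤ a := haA.1.1
  set B := Icc u l ∩ σ ⁻¹' (τ0 '' Icc 0 l0 ∪ τ1 '' Icc 0 l1) with hBdef
  have hBne : B.Nonempty := ⟨l, ⟨hul.le, le_refl _⟩, Or.inr ⟨l1, ⟨hl1, le_refl _⟩, h11⟩⟩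
  have hBcl : IsClosed B :=
    ((geo_cont hσ).mono (Icc_subset_Icc h0u.le le_rfl)).preimage_isClosed_of_isClosed
      isClosed_Icc hJc
  have hBbdd : BddBelow B := ⟨u, fun r hr => hr.1.1⟩
  set b := sInf B with hbdef
  have hbB : b ∈ B := hBcl.csInf_mem hBne hBbdd
  have hub : u < b := lt_of_le_of_ne hbB.1.1 (fun he => hmJ (he.symm ▸ hbB.2))
  have hbl : b ≤ l := hbB.1.2
  have hmiss : ∀ s ∈ Ioo a b, σ s ∉ τ0 '' Icc 0 l0 ∪ τ1 '' Icc 0 l1 := by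
    intro s hs hmem
    rcases le_or_gt s u with hle | hlt
    · rcases eq_or_lt_of_le hle with he | hlt'
      · exact hmJ (he ▸ hmem)
      · have : s ∈ A := ⟨⟨ha0.trans hs.1.le, hle⟩, hmem⟩
        have := le_csSup hAbdd this
        linarith [hs.1]
    · have : s ∈ B := ⟨⟨hlt.le, hs.2.le.trans hbl⟩, hmem⟩
      have := csInf_le hBbdd this
      linarith [hs.2]
  have hfin : ∀ p ∈ P, σ '' Icc a b ⊆ p →
      ∃ Q ∈ P, ∃ a' b', 0 ≤ a' ∧ a' < u ∧ u < b' ∧ b' ≤ l ∧ σ '' Icc a' b' ⊆ Q :=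
    fun p hp hsub => ⟨p, hp, a, b, ha0, hau, hub, hbl, hsub⟩
  have hab : a < b := hau.trans hub
  by_cases hA0 : σ a ∈ τ0 '' Icc 0 l0
  · by_cases hB0 : σ b ∈ τ0 '' Icc 0 l0
    · obtain ⟨ra, hram, hrae⟩ := hA0
      obtain ⟨rb, hrbm, hrbe⟩ := hB0
      obtain ⟨p, hp, hsub⟩ := sameseg hTG hσ hτ0 hl0 hab ha0 hbl hram hrbm hrae.symm hrbe.symm
        (fun s hs hm => hmiss s hs (Or.inl hm))
      exact hfin p hp hsub
    · have hB1 : σ b ∈ τ1 '' Icc 0 l1 := hbB.2.resolve_left hB0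
      by_cases hA1 : σ a ∈ τ1 '' Icc 0 l1
      · obtain ⟨ra, hram, hrae⟩ := hA1
        obtain ⟨rb, hrbm, hrbe⟩ := hB1
        obtain ⟨p, hp, hsub⟩ := sameseg hTG hσ hτ1 hl1 hab ha0 hbl hram hrbm hrae.symm hrbe.symm
          (fun s hs hm => hmiss s hs (Or.inr hm))
        exact hfin p hp hsub
      · obtain ⟨ra, hram, hrae⟩ := hA0
        obtain ⟨rb, hrbm, hrbe⟩ := hB1
        obtain ⟨p, hp, hsub⟩ := diffseg hTG hσ hτ0 hτ1 hl0 hl1 hjoin hab ha0 hbl hram hrbm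
          hrae.symm hrbe.symm hA1 hB0 hmiss
        exact hfin p hp hsub
  · have hA1 : σ a ∈ τ1 '' Icc 0 l1 := haA.2.resolve_left hA0
    by_cases hB1 : σ b ∈ τ1 '' Icc 0 l1
    · obtain ⟨ra, hram, hrae⟩ := hA1
      obtain ⟨rb, hrbm, hrbe⟩ := hB1
      obtain ⟨p, hp, hsub⟩ := sameseg hTG hσ hτ1 hl1 hab ha0 hbl hram hrbm hrae.symm hrbe.symm
        (fun s hs hm => hmiss s hs (Or.inr hm))
      exact hfin p hp hsub
    · have hB0 : σ b ∈ τ0 '' Icc 0 l0 := hbB.2.resolve_right hB1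
      obtain ⟨ra, hram, hrae⟩ := hA1
      obtain ⟨rb, hrbm, hrbe⟩ := hB0
      obtain ⟨p, hp, hsub⟩ := diffseg hTG hσ
        (geo_rev hτ1 le_rfl le_rfl) (geo_rev hτ0 le_rfl le_rfl) hl1 hl0
        (by show τ1 (l1 - l1) = τ0 (l0 - 0); rw [sub_self, sub_zero]; exact hjoin.symm)
        hab ha0 hbl
        (ra := l1 - ra) (rb := l0 - rb)
        ⟨by linarith [hram.2], by linarith [hram.1]⟩
        ⟨by linarith [hrbm.2], by linarith [hrbm.1]⟩
        (by show σ a = τ1 (l1 - (l1 - ra)); rw [show l1 - (l1 - ra) = ra by ring]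
            exact hrae.symm)
        (by show σ b = τ0 (l0 - (l0 - rb)); rw [show l0 - (l0 - rb) = rb by ring]
            exact hrbe.symm)
        (by rw [rev_image hl0]; exact hA0)
        (by rw [rev_image hl1]; exact hB1)
        (by
          intro s hs hm
          rw [rev_image hl1, rev_image hl0] at hm
          exact hmiss s hs (Or.symm hm))
      exact hfin p hp hsub

theorem twogeo {P : Set (Set F)} (hTG : IsTreeGraded P)
    {g h : ℝ → F} {l c : ℝ} (hg : IsGeodesicOn g 0 l) (hh : IsGeodesicOn h 0 l)
    (h0 : g 0 = h 0) (h1 : g l = h l) (hc : 0 < c) (hcl : c ≤ l)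
    {Q : Set F} (hQ : Q ∈ P) (hhQ : h '' Icc 0 c ⊆ Q) :
    g '' Icc 0 c ⊆ Q := by
  classical
  rintro _ ⟨s, hs, rfl⟩
  have hs1 := hs.1
  have hs2 := hs.2
  by_cases he : g s = h s
  · rw [he]; exact hhQ ⟨s, hs, rfl⟩
  set E := Icc 0 l ∩ (fun r => dist (g r) (h r)) ⁻¹' {0} with hEdef
  have hEm : ∀ r, r ∈ E ↔ r ∈ Icc 0 l ∧ g r = h r := by
    intro r
    simp only [hEdef, mem_inter_iff, mem_preimage, mem_singleton_iff, dist_eq_zero]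
  have hEcl : IsClosed E := by
    have hcont : ContinuousOn (fun r => dist (g r) (h r)) (Icc 0 l) :=
      continuous_dist.comp_continuousOn ((geo_cont hg).prodMk (geo_cont hh))
    exact hcont.preimage_isClosed_of_isClosed isClosed_Icc isClosed_singleton
  have hscl : s ≤ l := hs.2.trans hcl
  have h0E : (0:ℝ) ∈ E := (hEm 0).mpr ⟨⟨le_refl _, hc.le.trans hcl⟩, h0⟩
  have hlE : l ∈ E := (hEm l).mpr ⟨⟨hc.le.trans hcl, le_refl _⟩, h1⟩
  set A := E ∩ Icc 0 s with hAdef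
  have hAne : A.Nonempty := ⟨0, h0E, ⟨le_refl _, hs.1⟩⟩
  have hAcl : IsClosed A := hEcl.inter isClosed_Icc
  have hAbdd : BddAbove A := ⟨s, fun r hr => hr.2.2⟩
  set a := sSup A with hadef
  have haA : a ∈ A := hAcl.csSup_mem hAne hAbdd
  have haE := (hEm a).mp haA.1
  have has : a < s := lt_of_le_of_ne haA.2.2 (fun hea => he (hea ▸ haE.2))
  have ha0 : 0 ≤ a := haA.2.1
  set B := E ∩ Icc s l with hBdef
  have hBne : B.Nonempty := ⟨l, hlE, ⟨hscl, le_refl _⟩⟩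
  have hBcl : IsClosed B := hEcl.inter isClosed_Icc
  have hBbdd : BddBelow B := ⟨s, fun r hr => hr.2.1⟩
  set b := sInf B with hbdef
  have hbB : b ∈ B := hBcl.csInf_mem hBne hBbdd
  have hbE := (hEm b).mp hbB.1
  have hsb : s < b := lt_of_le_of_ne hbB.2.1 (fun heb => he (by rw [heb]; exact hbE.2))
  have hbl : b ≤ l := hbB.2.2
  have hab : a < b := has.trans hsb
  have hgap : ∀ r ∈ Ioo a b, g r ≠ h r := by
    intro r hr hre
    have hrl : r ∈ Icc 0 l := ⟨ha0.trans hr.1.le, hr.2.le.trans hbl⟩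
    rcases le_or_gt r s with hle | hlt
    · have : r ∈ A := ⟨(hEm r).mpr ⟨hrl, hre⟩, ⟨hrl.1, hle⟩⟩
      have := le_csSup hAbdd this
      linarith [hr.1]
    · have : r ∈ B := ⟨(hEm r).mpr ⟨hrl, hre⟩, ⟨hlt.le, hrl.2⟩⟩
      have := csInf_le hBbdd this
      linarith [hr.2]
  obtain ⟨R, hR, hsubf, hsubg, -⟩ := glue3 hTG
    (f := fun r => g (a + r)) (g := fun r => h (b - r)) (h := fun _ => g a)
    (l1 := b - a) (l2 := b - a) (l3 := 0)
    (by linarith) (by linarith) le_rfl (by linarith)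
    (geo_shift hg ha0 (by linarith))
    (geo_rev hh hbl (by linarith))
    (geo_const (g a))
    (by show g (a + (b - a)) = h (b - 0)
        rw [show a + (b - a) = b by ring, sub_zero]; exact hbE.2)
    (by show h (b - (b - a)) = g a
        rw [show b - (b - a) = a by ring]; exact haE.2.symm)
    (by show g a = g (a + 0); rw [add_zero])
    (by
      intro s1 hs1 t1 ht1 heq
      have heq' : g (a + s1) = h (b - t1) := heq
      have hm1 : a + s1 ∈ Icc 0 l := ⟨by linarith [hs1.1], by linarith [hs1.2]⟩
      have hm2 : b - t1 ∈ Icc 0 l := ⟨by linarith [ht1.2], by linarith [ht1.1]⟩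
      have hd1 : dist (g 0) (g (a + s1)) = a + s1 := geo_dist0 hg hm1
      have hd2 : dist (h 0) (h (b - t1)) = b - t1 := geo_dist0 hh hm2
      have hpar : a + s1 = b - t1 := by
        rw [← hd1, ← hd2, h0, heq']
      have hIoo : a + s1 ∈ Ioo a b := by
        constructor
        · rcases eq_or_lt_of_le hs1.1 with hz | hz
          · exfalso
            rw [← hz, add_zero] at hpar
            linarith [ht1.2]
          · linarith
        · linarith [hs1.2]
      exact hgap (a + s1) hIoo (by rw [heq', hpar])
    )
    (by intro s1 hs1 t1 ht1; have := ht1.1; have := ht1.2; linarith)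
    (by intro s1 hs1 t1 ht1; have := ht1.1; have := ht1.2; linarith)
  have hptm : min b c ∈ Icc a b := ⟨le_min hab.le (by linarith), min_le_left _ _⟩
  have hRQ : R = Q := by
    by_contra hne
    have hsubsing := hTG.T1 R hR Q hQ hne
    have hp1R : h a ∈ R := hsubg ⟨b - a, ⟨by linarith, by linarith⟩,
      by show h (b - (b - a)) = h a; rw [show b - (b - a) = a by ring]⟩
    have hp2R : h (min b c) ∈ R := by
      refine hsubg ⟨b - min b c, ⟨by linarith [hptm.2], by linarith [hptm.1]⟩, ?_⟩
      show h (b - (b - min b c)) = h (min b c)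
      rw [show b - (b - min b c) = min b c by ring]
    have hp1Q : h a ∈ Q := hhQ ⟨a, ⟨ha0, by linarith⟩, rfl⟩
    have hp2Q : h (min b c) ∈ Q := hhQ ⟨min b c,
      ⟨le_min (by linarith) hc.le, min_le_right _ _⟩, rfl⟩
    have heq2 : h a = h (min b c) := hsubsing ⟨hp1R, hp1Q⟩ ⟨hp2R, hp2Q⟩
    have heq3 : a = min b c := geo_inj hh ⟨ha0, by linarith⟩
      ⟨le_min (by linarith) hc.le, (min_le_left _ _).trans hbl⟩ heq2
    have hlt3 : a < min b c := lt_min hab (by linarith)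
    linarith
  refine hRQ ▸ hsubf ⟨s - a, ⟨by linarith, by linarith⟩, ?_⟩
  show g (a + (s - a)) = g s
  rw [show a + (s - a) = s by ring]

theorem entry {P : Set (Set F)} (hTG : IsTreeGraded P)
    {Q : Set F} (hQ : Q ∈ P)
    {η τ β : ℝ → F} {lη lτ lβ c : ℝ}
    (hη : IsGeodesicOn η 0 lη) (hτ : IsGeodesicOn τ 0 lτ) (hβ : IsGeodesicOn β 0 lβ)
    (hlτ : 0 ≤ lτ) (hlβ : 0 < lβ)
    (hc : 0 < c) (hclη : c ≤ lη)
    (hηQ : η '' Icc 0 c ⊆ Q)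
    (hβ0 : β 0 = η 0) (hτ0 : τ 0 = η lη) (hτβ : τ lτ = β lβ)
    (hmτ : ∀ r ∈ Icc 0 lτ, τ r ≠ η 0) :
    ∃ ε, 0 < ε ∧ ε ≤ lβ ∧ β '' Icc 0 ε ⊆ Q := by
  classical
  have hlη : 0 ≤ lη := hc.le.trans hclη
  by_cases hagree : ∃ s, 0 < s ∧ s ≤ lβ ∧ s ≤ lη ∧ β s = η s
  · obtain ⟨s, hs0, hsβ, hsη, hse⟩ := hagree
    have hsubQ : η '' Icc 0 (min c s) ⊆ Q := by
      rintro _ ⟨r, hr, rfl⟩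
      exact hηQ ⟨r, ⟨hr.1, hr.2.trans (min_le_left _ _)⟩, rfl⟩
    have := twogeo hTG (geo_mono hβ hsβ) (geo_mono hη hsη) hβ0 hse
      (lt_min hc hs0) (min_le_right c s) hQ hsubQ
    exact ⟨min c s, lt_min hc hs0, (min_le_right c s).trans hsβ, this⟩
  push_neg at hagree
  have hno : ∀ s ∈ Ioc 0 lβ, ∀ r ∈ Icc 0 lη, β s ≠ η r := by
    intro s hs r hr heq
    have hds : dist (β 0) (β s) = s := geo_dist0 hβ ⟨hs.1.le, hs.2⟩
    have hdr : dist (η 0) (η r) = r := geo_dist0 hη hr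
    have hsr : s = r := by rw [← hds, ← hdr, hβ0, heq]
    exact hagree s hs.1 hs.2 (hsr ▸ hr.2) (by rw [heq, hsr])
  set K := Icc 0 lτ ∩ τ ⁻¹' (η '' Icc 0 lη) with hKdef
  have hKne : K.Nonempty := ⟨0, ⟨le_refl _, hlτ⟩, ⟨lη, ⟨hlη, le_refl _⟩, hτ0.symm⟩⟩
  have hKcl : IsClosed K :=
    (geo_cont hτ).preimage_isClosed_of_isClosed isClosed_Icc (geo_image_closed hη)
  have hKbdd : BddAbove K := ⟨lτ, fun r hr => hr.1.2⟩
  set s' := sSup K with hs'def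
  have hs'K : s' ∈ K := hKcl.csSup_mem hKne hKbdd
  have hs'm := hs'K.1
  obtain ⟨r', hr'm, hr'e⟩ := hs'K.2
  have hub : ∀ r ∈ K, r ≤ s' := fun r hr => le_csSup hKbdd hr
  have hr'pos : 0 < r' := by
    rcases eq_or_lt_of_le hr'm.1 with hz | hz
    · exfalso
      exact hmτ s' hs'm (by rw [← hr'e, ← hz])
    · exact hz
  set T := Icc 0 lβ ∩ β ⁻¹' (τ '' Icc s' lτ) with hTdef
  have hTne : T.Nonempty := ⟨lβ, ⟨hlβ.le, le_refl _⟩, ⟨lτ, ⟨hs'm.2, le_refl _⟩, hτβ⟩⟩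
  have hTcl : IsClosed T := by
    have himcl : IsClosed (τ '' Icc s' lτ) :=
      (isCompact_Icc.image_of_continuousOn
        ((geo_cont hτ).mono (Icc_subset_Icc hs'm.1 le_rfl))).isClosed
    exact (geo_cont hβ).preimage_isClosed_of_isClosed isClosed_Icc himcl
  have hTbdd : BddBelow T := ⟨0, fun r hr => hr.1.1⟩
  set s2 := sInf T with hs2def
  have hs2T : s2 ∈ T := hTcl.csInf_mem hTne hTbdd
  have hs2m := hs2T.1
  obtain ⟨r2, hr2m, hr2e⟩ := hs2T.2
  have hlb : ∀ r ∈ T, s2 ≤ r := fun r hr => csInf_le hTbdd hr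
  have hs2pos : 0 < s2 := by
    rcases eq_or_lt_of_le hs2m.1 with hz | hz
    · exfalso
      refine hmτ r2 ⟨hs'm.1.trans hr2m.1, hr2m.2⟩ ?_
      rw [hr2e, ← hz, hβ0]
    · exact hz
  have hr2gt : s' < r2 := by
    rcases eq_or_lt_of_le hr2m.1 with hz | hz
    · exfalso
      refine hno s2 ⟨hs2pos, hs2m.2⟩ r' hr'm ?_
      rw [← hr2e, ← hz, ← hr'e]
    · exact hz
  obtain ⟨R, hR, hsf, hsg, hsh⟩ := glue3 hTG
    (f := η) (g := fun r => τ (s' + r)) (h := fun r => β (s2 - r))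
    (l1 := r') (l2 := r2 - s') (l3 := s2)
    hr'pos.le (by linarith) hs2pos.le (by linarith)
    (geo_mono hη hr'm.2)
    (geo_shift hτ hs'm.1 (by linarith [hr2m.2]))
    (geo_rev hβ hs2m.2 le_rfl)
    (by show η r' = τ (s' + 0); rw [add_zero]; exact hr'e)
    (by show τ (s' + (r2 - s')) = β (s2 - 0)
        rw [show s' + (r2 - s') = r2 by ring, sub_zero]; exact hr2e)
    (by show β (s2 - s2) = η 0; rw [sub_self]; exact hβ0)
    (by -- Hfg
      intro s1 hs1 t1 ht1 heq
      have heq' : η s1 = τ (s' + t1) := heq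
      rcases eq_or_lt_of_le ht1.1 with hz | hz
      · rw [← hz, add_zero] at heq'
        have : s1 = r' := geo_inj hη ⟨hs1.1, hs1.2.le.trans hr'm.2⟩ hr'm
          (heq'.trans hr'e.symm)
        rw [this] at hs1
        exact absurd hs1.2 (lt_irrefl _)
      · have : s' + t1 ∈ K := ⟨⟨by linarith [hs'm.1], by linarith [ht1.2, hr2m.2]⟩,
          ⟨s1, ⟨hs1.1, hs1.2.le.trans hr'm.2⟩, heq'⟩⟩
        have := hub _ this
        linarith
    )
    (by -- Hgh
      intro s1 hs1 t1 ht1 heq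
      have heq' : τ (s' + s1) = β (s2 - t1) := heq
      rcases eq_or_lt_of_le ht1.1 with hz | hz
      · rw [← hz, sub_zero] at heq'
        have hpar : s' + s1 = r2 := geo_inj hτ
          ⟨by linarith [hs'm.1, hs1.1], by linarith [hs1.2, hr2m.2]⟩
          ⟨hs'm.1.trans hr2m.1, hr2m.2⟩ (heq'.trans hr2e.symm)
        linarith [hs1.2]
      · have : s2 - t1 ∈ T := ⟨⟨by linarith [ht1.2], by linarith [hs2m.2]⟩,
          ⟨s' + s1, ⟨by linarith [hs1.1], by linarith [hs1.2, hr2m.2]⟩, heq'⟩⟩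
        have := hlb _ this
        linarith
    )
    (by -- Hfh
      intro s1 hs1 t1 ht1 heq
      have heq' : η s1 = β (s2 - t1) := heq
      refine hno (s2 - t1) ⟨by linarith [ht1.2], by linarith [hs2m.2, ht1.1]⟩ s1
        ⟨hs1.1, hs1.2.le.trans hr'm.2⟩ heq'.symm
    )
  have hRQ : R = Q := by
    by_contra hne
    have hsubsing := hTG.T1 R hR Q hQ hne
    have hmc : min r' c ∈ Icc 0 r' := ⟨le_min hr'pos.le hc.le, min_le_left _ _⟩
    have hp1R : η 0 ∈ R := hsf ⟨0, ⟨le_refl _, hr'pos.le⟩, rfl⟩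
    have hp2R : η (min r' c) ∈ R := hsf ⟨min r' c, hmc, rfl⟩
    have hp1Q : η 0 ∈ Q := hηQ ⟨0, ⟨le_refl _, hc.le⟩, rfl⟩
    have hp2Q : η (min r' c) ∈ Q := hηQ ⟨min r' c,
      ⟨le_min hr'pos.le hc.le, min_le_right _ _⟩, rfl⟩
    have heq2 : η 0 = η (min r' c) := hsubsing ⟨hp1R, hp1Q⟩ ⟨hp2R, hp2Q⟩
    have heq3 : (0:ℝ) = min r' c := geo_inj hη ⟨le_refl _, hlη⟩
      ⟨le_min hr'pos.le hc.le, (min_le_left _ _).trans hr'm.2⟩ heq2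
    have : (0:ℝ) < min r' c := lt_min hr'pos hc
    linarith
  refine ⟨s2, hs2pos, hs2m.2, ?_⟩
  rintro _ ⟨w, hw, rfl⟩
  refine hRQ ▸ hsh ⟨s2 - w, ⟨by linarith [hw.2], by linarith [hw.1]⟩, ?_⟩
  show β (s2 - (s2 - w)) = β w
  rw [show s2 - (s2 - w) = w by ring]

/-! ### The chain dichotomy -/

theorem dichotomy (hF : GeodesicSpace F) {P : Set (Set F)} (hTG : IsTreeGraded P)
    {n : ℕ} {σ : ℝ → F} {l u : ℝ} {z : ℕ → F}
    (hσ : IsGeodesicOn σ 0 l) (h0u : 0 < u) (hul : u < l)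
    (hz0 : z 0 = σ 0) (hzn : z n = σ l)
    (hch : ∀ i < n, ∃ g : ℝ → F, IsGeodesicOn g 0 (dist (z i) (z (i+1))) ∧
      g 0 = z i ∧ g (dist (z i) (z (i+1))) = z (i+1) ∧
      ∀ s ∈ Icc 0 (dist (z i) (z (i+1))), g s ≠ σ u) :
    ∃ Q ∈ P, ∃ a b, 0 ≤ a ∧ a < u ∧ u < b ∧ b ≤ l ∧ σ '' Icc a b ⊆ Q := by
  induction n using Nat.strong_induction_on generalizing σ l u z with
  | _ n IH =>
  rcases n with - | m
  · exfalso
    have : σ 0 = σ l := hz0 ▸ hzn ▸ rfl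
    have := geo_inj hσ ⟨le_refl _, by linarith⟩ ⟨by linarith, le_refl _⟩ this
    linarith
  -- n = m + 1
  obtain ⟨gm, hgm, hgm0, hgm1, hgmav⟩ := hch m (Nat.lt_succ_self m)
  obtain ⟨ρ, hρ0, hρl, hρ⟩ := hF (z 0) (z m)
  set lρ := dist (z 0) (z m) with hlρdef
  have hlρ : 0 ≤ lρ := dist_nonneg
  by_cases hmem : σ u ∈ ρ '' Icc 0 lρ
  case neg =>
    -- two-segment chain (ρ, gm)
    refine base2 hTG hσ hρ hgm hlρ dist_nonneg (hρ0.trans hz0) (hρl.trans hgm0.symm)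
      (hgm1.trans hzn) h0u hul hmem ?_
    rintro ⟨s, hs, he⟩
    exact hgmav s hs he
  case pos =>
  obtain ⟨u', hu'm, hu'e⟩ := hmem
  have hz0m : z 0 ≠ σ u := by
    obtain ⟨g0, hg0, hg00, hg01, hg0av⟩ := hch 0 (Nat.succ_pos m)
    intro he
    exact hg0av 0 ⟨le_refl _, dist_nonneg⟩ (hg00.trans he)
  have hzmm : z m ≠ σ u := by
    intro he
    exact hgmav 0 ⟨le_refl _, dist_nonneg⟩ (hgm0.trans he)
  have hu'0 : 0 < u' := by
    rcases eq_or_lt_of_le hu'm.1 with hz | hz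
    · exfalso
      apply hz0m
      rw [← hu'e, ← hz, hρ0]
    · exact hz
  have hu'l : u' < lρ := by
    rcases eq_or_lt_of_le hu'm.2 with hz | hz
    · exfalso
      apply hzmm
      rw [← hu'e, hz, hρl]
    · exact hz
  -- apply the inductive hypothesis to ρ with the first m segments
  obtain ⟨Q, hQ, a', b', ha'0, ha'u, hu'b, hb'l, hsubρ⟩ :=
    IH m (Nat.lt_succ_self m) hρ hu'0 hu'l hρ0.symm hρl.symm (fun i hi => by
      obtain ⟨g, hg, hg0, hg1, hgav⟩ := hch i (hi.trans (Nat.lt_succ_self m))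
      exact ⟨g, hg, hg0, hg1, fun s hs he => hgav s hs (he.trans hu'e)⟩)
  -- transfer to σ via two entry applications
  -- before side
  obtain ⟨ε1, hε10, hε1u, hε1Q⟩ := entry hTG hQ
    (η := fun s => ρ (u' - s)) (τ := fun _ => σ 0) (β := fun s => σ (u - s))
    (lη := u') (lτ := 0) (lβ := u) (c := u' - a')
    (geo_rev hρ hu'm.2 le_rfl) (geo_const (σ 0)) (geo_rev hσ hul.le le_rfl)
    le_rfl h0u (by linarith) (by linarith)
    (by
      rintro _ ⟨s, hs, rfl⟩
      exact hsubρ ⟨u' - s, ⟨by linarith [hs.2], by linarith [hs.1]⟩, rfl⟩)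
    (by show σ (u - 0) = ρ (u' - 0); rw [sub_zero, sub_zero]; exact hu'e.symm)
    (by show σ 0 = ρ (u' - u'); rw [sub_self, hρ0, hz0])
    (by show σ 0 = σ (u - u); rw [sub_self])
    (by
      intro r hr he
      have he' : σ 0 = ρ (u' - 0) := he
      rw [sub_zero, hu'e] at he'
      have := geo_inj hσ ⟨le_refl _, by linarith⟩ ⟨h0u.le, hul.le⟩ he'
      linarith)
  -- after side
  obtain ⟨ε2, hε20, hε2u, hε2Q⟩ := entry hTG hQ
    (η := fun s => ρ (u' + s)) (τ := gm) (β := fun s => σ (u + s))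
    (lη := lρ - u') (lτ := dist (z m) (z (m+1))) (lβ := l - u) (c := b' - u')
    (geo_shift hρ hu'm.1 (by linarith)) hgm (geo_shift hσ h0u.le (by linarith))
    dist_nonneg (by linarith) (by linarith) (by linarith)
    (by
      rintro _ ⟨s, hs, rfl⟩
      exact hsubρ ⟨u' + s, ⟨by linarith [hs.1], by linarith [hs.2]⟩, rfl⟩)
    (by show σ (u + 0) = ρ (u' + 0); rw [add_zero, add_zero]; exact hu'e.symm)
    (by show gm 0 = ρ (u' + (lρ - u')); rw [show u' + (lρ - u') = lρ by ring, hρl]; exact hgm0)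
    (by show gm (dist (z m) (z (m+1))) = σ (u + (l - u))
        rw [show u + (l - u) = l by ring]; exact hgm1.trans hzn)
    (by
      intro r hr he
      have he' : gm r = ρ (u' + 0) := he
      rw [add_zero, hu'e] at he'
      exact hgmav r hr he')
  refine ⟨Q, hQ, u - ε1, u + ε2, by linarith, by linarith, by linarith, by linarith, ?_⟩
  rintro _ ⟨s, hs, rfl⟩
  rcases le_or_gt s u with hle | hlt
  · refine hε1Q ⟨u - s, ⟨by linarith [hs.2], by linarith [hs.1]⟩, ?_⟩
    show σ (u - (u - s)) = σ s
    rw [show u - (u - s) = s by ring]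
  · refine hε2Q ⟨s - u, ⟨by linarith, by linarith [hs.2]⟩, ?_⟩
    show σ (u + (s - u)) = σ s
    rw [show u + (s - u) = s by ring]

/-! ### Local path connectivity and chains -/

theorem locPC (hF : GeodesicSpace F) : LocPathConnectedSpace F := by
  refine LocPathConnectedSpace.of_bases (fun x => Metric.nhds_basis_ball) fun x ε hε => ?_
  refine ⟨x, Metric.mem_ball_self hε, ?_⟩
  intro y hy
  obtain ⟨γ, h0, h1, hγ⟩ := hF x y
  have him : γ '' Icc 0 (dist x y) ⊆ Metric.ball x ε := by
    rintro _ ⟨s, hs, rfl⟩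
    have hd : dist (γ 0) (γ s) = s := geo_dist0 hγ hs
    rw [h0] at hd
    rw [Metric.mem_ball, dist_comm, hd]
    exact lt_of_le_of_lt hs.2 (by rwa [Metric.mem_ball, dist_comm] at hy)
  have := joinedIn_of_geo dist_nonneg hγ him
  rwa [h0, h1] at this

theorem chain_of_component (hF : GeodesicSpace F) {m x y : F}
    (hxy : y ∈ connectedComponentIn ({m}ᶜ : Set F) x) :
    ∃ n, ∃ z : ℕ → F, z 0 = x ∧ z n = y ∧ ∀ i < n, ∃ g : ℝ → F,
      IsGeodesicOn g 0 (dist (z i) (z (i+1))) ∧ g 0 = z i ∧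
      g (dist (z i) (z (i+1))) = z (i+1) ∧
      ∀ s ∈ Icc 0 (dist (z i) (z (i+1))), g s ≠ m := by
  classical
  haveI : LocallyPathConnectedSpace F := locPC hF
  have hxm : x ∈ ({m}ᶜ : Set F) := connectedComponentIn_nonempty_iff.mp ⟨y, hxy⟩
  have hVopen : IsOpen (connectedComponentIn ({m}ᶜ : Set F) x) :=
    isOpen_compl_singleton.connectedComponentIn
  have hVconn : IsConnected (connectedComponentIn ({m}ᶜ : Set F) x) :=
    isConnected_connectedComponentIn_iff.mpr hxm
  have hVpath : IsPathConnected (connectedComponentIn ({m}ᶜ : Set F) x) :=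
    hVopen.isConnected_iff_isPathConnected.mp hVconn
  have hxV : x ∈ connectedComponentIn ({m}ᶜ : Set F) x := mem_connectedComponentIn hxm
  obtain ⟨p, hp⟩ := hVpath.joinedIn x hxV y hxy
  have hKc : IsCompact (range p) := isCompact_range p.continuous
  have hKne : (range p).Nonempty := range_nonempty _
  have hmK : m ∉ range p := by
    rintro ⟨t', ht'⟩
    have := connectedComponentIn_subset ({m}ᶜ : Set F) x (hp t')
    rw [ht'] at this
    exact this rfl
  have hδpos : 0 < infDist m (range p) :=
    (hKc.isClosed.notMem_iff_infDist_pos hKne).mp hmK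
  have huc : UniformContinuous (p : unitInterval → F) :=
    CompactSpace.uniformContinuous_of_continuous p.continuous
  rw [Metric.uniformContinuous_iff] at huc
  obtain ⟨δ', hδ'0, hδ'⟩ := huc (infDist m (range p)) hδpos
  obtain ⟨n, hn⟩ := exists_nat_gt (1 / δ')
  have hn0 : (0:ℝ) < n := lt_trans (by positivity) hn
  have hinv : 1 / (n:ℝ) < δ' := by
    rw [div_lt_iff₀ hn0]
    rw [div_lt_iff₀ hδ'0] at hn
    nlinarith [hn]
  set z : ℕ → F := fun i => p (Set.projIcc 0 1 zero_le_one ((i : ℝ) / n)) with hzdef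
  have hzran : ∀ i, z i ∈ range p := fun i => ⟨_, rfl⟩
  refine ⟨n, z, ?_, ?_, ?_⟩
  · show p (Set.projIcc 0 1 zero_le_one (((0:ℕ) : ℝ) / n)) = x
    rw [show (((0:ℕ):ℝ)) / (n:ℝ) = 0 by simp, Set.projIcc_left]
    exact p.source
  · show p (Set.projIcc 0 1 zero_le_one (((n:ℕ) : ℝ) / n)) = y
    rw [show (((n:ℕ):ℝ)) / (n:ℝ) = 1 by field_simp, Set.projIcc_right]
    exact p.target
  · intro i hi
    obtain ⟨g, hg0, hg1, hg⟩ := hF (z i) (z (i+1))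
    refine ⟨g, hg, hg0, hg1, ?_⟩
    have h1m : ((i:ℝ)) / n ∈ Icc (0:ℝ) 1 := by
      constructor
      · positivity
      · rw [div_le_one hn0]
        exact_mod_cast hi.le
    have h2m : (((i+1:ℕ)):ℝ) / n ∈ Icc (0:ℝ) 1 := by
      constructor
      · positivity
      · rw [div_le_one hn0]
        exact_mod_cast hi
    have hdz : dist (z i) (z (i+1)) < infDist m (range p) := by
      refine hδ' ?_
      show dist (Set.projIcc 0 1 zero_le_one ((i:ℝ) / n))
        (Set.projIcc 0 1 zero_le_one (((i+1:ℕ):ℝ) / n)) < δ'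
      rw [Set.projIcc_of_mem _ h1m, Set.projIcc_of_mem _ h2m]
      rw [Subtype.dist_eq]
      show dist ((i:ℝ)/n) ((((i+1:ℕ)):ℝ)/n) < δ'
      rw [Real.dist_eq]
      have : ((i:ℝ))/n - (((i+1:ℕ)):ℝ)/n = -(1/n) := by
        push_cast
        field_simp
        ring
      rw [this, abs_neg, abs_of_pos (by positivity)]
      exact hinv
    intro s hs he
    have hd1 : dist (z i) (g s) = s := by
      rw [← hg0]
      exact geo_dist0 hg hs
    have hd2 : infDist m (range p) ≤ dist m (z i) := infDist_le_dist_of_mem (hzran i)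
    rw [he, dist_comm] at hd1
    linarith [hs.2]

/-! ### Endpoint limits -/

theorem endpoint_left {σ : ℝ → F} {l a u : ℝ} {Q0 : Set F}
    (hσ : IsGeodesicOn σ 0 l) (hQc : IsClosed Q0) (ha : 0 ≤ a) (hau : a < u) (hu : u ≤ l)
    (hsub : ∀ s, a < s → s ≤ u → σ s ∈ Q0) : σ a ∈ Q0 := by
  have hcw : ContinuousWithinAt σ (Ioc a u) a :=
    (((geo_cont hσ).mono (Icc_subset_Icc ha hu)).continuousWithinAt
      ⟨le_refl _, hau.le⟩).mono Ioc_subset_Icc_self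
  haveI : (nhdsWithin a (Ioc a u)).NeBot := by
    rw [← mem_closure_iff_nhdsWithin_neBot, closure_Ioc (ne_of_lt hau)]
    exact ⟨le_refl _, hau.le⟩
  have hcl : σ a ∈ closure Q0 :=
    mem_closure_of_tendsto hcw
      (eventually_mem_nhdsWithin.mono fun s' hs' => hsub s' hs'.1 hs'.2)
  exact hQc.closure_subset hcl

theorem endpoint_right {σ : ℝ → F} {l u b : ℝ} {Q0 : Set F}
    (hσ : IsGeodesicOn σ 0 l) (hQc : IsClosed Q0) (hu : 0 ≤ u) (hub : u < b) (hb : b ≤ l)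
    (hsub : ∀ s, u ≤ s → s < b → σ s ∈ Q0) : σ b ∈ Q0 := by
  have hcw : ContinuousWithinAt σ (Ico u b) b :=
    (((geo_cont hσ).mono (Icc_subset_Icc hu hb)).continuousWithinAt
      ⟨hub.le, le_refl _⟩).mono Ico_subset_Icc_self
  haveI : (nhdsWithin b (Ico u b)).NeBot := by
    rw [← mem_closure_iff_nhdsWithin_neBot, closure_Ico (ne_of_lt hub)]
    exact ⟨hub.le, le_refl _⟩
  have hcl : σ b ∈ closure Q0 :=
    mem_closure_of_tendsto hcw
      (eventually_mem_nhdsWithin.mono fun s' hs' => hsub s' hs'.1 hs'.2)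
  exact hQc.closure_subset hcl

/-! ### Master lemmas -/

theorem key (hF : GeodesicSpace F) {P : Set (Set F)} (hTG : IsTreeGraded P) {F' : Set F}
    (hpc : IsPathConnected F')
    (hQ : ∀ p ∈ P, (∃ a ∈ p ∩ F', ∃ b ∈ p ∩ F', a ≠ b) → p ⊆ F')
    {σ : ℝ → F} {l u : ℝ} (hσ : IsGeodesicOn σ 0 l) (hx : σ 0 ∈ F')
    (hT : σ l ∈ closure F') (h0u : 0 < u) (hul : u < l) :
    σ u ∈ F' ∨ ∃ Q ∈ P, σ l ∈ Q ∧ σ u ∈ Q ∧ ∃ e ∈ F' ∩ Q, e ≠ σ l := by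
  classical
  haveI : LocallyPathConnectedSpace F := locPC hF
  have hconn : IsPreconnected F' := hpc.isConnected.isPreconnected
  have h0l : 0 < l := h0u.trans hul
  have nocross : ∀ v, 0 < v → v < l →
      (¬ ∃ Q0 ∈ P, ∃ a b, 0 ≤ a ∧ a < v ∧ v < b ∧ b ≤ l ∧ σ '' Icc a b ⊆ Q0) → σ v ∈ F' := by
    intro v h0v hvl hnc
    by_contra hm
    have hlv : σ l ∈ ({σ v}ᶜ : Set F) := by
      intro he
      have := geo_inj hσ ⟨h0l.le, le_refl _⟩ ⟨h0v.le, hvl.le⟩ (mem_singleton_iff.mp he)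
      linarith
    have hCopen : IsOpen (connectedComponentIn ({σ v}ᶜ : Set F) (σ l)) :=
      isOpen_compl_singleton.connectedComponentIn
    have hlC : σ l ∈ connectedComponentIn ({σ v}ᶜ : Set F) (σ l) :=
      mem_connectedComponentIn hlv
    obtain ⟨y', hy'C, hy'F⟩ := mem_closure_iff.mp hT _ hCopen hlC
    have hsubU : F' ⊆ ({σ v}ᶜ : Set F) := fun w hw hwv =>
      hm ((mem_singleton_iff.mp hwv) ▸ hw)
    have hxC : σ 0 ∈ connectedComponentIn ({σ v}ᶜ : Set F) y' :=
      hconn.subset_connectedComponentIn hy'F hsubU hx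
    have hlmem : σ l ∈ connectedComponentIn ({σ v}ᶜ : Set F) (σ 0) := by
      rw [← connectedComponentIn_eq hxC, ← connectedComponentIn_eq hy'C]
      exact hlC
    obtain ⟨n, zz, hz0, hzn, hch⟩ := chain_of_component hF hlmem
    exact hnc (dichotomy hF hTG hσ h0v hvl hz0 hzn hch)
  by_cases hcr : ∃ Q0 ∈ P, ∃ a b, 0 ≤ a ∧ a < u ∧ u < b ∧ b ≤ l ∧ σ '' Icc a b ⊆ Q0
  case neg => exact Or.inl (nocross u h0u hul hcr)
  obtain ⟨Q0, hQ0, v, w, hv0, hvu, huw, hwl, hsub⟩ := hcr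
  have hQ0c : IsClosed Q0 := hTG.pieces_closed Q0 hQ0
  -- maximal extension to the left
  set A := {v' | v' ∈ Icc 0 u ∧ σ '' Icc v' u ⊆ Q0} with hAdef
  have hvA : v ∈ A := ⟨⟨hv0, hvu.le⟩, fun x' hx' => by
    obtain ⟨s, hs, rfl⟩ := hx'
    exact hsub ⟨s, ⟨hs.1, hs.2.trans huw.le⟩, rfl⟩⟩
  have hAne : A.Nonempty := ⟨v, hvA⟩
  have hAbdd : BddBelow A := ⟨0, fun r hr => hr.1.1⟩
  set a := sInf A with hadef
  have ha0 : 0 ≤ a := le_csInf hAne fun r hr => hr.1.1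
  have hau : a < u := lt_of_le_of_lt (csInf_le hAbdd hvA) hvu
  have haq' : ∀ s, a < s → s ≤ u → σ s ∈ Q0 := by
    intro s hs1 hs2
    obtain ⟨v', hv'A, hv's⟩ := exists_lt_of_csInf_lt hAne (show sInf A < s from hs1)
    exact hv'A.2 ⟨s, ⟨hv's.le, hs2⟩, rfl⟩
  have haQ : σ a ∈ Q0 := endpoint_left hσ hQ0c ha0 hau (hul.le) haq'
  have haq : ∀ s, a ≤ s → s ≤ u → σ s ∈ Q0 := by
    intro s hs1 hs2
    rcases eq_or_lt_of_le hs1 with hz | hz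
    · rwa [← hz]
    · exact haq' s hz hs2
  -- maximal extension to the right
  set B := {w' | w' ∈ Icc u l ∧ σ '' Icc u w' ⊆ Q0} with hBdef
  have hwB : w ∈ B := ⟨⟨huw.le, hwl⟩, fun x' hx' => by
    obtain ⟨s, hs, rfl⟩ := hx'
    exact hsub ⟨s, ⟨hvu.le.trans hs.1, hs.2⟩, rfl⟩⟩
  have hBne : B.Nonempty := ⟨w, hwB⟩
  have hBbdd : BddAbove B := ⟨l, fun r hr => hr.1.2⟩
  set b := sSup B with hbdef
  have hbl : b ≤ l := csSup_le hBne fun r hr => hr.1.2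
  have hub : u < b := lt_of_lt_of_le huw (le_csSup hBbdd hwB)
  have hbq' : ∀ s, u ≤ s → s < b → σ s ∈ Q0 := by
    intro s hs1 hs2
    obtain ⟨w', hw'B, hw's⟩ := exists_lt_of_lt_csSup hBne (show s < sSup B from hs2)
    exact hw'B.2 ⟨s, ⟨hs1, hw's.le⟩, rfl⟩
  have hbQ : σ b ∈ Q0 := endpoint_right hσ hQ0c h0u.le hub hbl hbq'
  have hbq : ∀ s, u ≤ s → s ≤ b → σ s ∈ Q0 := by
    intro s hs1 hs2
    rcases eq_or_lt_of_le hs2 with hz | hz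
    · rwa [hz]
    · exact hbq' s hs1 hz
  have huQ : σ u ∈ Q0 := haq u hau.le (le_refl _)
  have habne : σ a ≠ σ b := fun he => by
    have := geo_inj hσ ⟨ha0, hau.le.trans hul.le⟩ ⟨h0u.le.trans hub.le, hbl⟩ he
    linarith
  -- σ a belongs to F'
  have haF : σ a ∈ F' := by
    rcases eq_or_lt_of_le ha0 with hz | hz
    · rw [← hz]; exact hx
    refine nocross a hz (hau.trans hul) ?_
    rintro ⟨Q', hQ', a', b', ha'0, ha'a, hab', hb'l, hsub'⟩
    have hmn : a < min b' u := lt_min hab' hau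
    have hmnl : min b' u ≤ l := (min_le_right _ _).trans hul.le
    have hp1 : σ a ∈ Q' ∩ Q0 :=
      ⟨hsub' ⟨a, ⟨ha'a.le, hab'.le⟩, rfl⟩, haQ⟩
    have hp2 : σ (min b' u) ∈ Q' ∩ Q0 :=
      ⟨hsub' ⟨min b' u, ⟨ha'a.le.trans hmn.le, min_le_left _ _⟩, rfl⟩,
        haq _ hmn.le (min_le_right _ _)⟩
    have hQQ : Q' = Q0 := by
      by_contra hne
      have := hTG.T1 Q' hQ' Q0 hQ0 hne hp1 hp2
      have := geo_inj hσ ⟨ha0, hau.le.trans hul.le⟩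
        ⟨ha0.trans hmn.le, hmnl⟩ this
      linarith
    have ha'A : a' ∈ A := by
      refine ⟨⟨ha'0, ha'a.le.trans hau.le⟩, ?_⟩
      rintro _ ⟨s, hs, rfl⟩
      rcases le_or_gt a s with hcase | hcase
      · exact haq s hcase hs.2
      · exact hQQ ▸ hsub' ⟨s, ⟨hs.1, hcase.le.trans hab'.le⟩, rfl⟩
    have := csInf_le hAbdd ha'A
    linarith
  -- case analysis on whether b reaches l
  rcases eq_or_lt_of_le hbl with hbeq | hblt
  · -- b = l : the piece contains σ l
    refine Or.inr ⟨Q0, hQ0, ?_, huQ, σ a, ⟨haF, haQ⟩, ?_⟩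
    · rw [← hbeq]; exact hbQ
    · rw [← hbeq]; exact habne
  · -- b < l : σ b ∈ F' as well, hence Q0 ⊆ F'
    have hbF : σ b ∈ F' := by
      refine nocross b (h0u.trans hub) hblt ?_
      rintro ⟨Q', hQ', a', b', ha'0, ha'b, hbb', hb'l, hsub'⟩
      have hmn : max a' u < b := max_lt ha'b hub
      have hmx0 : 0 ≤ max a' u := le_max_of_le_right h0u.le
      have hp1 : σ b ∈ Q' ∩ Q0 :=
        ⟨hsub' ⟨b, ⟨ha'b.le, hbb'.le⟩, rfl⟩, hbQ⟩
      have hp2 : σ (max a' u) ∈ Q' ∩ Q0 :=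
        ⟨hsub' ⟨max a' u, ⟨le_max_left _ _, hmn.le.trans hbb'.le⟩, rfl⟩,
          hbq _ (le_max_right _ _) hmn.le⟩
      have hQQ : Q' = Q0 := by
        by_contra hne
        have := hTG.T1 Q' hQ' Q0 hQ0 hne hp1 hp2
        have := geo_inj hσ ⟨h0u.le.trans hub.le, hbl⟩
          ⟨hmx0, hmn.le.trans hbl⟩ this
        linarith
      have hb'B : b' ∈ B := by
        refine ⟨⟨hub.le.trans hbb'.le, hb'l⟩, ?_⟩
        rintro _ ⟨s, hs, rfl⟩
        rcases le_or_gt s b with hcase | hcase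
        · exact hbq s hs.1 hcase
        · exact hQQ ▸ hsub' ⟨s, ⟨ha'b.le.trans hcase.le, hs.2⟩, rfl⟩
      have := le_csSup hBbdd hb'B
      linarith
    have hQF : Q0 ⊆ F' :=
      hQ Q0 hQ0 ⟨σ a, ⟨haQ, haF⟩, σ b, ⟨hbQ, hbF⟩, habne⟩
    exact Or.inl (hQF huQ)

theorem geo_in (hF : GeodesicSpace F) {P : Set (Set F)} (hTG : IsTreeGraded P) {F' : Set F}
    (hpc : IsPathConnected F')
    (hQ : ∀ p ∈ P, (∃ a ∈ p ∩ F', ∃ b ∈ p ∩ F', a ≠ b) → p ⊆ F')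
    {σ : ℝ → F} {l : ℝ} (hσ : IsGeodesicOn σ 0 l) (hl : 0 ≤ l) (hx : σ 0 ∈ F')
    (hy : σ l ∈ F') : σ '' Icc 0 l ⊆ F' := by
  rintro _ ⟨s, hs, rfl⟩
  rcases eq_or_lt_of_le hs.1 with h0 | h0
  · rwa [← h0]
  rcases eq_or_lt_of_le hs.2 with h1 | h1
  · rwa [h1]
  rcases key hF hTG hpc hQ hσ hx (subset_closure hy) h0 h1 with h | ⟨Q, hQP, hlQ, huQ, e, ⟨heF, heQ⟩, hel⟩
  · exact h
  · have : Q ⊆ F' := hQ Q hQP ⟨e, ⟨heQ, heF⟩, σ l, ⟨hlQ, hy⟩, hel⟩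
    exact this huQ

theorem PE (hF : GeodesicSpace F) {P : Set (Set F)} (hTG : IsTreeGraded P) {F' : Set F}
    (hpc : IsPathConnected F')
    (hQ : ∀ p ∈ P, (∃ a ∈ p ∩ F', ∃ b ∈ p ∩ F', a ≠ b) → p ⊆ F')
    {t : F} (htc : t ∈ closure F') (htF : t ∉ F')
    {q : Set F} (hqP : q ∈ P) (htq : t ∈ q) {e : F} (heF : e ∈ F') (heq : e ∈ q) :
    False := by
  classical
  have huniq : ∀ z ∈ q, z ∈ F' → z = e := by
    intro z hzq hzF
    by_contra hne
    have : q ⊆ F' := hQ q hqP ⟨z, ⟨hzq, hzF⟩, e, ⟨heq, heF⟩, hne⟩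
    exact htF (this htq)
  have hte : e ≠ t := fun he => htF (he ▸ heF)
  have hc : 0 < dist e t := dist_pos.mpr hte
  obtain ⟨y, hyF, hyd⟩ := Metric.mem_closure_iff.mp htc (dist e t) hc
  have hye : y ≠ e := by
    intro he'
    rw [he', dist_comm] at hyd
    linarith
  have hye' : 0 < dist y e := dist_pos.mpr hye
  obtain ⟨η, hη0, hη1, hη, hηq⟩ := hTG.pieces_geodesic q hqP e heq t htq
  obtain ⟨ρ, hρ0, hρ1, hρ⟩ := hF y e
  have hρF : ρ '' Icc 0 (dist y e) ⊆ F' := geo_in hF hTG hpc hQ hρ dist_nonneg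
    (by rwa [hρ0]) (by rwa [hρ1])
  obtain ⟨β, hβ0, hβ1, hβ⟩ := hF y t
  have hβe : ∀ r ∈ Icc 0 (dist y t), β r ≠ e := by
    intro r hr he'
    have h2 : dist (β r) (β (dist y t)) = |r - dist y t| :=
      hβ r hr (dist y t) ⟨dist_nonneg, le_refl _⟩
    rw [he', hβ1, abs_sub_comm, abs_of_nonneg (by linarith [hr.2])] at h2
    have h4 : dist y t = dist t y := dist_comm _ _
    linarith [hr.1]
  obtain ⟨ε, hε0, hεl, hεQ⟩ := entry hTG hqP
    (η := η) (τ := fun s => β (dist y t - s)) (β := fun s => ρ (dist y e - s))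
    (lη := dist e t) (lτ := dist y t) (lβ := dist y e) (c := dist e t)
    hη (geo_rev hβ le_rfl le_rfl) (geo_rev hρ le_rfl le_rfl)
    dist_nonneg hye' hc le_rfl hηq
    (by show ρ (dist y e - 0) = η 0; rw [sub_zero, hρ1, hη0])
    (by show β (dist y t - 0) = η (dist e t); rw [sub_zero, hβ1, hη1])
    (by show β (dist y t - dist y t) = ρ (dist y e - dist y e)
        rw [sub_self, sub_self, hβ0, hρ0])
    (by
      intro r hr he'
      have he2 : β (dist y t - r) = η 0 := he'
      have he'' : β (dist y t - r) = e := by rw [he2, hη0]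
      exact hβe (dist y t - r) ⟨by linarith [hr.2], by linarith [hr.1]⟩ he'')
  have hmem : ρ (dist y e - ε) ∈ q := hεQ ⟨ε, ⟨hε0.le, le_refl _⟩, rfl⟩
  have hmemF : ρ (dist y e - ε) ∈ F' :=
    hρF ⟨dist y e - ε, ⟨by linarith, by linarith⟩, rfl⟩
  have h1 : ρ (dist y e - ε) = e := huniq _ hmem hmemF
  have h2 : dist y e - ε = dist y e := geo_inj hρ ⟨by linarith, by linarith⟩
    ⟨dist_nonneg, le_refl _⟩ (by rw [h1, hρ1])
  linarith

end Stmt14Aux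

open Stmt14Aux

/-- if `F'` is a good `Q`-subtree of a tree-graded space `F` and `t` lies in
the closure of `F'`, then `F' ∪ {t}` is a good `Q`-subtree as well. -/
theorem stmt_14 {F : Type*} [MetricSpace F] [CompleteSpace F] (hF : GeodesicSpace F)
    (P : Set (Set F)) (hTG : IsTreeGraded P) (F' : Set F)
    (hgood : IsGoodQSubtree P F') (t : F) (ht : t ∈ closure F') :
    IsGoodQSubtree P (F' ∪ {t}) := by
  classical
  by_cases htF : t ∈ F'
  · rwa [Set.union_eq_self_of_subset_right (Set.singleton_subset_iff.mpr htF)]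
  obtain ⟨⟨hpc, hQ⟩, htype⟩ := hgood
  haveI : LocallyPathConnectedSpace F := locPC hF
  have hPE : ∀ q ∈ P, t ∈ q → ∀ e ∈ F', e ∈ q → False := fun q hq htq e he heq =>
    PE hF hTG hpc hQ ht htF hq htq he heq
  obtain ⟨x₀, hx₀, hjoin⟩ := hpc
  have hpc' : IsPathConnected F' := ⟨x₀, hx₀, fun {y} => @hjoin y⟩
  -- every geodesic from a point of F' to t lies in F' ∪ {t}
  have hL : ∀ x ∈ F', ∀ γ : ℝ → F, γ 0 = x → γ (dist x t) = t →
      IsGeodesicOn γ 0 (dist x t) → γ '' Set.Icc 0 (dist x t) ⊆ F' ∪ {t} := by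
    intro x hx γ hγ0 hγ1 hγ
    rintro _ ⟨s, hs, rfl⟩
    rcases eq_or_lt_of_le hs.2 with h1 | h1
    · right; rw [h1, hγ1]; rfl
    rcases eq_or_lt_of_le hs.1 with h0 | h0
    · left; rw [← h0, hγ0]; exact hx
    left
    rcases key hF hTG hpc' hQ hγ (by rwa [hγ0]) (by rwa [hγ1]) h0 h1 with
      h | ⟨Q, hQP, hlQ, _, e, ⟨heF, heQ⟩, _⟩
    · exact h
    · exact absurd (hPE Q hQP (by rwa [hγ1] at hlQ) e heF heQ) id
  have hjt : JoinedIn (F' ∪ {t}) x₀ t := by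
    obtain ⟨γ, h0, h1, hγ⟩ := hF x₀ t
    have := joinedIn_of_geo dist_nonneg hγ (hL x₀ hx₀ γ h0 h1 hγ)
    rwa [h0, h1] at this
  have hconn : IsPreconnected F' := hpc'.isConnected.isPreconnected
  refine ⟨⟨⟨x₀, Or.inl hx₀, ?_⟩, ?_⟩, ?_⟩
  · -- path connectivity
    intro y hy
    rcases hy with hyF | hyt
    · exact (hjoin hyF).mono Set.subset_union_left
    · rw [Set.mem_singleton_iff] at hyt
      rw [hyt]; exact hjt
  · -- Q-subtree property
    rintro p hp ⟨a, ⟨hap, haF⟩, b, ⟨hbp, hbF⟩, hab⟩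
    rcases haF with haF | hat
    · rcases hbF with hbF | hbt
      · exact (hQ p hp ⟨a, ⟨hap, haF⟩, b, ⟨hbp, hbF⟩, hab⟩).trans Set.subset_union_left
      · rw [Set.mem_singleton_iff] at hbt
        exact absurd (hPE p hp (hbt ▸ hbp) a haF hap) id
    · rw [Set.mem_singleton_iff] at hat
      rcases hbF with hbF | hbt
      · exact absurd (hPE p hp (hat ▸ hap) b hbF hbp) id
      · rw [Set.mem_singleton_iff] at hbt
        exact absurd (hat.trans hbt.symm) hab
  · -- every point is of type I or type II
    intro s hs
    rcases hs with hsF | hst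
    · rcases htype s hsF with hI | ⟨hII1, hII2⟩
      · left
        intro C hC
        obtain ⟨w, hw1, hw2⟩ := hI C hC
        exact ⟨w, Or.inl hw1, hw2⟩
      · right
        constructor
        · refine le_trans (Set.encard_mono ?_) hII1
          rintro C ⟨hC, hnl, w, hwU, hwC⟩
          rcases hwU with hwF | hwt
          · exact ⟨hC, hnl, w, hwF, hwC⟩
          · rw [Set.mem_singleton_iff] at hwt
            obtain ⟨y, hys, rfl⟩ := hC
            have hCopen : IsOpen (connectedComponentIn ({s}ᶜ : Set F) y) :=
              isOpen_compl_singleton.connectedComponentIn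
            obtain ⟨w', hw'C, hw'F⟩ :=
              mem_closure_iff.mp ht _ hCopen (hwt ▸ hwC)
            exact ⟨⟨y, hys, rfl⟩, hnl, w', hw'F, hw'C⟩
        · refine le_trans (Set.encard_mono ?_) hII2
          rintro p ⟨hpP, hsp, z, ⟨hzU, hzp⟩, hzs⟩
          rcases hzU with hzF | hzt
          · exact ⟨hpP, hsp, z, ⟨hzF, hzp⟩, hzs⟩
          · rw [Set.mem_singleton_iff] at hzt
            exact absurd (hPE p hpP (hzt ▸ hzp) s hsF hsp) id
    · rw [Set.mem_singleton_iff] at hst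
      subst hst
      right
      constructor
      · -- at most one limit component meets F' ∪ {s}
        refine le_trans ?_ (one_le_two)
        rw [Set.encard_le_one_iff]
        rintro C C' ⟨hC, -, w, hwU, hwC⟩ ⟨hC', -, w', hw'U, hw'C⟩
        obtain ⟨y, hyt, rfl⟩ := hC
        obtain ⟨y', hy't, rfl⟩ := hC'
        have hCsub := connectedComponentIn_subset ({s}ᶜ : Set F) y
        have hC'sub := connectedComponentIn_subset ({s}ᶜ : Set F) y'
        have hwF : w ∈ F' := by
          rcases hwU with h | h
          · exact h
          · exact absurd (hCsub hwC) (by simpa using h)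
        have hw'F : w' ∈ F' := by
          rcases hw'U with h | h
          · exact h
          · exact absurd (hC'sub hw'C) (by simpa using h)
        have hsubc : F' ⊆ ({s}ᶜ : Set F) := fun v hv hvs =>
          htF ((Set.mem_singleton_iff.mp hvs) ▸ hv)
        have h1 : connectedComponentIn ({s}ᶜ : Set F) y = connectedComponentIn ({s}ᶜ : Set F) w :=
          connectedComponentIn_eq hwC
        have h2 : connectedComponentIn ({s}ᶜ : Set F) y' = connectedComponentIn ({s}ᶜ : Set F) w' :=
          connectedComponentIn_eq hw'C
        have h3 : w' ∈ connectedComponentIn ({s}ᶜ : Set F) w :=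
          hconn.subset_connectedComponentIn hwF hsubc hw'F
        rw [h1, h2, connectedComponentIn_eq h3]
      · -- no piece contains s together with a point of F'
        have : {p | p ∈ P ∧ s ∈ p ∧ ∃ z ∈ (F' ∪ {s}) ∩ p, z ≠ s} = ∅ := by
          rw [Set.eq_empty_iff_forall_notMem]
          rintro p ⟨hpP, htp, z, ⟨hzU, hzp⟩, hzt⟩
          rcases hzU with hzF | hzt'
          · exact hPE p hpP htp z hzF hzp
          · exact hzt (by rwa [Set.mem_singleton_iff] at hzt')
        rw [this, Set.encard_empty]
        norm_num
end
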